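/- arXiv:2402.07612 — 9 statements merged into one kernel-verified Lean document; each statement's English description precedes it below -/
import Mathlib

section
/- Let Ω ⊆ ℂ be open and connected, F holomorphic on Ω with F ≢ 0, and a ∈ Ω with F(a) = 0 and Re F′(a) < 0. Then for every ε > 0 with the closed ball of radius ε around a contained in Ω, there exists δ ∈ (0, ε] such that: (1) every solution γ : [0,∞) → Ω of ẋ = F(x) with |γ(0) − a| < δ satisfies |γ(t) − a| < ε for all t ≥ 0 and γ(t) → a as t → ∞; and (2) for every x₀ with |x₀ − a| < δ there exists such a solution γ with γ(0) = x₀. (In particular a is asymptotically stable.) -/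
open Set Filter Topology

/-- key pointwise inequality -/
lemma key_ineq {F : ℂ → ℂ} {a c : ℂ} {b r : ℝ} (hcre : c.re = -b)
    (hr : ∀ z ∈ Metric.closedBall a r, ‖F z - c * (z - a)‖ ≤ b / 2 * ‖z - a‖) :
    ∀ z ∈ Metric.closedBall a r, (inner ℝ (z - a) (F z) : ℝ) ≤ -(b / 2) * ‖z - a‖ ^ 2 := by
  intro z hz
  have h1 : (inner ℝ (z - a) (c * (z - a)) : ℝ) = c.re * ‖z - a‖ ^ 2 := by
    rw [real_inner_eq_re_inner ℂ]
    simp [RCLike.inner_apply, Complex.mul_re, Complex.normSq_apply,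
      Complex.sq_norm]
    ring_nf
  have h2 : (inner ℝ (z - a) (F z - c * (z - a)) : ℝ) ≤ ‖z - a‖ * ‖F z - c * (z - a)‖ :=
    real_inner_le_norm _ _
  have h3 : (inner ℝ (z - a) (F z) : ℝ)
      = (inner ℝ (z - a) (c * (z - a)) : ℝ) + (inner ℝ (z - a) (F z - c * (z - a)) : ℝ) := by
    rw [← inner_add_right]
    norm_num
  have h4 := hr z hz
  have h5 : (0:ℝ) ≤ ‖z - a‖ := norm_nonneg _
  nlinarith [mul_le_mul_of_nonneg_left h4 h5]

/-- Lyapunov antitone lemma -/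
lemma lyap_antitone {F : ℂ → ℂ} {a : ℂ} {b r : ℝ}
    (hkey : ∀ z ∈ Metric.closedBall a r, (inner ℝ (z - a) (F z) : ℝ) ≤ -(b / 2) * ‖z - a‖ ^ 2)
    {γ : ℝ → ℂ} {t₀ T : ℝ}
    (hcont : ContinuousOn γ (Icc t₀ T))
    (hderiv : ∀ t ∈ Ioo t₀ T, HasDerivAt γ (F (γ t)) t)
    (hmem : ∀ t ∈ Icc t₀ T, γ t ∈ Metric.closedBall a r) :
    AntitoneOn (fun t => ‖γ t - a‖ ^ 2 * Real.exp (b * t)) (Icc t₀ T) := by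
  apply antitoneOn_of_hasDerivWithinAt_nonpos (convex_Icc t₀ T)
    (f' := fun t => (2 * (inner ℝ (γ t - a) (F (γ t)) : ℝ) + b * ‖γ t - a‖ ^ 2) * Real.exp (b * t))
  · exact (hcont.sub continuousOn_const).norm.pow 2 |>.mul
      (Real.continuous_exp.comp (continuous_const.mul continuous_id)).continuousOn
  · intro x hx
    rw [interior_Icc] at hx
    have hg : HasDerivAt (fun t => γ t - a) (F (γ x)) x := (hderiv x hx).sub_const a
    have hV : HasDerivAt (fun t => ‖γ t - a‖ ^ 2)
        (2 * (inner ℝ (γ x - a) (F (γ x)) : ℝ)) x := by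
      have := hg.inner ℝ hg
      simp only [real_inner_self_eq_norm_sq] at this
      rw [real_inner_comm (γ x - a) (F (γ x)), ← two_mul] at this
      exact this
    have hE : HasDerivAt (fun t => Real.exp (b * t)) (Real.exp (b * x) * (b * 1)) x :=
      ((hasDerivAt_id x).const_mul b).exp
    have := hV.mul hE
    apply HasDerivAt.hasDerivWithinAt
    exact this.congr_deriv (by ring)
  · intro x hx
    rw [interior_Icc] at hx
    have h1 := hkey (γ x) (hmem x (Ioo_subset_Icc_self hx))
    have h2 := Real.exp_pos (b * x)
    nlinarith

/-- norm decay corollary -/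
lemma lyap_norm_le {F : ℂ → ℂ} {a : ℂ} {b r : ℝ} (hb : 0 ≤ b)
    (hkey : ∀ z ∈ Metric.closedBall a r, (inner ℝ (z - a) (F z) : ℝ) ≤ -(b / 2) * ‖z - a‖ ^ 2)
    {γ : ℝ → ℂ} {t₀ T : ℝ}
    (hcont : ContinuousOn γ (Icc t₀ T))
    (hderiv : ∀ t ∈ Ioo t₀ T, HasDerivAt γ (F (γ t)) t)
    (hmem : ∀ t ∈ Icc t₀ T, γ t ∈ Metric.closedBall a r) :
    ∀ t ∈ Icc t₀ T, ‖γ t - a‖ ≤ ‖γ t₀ - a‖ := by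
  intro t ht
  have ht₀ : t₀ ∈ Icc t₀ T := ⟨le_refl _, ht.1.trans ht.2⟩
  have hW := lyap_antitone hkey hcont hderiv hmem ht₀ ht ht.1
  simp only at hW
  have hE : Real.exp (b * t₀) ≤ Real.exp (b * t) :=
    Real.exp_le_exp.2 (mul_le_mul_of_nonneg_left ht.1 hb)
  have hpos := Real.exp_pos (b * t₀)
  have h1 : ‖γ t - a‖ ^ 2 ≤ ‖γ t₀ - a‖ ^ 2 := by nlinarith [sq_nonneg ‖γ t - a‖]
  have h2 : (0:ℝ) ≤ ‖γ t - a‖ := norm_nonneg _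
  have h3 : (0:ℝ) ≤ ‖γ t₀ - a‖ := norm_nonneg _
  nlinarith

/-- square-exp bound extraction -/
lemma sq_exp_le {u D b t : ℝ} (hu : 0 ≤ u) (hD : 0 ≤ D)
    (h : u ^ 2 * Real.exp (b * t) ≤ D ^ 2) : u ≤ D * Real.exp (-(b / 2) * t) := by
  have hv : 0 ≤ D * Real.exp (-(b / 2) * t) := by positivity
  have h2 : (D * Real.exp (-(b / 2) * t)) ^ 2 = D ^ 2 * Real.exp (-(b * t)) := by
    rw [mul_pow, sq (Real.exp _), ← Real.exp_add]
    ring_nf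
  have h3 : u ^ 2 ≤ (D * Real.exp (-(b / 2) * t)) ^ 2 := by
    rw [h2]
    have := mul_le_mul_of_nonneg_right h (Real.exp_nonneg (-(b * t)))
    rwa [mul_assoc, ← Real.exp_add, add_neg_cancel, Real.exp_zero, mul_one] at this
  calc u = Real.sqrt (u ^ 2) := (Real.sqrt_sq hu).symm
    _ ≤ Real.sqrt ((D * Real.exp (-(b / 2) * t)) ^ 2) := Real.sqrt_le_sqrt h3
    _ = D * Real.exp (-(b / 2) * t) := Real.sqrt_sq hv

/-- A solution of `ẋ = F(x)` on the set `s ⊆ ℝ`, staying in `Ω`. -/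
def IsSolOn (F : ℂ → ℂ) (Ω : Set ℂ) (s : Set ℝ) (γ : ℝ → ℂ) : Prop :=
  ∀ t ∈ s, γ t ∈ Ω ∧ HasDerivWithinAt γ (F (γ t)) s t

/-- If `F` is holomorphic on the open connected `Ω`, `F ≢ 0`, `F a = 0` and
`Re F'(a) < 0`, then for every `ε > 0` with `closedBall a ε ⊆ Ω` there is `δ ∈ (0, ε]` such
that every solution `γ : [0,∞) → Ω` starting `δ`-close to `a` stays `ε`-close to `a` and
tends to `a`, and through every point `δ`-close to `a` such a solution exists. -/
theorem stmt_1 (Ω : Set ℂ) (hΩ : IsOpen Ω) (hconn : IsConnected Ω)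
    (F : ℂ → ℂ) (hF : DifferentiableOn ℂ F Ω) (hF0 : ∃ z ∈ Ω, F z ≠ 0)
    (a : ℂ) (ha : a ∈ Ω) (hFa : F a = 0) (hre : (deriv F a).re < 0) :
    ∀ ε > 0, Metric.closedBall a ε ⊆ Ω →
      ∃ δ, 0 < δ ∧ δ ≤ ε ∧
        (∀ γ : ℝ → ℂ, IsSolOn F Ω (Ici 0) γ → dist (γ 0) a < δ →
          (∀ t ∈ Ici (0 : ℝ), dist (γ t) a < ε) ∧ Tendsto γ atTop (nhds a)) ∧
        (∀ x₀ : ℂ, dist x₀ a < δ →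
          ∃ γ : ℝ → ℂ, IsSolOn F Ω (Ici 0) γ ∧ γ 0 = x₀) := by
  intro ε hε hball
  -- constants
  set c := deriv F a with hc
  set b := -c.re with hbdef
  have hb0 : 0 < b := by simp only [hbdef]; linarith
  have hda : DifferentiableAt ℂ F a := hF.differentiableAt (hΩ.mem_nhds ha)
  have hd : HasDerivAt F c a := hda.hasDerivAt
  -- little-o estimate
  have hlo : ∀ᶠ z in 𝓝 a, ‖F z - c * (z - a)‖ ≤ b / 2 * ‖z - a‖ := by
    have h1 := (hasDerivAt_iff_isLittleO.mp hd).def (by positivity : (0:ℝ) < b / 2)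
    filter_upwards [h1] with z hz
    simpa [hFa, smul_eq_mul, mul_comm] using hz
  -- Lipschitz estimate
  have hcd : ContDiffAt ℝ 1 F a := by
    have h1 : AnalyticOnNhd ℂ F Ω := hF.analyticOnNhd hΩ
    have h2 : ContDiffOn ℂ 1 F Ω := h1.contDiffOn (n := 1) hΩ.uniqueDiffOn
    exact (h2.restrict_scalars ℝ).contDiffAt (hΩ.mem_nhds ha)
  obtain ⟨K, s, hs, hK⟩ := hcd.exists_lipschitzOnWith
  -- choose r
  obtain ⟨r', hr', hsub⟩ := Metric.mem_nhds_iff.mp (inter_mem hlo hs)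
  set r := min ε (r' / 2) with hrdef
  have hr0 : 0 < r := lt_min hε (by linarith)
  have hrε : r ≤ ε := min_le_left _ _
  have hrball : Metric.closedBall a r ⊆ Metric.ball a r' := fun z hz => by
    have : dist z a ≤ r := hz
    have : r ≤ r' / 2 := min_le_right _ _
    exact Metric.mem_ball.2 (by simp only [Metric.mem_closedBall] at hz; linarith)
  have hrlo : ∀ z ∈ Metric.closedBall a r, ‖F z - c * (z - a)‖ ≤ b / 2 * ‖z - a‖ :=
    fun z hz => ((hsub (hrball hz)).1 : _)
  have hrK : LipschitzOnWith K F (Metric.closedBall a r) :=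
    hK.mono fun z hz => (hsub (hrball hz)).2
  have hrΩ : Metric.closedBall a r ⊆ Ω :=
    (Metric.closedBall_subset_closedBall hrε).trans hball
  have hkey := key_ineq (by simp [hbdef]) hrlo
  set M := (‖c‖ + b / 2) * r with hMdef
  have hM0 : 0 < M := by positivity
  have hFbound : ∀ z ∈ Metric.closedBall a r, ‖F z‖ ≤ M := by
    intro z hz
    have h1 : ‖F z‖ ≤ ‖c * (z - a)‖ + ‖F z - c * (z - a)‖ := by
      calc ‖F z‖ = ‖c * (z - a) + (F z - c * (z - a))‖ := by ring_nf
        _ ≤ _ := norm_add_le _ _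
    have h2 : ‖c * (z - a)‖ = ‖c‖ * ‖z - a‖ := norm_mul _ _
    have h3 := hrlo z hz
    have h4 : ‖z - a‖ ≤ r := by
      rw [← dist_eq_norm]; exact hz
    have h5 : (0:ℝ) ≤ ‖z - a‖ := norm_nonneg _
    have h6 : (0:ℝ) ≤ ‖c‖ := norm_nonneg _
    rw [hMdef]
    nlinarith
  set δ := r / 2 with hδdef
  have hδ0 : 0 < δ := by positivity
  have hδε : δ ≤ ε := by rw [hδdef]; linarith
  refine ⟨δ, hδ0, hδε, ?_, ?_⟩
  · -- Part (1): stability and convergence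
    intro γ hγ hγ0
    have hcontγ : ContinuousOn γ (Ici 0) := fun t ht => (hγ t ht).2.continuousWithinAt
    -- bootstrap: γ stays in the δ-ball
    have hstay : ∀ t ∈ Ici (0:ℝ), dist (γ t) a < δ := by
      by_contra hcon
      push_neg at hcon
      obtain ⟨t1, ht1, ht1ge⟩ := hcon
      set B := {t : ℝ | t ∈ Ici (0:ℝ) ∧ δ ≤ dist (γ t) a} with hBdef
      have hBc : IsClosed B := by
        have : B = Ici (0:ℝ) ∩ (fun t => dist (γ t) a) ⁻¹' Ici δ := by
          ext t; simp [hBdef, Set.mem_setOf_eq, and_comm]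
        rw [this]
        exact (continuous_dist.comp_continuousOn (hcontγ.prodMk continuousOn_const)).preimage_isClosed_of_isClosed
          isClosed_Ici isClosed_Ici
      have hBne : B.Nonempty := ⟨t1, ht1, ht1ge⟩
      have hBbdd : BddBelow B := ⟨0, fun x hx => hx.1⟩
      set τ := sInf B with hτdef
      have hτB : τ ∈ B := hBc.csInf_mem hBne hBbdd
      have hτ0 : 0 < τ := by
        rcases lt_or_eq_of_le (show (0:ℝ) ≤ τ from hτB.1) with h | h
        · exact h
        · exfalso; rw [← h] at hτB; exact absurd hτB.2 (not_le.2 hγ0)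
      have hlt : ∀ t ∈ Ico (0:ℝ) τ, dist (γ t) a < δ := by
        intro t ht
        by_contra hge
        exact absurd (csInf_le hBbdd ⟨ht.1, not_lt.1 hge⟩) (not_le.2 ht.2)
      have hτle : dist (γ τ) a ≤ δ := by
        have hcw : ContinuousWithinAt (fun t => dist (γ t) a) (Ico 0 τ) τ :=
          ((continuous_dist.comp_continuousOn (hcontγ.prodMk continuousOn_const)) τ (le_of_lt hτ0)).mono Ico_subset_Ici_self
        have hne : (𝓝[Ico (0:ℝ) τ] τ).NeBot := by
          rw [← mem_closure_iff_nhdsWithin_neBot, closure_Ico (ne_of_lt hτ0)]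
          exact ⟨le_of_lt hτ0, le_refl _⟩
        exact le_of_tendsto hcw (eventually_nhdsWithin_of_forall
          fun t ht => le_of_lt (hlt t ht))
      have hmem : ∀ t ∈ Icc (0:ℝ) τ, γ t ∈ Metric.closedBall a r := by
        intro t ht
        rcases lt_or_eq_of_le ht.2 with h | h
        · have := hlt t ⟨ht.1, h⟩
          exact Metric.mem_closedBall.2 (by rw [hδdef] at this; linarith)
        · rw [h]
          exact Metric.mem_closedBall.2 (by rw [hδdef] at hτle; linarith)
      have hder : ∀ t ∈ Ioo (0:ℝ) τ, HasDerivAt γ (F (γ t)) t := fun t ht =>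
        ((hγ t (le_of_lt ht.1)).2).hasDerivAt (Ici_mem_nhds ht.1)
      have hle := lyap_norm_le (le_of_lt hb0) hkey (hcontγ.mono Icc_subset_Ici_self)
        hder hmem τ ⟨le_of_lt hτ0, le_refl _⟩
      rw [← dist_eq_norm, ← dist_eq_norm] at hle
      exact absurd hτB.2 (not_le.2 (lt_of_le_of_lt hle hγ0))
    have hmem' : ∀ T ∈ Ici (0:ℝ), ∀ t ∈ Icc (0:ℝ) T, γ t ∈ Metric.closedBall a r := by
      intro T _ t ht
      have := hstay t ht.1
      exact Metric.mem_closedBall.2 (by rw [hδdef] at this; linarith)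
    constructor
    · intro t ht
      exact lt_of_lt_of_le (hstay t ht) (by linarith)
    · -- convergence
      have hbound : ∀ t ∈ Ici (0:ℝ),
          dist (γ t) a ≤ dist (γ 0) a * Real.exp (-(b / 2) * t) := by
        intro t ht
        have hder : ∀ u ∈ Ioo (0:ℝ) t, HasDerivAt γ (F (γ u)) u := fun u hu =>
          ((hγ u (le_of_lt hu.1)).2).hasDerivAt (Ici_mem_nhds hu.1)
        have hW := lyap_antitone hkey (hcontγ.mono Icc_subset_Ici_self) hder
          (hmem' t ht) ⟨le_refl _, ht⟩ ⟨ht, le_refl _⟩ ht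
        simp only [mul_zero, Real.exp_zero, mul_one] at hW
        rw [dist_eq_norm, dist_eq_norm]
        exact sq_exp_le (norm_nonneg _) (norm_nonneg _) hW
      rw [tendsto_iff_dist_tendsto_zero]
      have hexp : Tendsto (fun t : ℝ => dist (γ 0) a * Real.exp (-(b / 2) * t))
          atTop (𝓝 0) := by
        have h1 : Tendsto (fun t : ℝ => -(b / 2) * t) atTop atBot :=
          Tendsto.const_mul_atTop_of_neg (by linarith) tendsto_id
        have h2 := (Real.tendsto_exp_atBot.comp h1).const_mul (dist (γ 0) a)
        simpa using h2
      apply squeeze_zero' (Eventually.of_forall fun t => dist_nonneg)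
        ?_ hexp
      filter_upwards [eventually_ge_atTop (0:ℝ)] with t ht
      exact hbound t ht
  · -- Part (2): existence
    intro x₀ hx₀
    set σ := r / (4 * M) with hσdef
    have hσ0 : 0 < σ := by positivity
    -- one-step local existence
    have hstep : ∀ x : ℂ, ∀ t₀ : ℝ, ∃ f : ℝ → ℂ, f t₀ = x ∧
        (x ∈ Metric.closedBall a δ → ∀ t ∈ Icc t₀ (t₀ + σ),
          HasDerivWithinAt f (F (f t)) (Icc t₀ (t₀ + σ)) t ∧
            f t ∈ Metric.closedBall a δ) := by
      intro x t₀
      by_cases hx : x ∈ Metric.closedBall a δ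
      swap
      · exact ⟨fun _ => x, rfl, fun h => absurd h hx⟩
      have hxa : dist x a ≤ δ := hx
      have hplsub : Metric.closedBall x δ ⊆ Metric.closedBall a r := by
        intro z hz
        have hz' : dist z x ≤ δ := hz
        refine Metric.mem_closedBall.2 ?_
        calc dist z a ≤ dist z x + dist x a := dist_triangle _ _ _
          _ ≤ δ + δ := add_le_add hz' hxa
          _ = r := by rw [hδdef]; ring
      have hpl : IsPicardLindelof (fun _ z => F z) (tmin := t₀) (tmax := t₀ + σ)
          ⟨t₀, le_refl _, by linarith⟩ x (Real.toNNReal δ) 0 (Real.toNNReal M) K :=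
        { lipschitzOnWith := fun _ _ => hrK.mono (by rw [Real.coe_toNNReal _ hδ0.le]; exact hplsub)
          continuousOn := fun _ _ => continuousOn_const
          norm_le := fun _ _ z hz => by
            rw [Real.coe_toNNReal _ hδ0.le] at hz
            rw [Real.coe_toNNReal _ hM0.le]; exact hFbound z (hplsub hz)
          mul_max_le := by
            simp only [Real.coe_toNNReal _ hM0.le, Real.coe_toNNReal _ hδ0.le, NNReal.coe_zero,
              sub_zero]
            show M * max (t₀ + σ - t₀) (t₀ - t₀) ≤ δ
            have h1 : max (t₀ + σ - t₀) (t₀ - t₀) = σ := by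
              rw [add_sub_cancel_left, sub_self, max_eq_left (le_of_lt hσ0)]
            have h2 : M * σ = r / 4 := by
              rw [hσdef]; field_simp
            rw [h1, h2, hδdef]; linarith }
      obtain ⟨f, hf0, hfd⟩ : ∃ f : ℝ → ℂ, f t₀ = x ∧ ∀ t ∈ Icc t₀ (t₀ + σ),
          HasDerivWithinAt f (F (f t)) (Icc t₀ (t₀ + σ)) t :=
        hpl.exists_eq_forall_mem_Icc_hasDerivWithinAt₀
      have hfc : ContinuousOn f (Icc t₀ (t₀ + σ)) := fun t ht =>
        (hfd t ht).continuousWithinAt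
      -- bootstrap: f stays in the r-ball
      have hstayf : ∀ t ∈ Icc t₀ (t₀ + σ), dist (f t) a < r := by
        by_contra hcon
        push_neg at hcon
        obtain ⟨t1, ht1, hge⟩ := hcon
        set B := {t : ℝ | t ∈ Icc t₀ (t₀ + σ) ∧ r ≤ dist (f t) a} with hBdef
        have hBc : IsClosed B := by
          have hBeq : B = Icc t₀ (t₀ + σ) ∩ (fun t => dist (f t) a) ⁻¹' Ici r := by
            ext u; simp [hBdef, Set.mem_setOf_eq, and_comm]
          rw [hBeq]
          exact (continuous_dist.comp_continuousOn
            (hfc.prodMk continuousOn_const)).preimage_isClosed_of_isClosed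
            isClosed_Icc isClosed_Ici
        have hBne : B.Nonempty := ⟨t1, ht1, hge⟩
        have hBbdd : BddBelow B := ⟨t₀, fun z hz => hz.1.1⟩
        set τ := sInf B with hτdef
        have hτB : τ ∈ B := hBc.csInf_mem hBne hBbdd
        have hτ0 : t₀ < τ := by
          rcases lt_or_eq_of_le (hτB.1.1 : t₀ ≤ τ) with hlt | heq
          · exact hlt
          · exfalso
            have := hτB.2
            rw [← heq, hf0] at this
            rw [hδdef] at hxa
            linarith
        have hltf : ∀ t ∈ Ico t₀ τ, dist (f t) a < r := by
          intro t ht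
          by_contra hge2
          exact absurd (csInf_le hBbdd ⟨⟨ht.1, ht.2.le.trans hτB.1.2⟩, not_lt.1 hge2⟩)
            (not_le.2 ht.2)
        have hd' : ∀ t ∈ Icc t₀ τ, HasDerivWithinAt f (F (f t)) (Icc t₀ τ) t :=
          fun t ht => (hfd t ⟨ht.1, ht.2.trans hτB.1.2⟩).mono
            (Icc_subset_Icc_right hτB.1.2)
        have hbnd : ∀ t ∈ Ico t₀ τ, ‖F (f t)‖ ≤ M := fun t ht =>
          hFbound _ (Metric.mem_closedBall.2 (le_of_lt (hltf t ht)))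
        have hmvt := norm_image_sub_le_of_norm_deriv_le_segment' hd' hbnd τ
          ⟨le_of_lt hτ0, le_refl _⟩
        have hτσ : τ - t₀ ≤ σ := by
          have := hτB.1.2; linarith
        have h2 : M * σ = r / 4 := by rw [hσdef]; field_simp
        have h3 : ‖f τ - f t₀‖ ≤ r / 4 := by
          calc ‖f τ - f t₀‖ ≤ M * (τ - t₀) := hmvt
            _ ≤ M * σ := by nlinarith
            _ = r / 4 := h2
        have h4 : dist (f τ) a ≤ r / 4 + δ := by
          calc dist (f τ) a ≤ dist (f τ) (f t₀) + dist (f t₀) a := dist_triangle _ _ _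
            _ ≤ r / 4 + δ := by
                rw [hf0] at h3
                rw [dist_eq_norm, hf0]
                exact add_le_add h3 hxa
        have := hτB.2
        rw [hδdef] at h4
        linarith
      have hmemf : ∀ t ∈ Icc t₀ (t₀ + σ), f t ∈ Metric.closedBall a r := fun t ht =>
        Metric.mem_closedBall.2 (le_of_lt (hstayf t ht))
      have hderf : ∀ t ∈ Ioo t₀ (t₀ + σ), HasDerivAt f (F (f t)) t := fun t ht =>
        (hfd t (Ioo_subset_Icc_self ht)).hasDerivAt (Icc_mem_nhds ht.1 ht.2)
      have hdec := lyap_norm_le (le_of_lt hb0) hkey hfc hderf hmemf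
      refine ⟨f, hf0, fun _ t ht => ⟨hfd t ht, ?_⟩⟩
      have hd2 := hdec t ht
      rw [← dist_eq_norm, ← dist_eq_norm, hf0] at hd2
      exact Metric.mem_closedBall.2 (hd2.trans hxa)
    choose sol hsol0 hsolP using hstep
    have hx₀m : x₀ ∈ Metric.closedBall a δ := Metric.mem_closedBall.2 (le_of_lt hx₀)
    set e : ℕ → ℝ := fun n => n * σ with hedef
    have he0 : e 0 = 0 := by simp [hedef]
    have hesucc : ∀ n : ℕ, e (n + 1) = e n + σ := by
      intro n; simp only [hedef]; push_cast; ring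
    have hemono : ∀ n : ℕ, e n < e (n + 1) := fun n => by rw [hesucc]; linarith
    have he_nonneg : ∀ n : ℕ, 0 ≤ e n := fun n => by
      simp only [hedef]; positivity
    set pieces : ℕ → ℝ → ℂ :=
      fun n => Nat.rec (sol x₀ 0) (fun k p => sol (p (e (k + 1))) (e (k + 1))) n
      with hpdef
    have hp0 : pieces 0 = sol x₀ 0 := rfl
    have hpsucc : ∀ n : ℕ, pieces (n + 1) = sol (pieces n (e (n + 1))) (e (n + 1)) :=
      fun n => rfl
    have hPP : ∀ n : ℕ, pieces n (e n) ∈ Metric.closedBall a δ ∧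
        (∀ t ∈ Icc (e n) (e (n + 1)),
          HasDerivWithinAt (pieces n) (F (pieces n t)) (Icc (e n) (e (n + 1))) t ∧
            pieces n t ∈ Metric.closedBall a δ) := by
      intro n
      induction n with
      | zero =>
        constructor
        · rw [hp0, he0, hsol0]; exact hx₀m
        · intro t ht
          rw [hesucc 0, he0] at ht ⊢
          rw [hp0]
          exact hsolP x₀ 0 hx₀m t ht
      | succ k ih =>
        have hk : pieces k (e (k + 1)) ∈ Metric.closedBall a δ :=
          (ih.2 (e (k + 1)) ⟨(hemono k).le, le_refl _⟩).2
        constructor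
        · rw [hpsucc, hsol0]; exact hk
        · intro t ht
          rw [hesucc (k + 1)] at ht
          rw [hpsucc, hesucc (k + 1)]
          exact hsolP (pieces k (e (k + 1))) (e (k + 1)) hk t ht
    set γ : ℝ → ℂ := fun t => pieces ⌊t / σ⌋₊ t with hγdef
    have hfloor : ∀ (n : ℕ) (t : ℝ), e n ≤ t → t < e (n + 1) → ⌊t / σ⌋₊ = n := by
      intro n t h1 h2
      have ht0 : 0 ≤ t := le_trans (he_nonneg n) h1
      rw [Nat.floor_eq_iff (by positivity)]
      constructor
      · rw [le_div_iff₀ hσ0]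
        simpa [hedef] using h1
      · rw [div_lt_iff₀ hσ0]
        simp only [hedef] at h2
        push_cast at h2 ⊢
        linarith
    have hfloorIdx : ∀ t : ℝ, 0 ≤ t → e ⌊t / σ⌋₊ ≤ t ∧ t < e (⌊t / σ⌋₊ + 1) := by
      intro t ht
      have hq : 0 ≤ t / σ := by positivity
      constructor
      · have := Nat.floor_le hq
        simp only [hedef]
        rw [← le_div_iff₀ hσ0]
        exact this
      · have := Nat.lt_floor_add_one (t / σ)
        simp only [hedef]
        push_cast
        rw [← div_lt_iff₀ hσ0]
        push_cast at this
        linarith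
    have hagree : ∀ n : ℕ, ∀ t ∈ Icc (e n) (e (n + 1)), γ t = pieces n t := by
      intro n t ht
      rcases lt_or_eq_of_le ht.2 with hlt | heq
      · show pieces ⌊t / σ⌋₊ t = pieces n t
        rw [hfloor n t ht.1 hlt]
      · show pieces ⌊t / σ⌋₊ t = pieces n t
        rw [heq, hfloor (n + 1) (e (n + 1)) (le_refl _) (hemono (n + 1)),
          hpsucc n, hsol0]
    have hγ0 : γ 0 = x₀ := by
      show pieces ⌊(0:ℝ) / σ⌋₊ 0 = x₀
      rw [zero_div, Nat.floor_zero, hp0, ← he0, hsol0]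
    refine ⟨γ, ?_, hγ0⟩
    intro t ht
    obtain ⟨hnt, htn⟩ := hfloorIdx t ht
    set n := ⌊t / σ⌋₊ with hndef
    have htIcc : t ∈ Icc (e n) (e (n + 1)) := ⟨hnt, htn.le⟩
    have hmemt : γ t ∈ Metric.closedBall a δ := by
      rw [hagree n t htIcc]
      exact ((hPP n).2 t htIcc).2
    refine ⟨hball (Metric.closedBall_subset_closedBall hδε hmemt), ?_⟩
    rcases eq_or_lt_of_le hnt with heq | hlt
    · -- t is a grid point
      match n, heq, htn with
      | 0, heq, htn =>
        have htIcc0 : t ∈ Icc (e 0) (e 1) := ⟨heq.le, htn.le⟩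
        have h2 := ((hPP 0).2 t htIcc0).1
        have h3 : HasDerivWithinAt γ (F (γ t)) (Icc (e 0) (e 1)) t := by
          have h4 := h2.congr (fun y hy => hagree 0 y hy) (hagree 0 t htIcc0)
          rwa [← hagree 0 t htIcc0] at h4
        have hsub2 : Ici (0:ℝ) ∩ Iio (e 1) ⊆ Icc (e 0) (e 1) := by
          intro x hx
          exact ⟨by rw [he0]; exact hx.1, hx.2.le⟩
        have hnb : Iio (e 1) ∈ 𝓝 t := Iio_mem_nhds htn
        exact (hasDerivWithinAt_inter hnb).mp (h3.mono hsub2)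
      | (m + 1), heq, htn =>
        have hmL : t ∈ Icc (e m) (e (m + 1)) := ⟨by rw [← heq]; exact (hemono m).le,
          by rw [← heq]⟩
        have hmR : t ∈ Icc (e (m + 1)) (e (m + 2)) := ⟨by rw [← heq],
          by rw [← heq]; exact (hemono (m + 1)).le⟩
        have hL : HasDerivWithinAt γ (F (γ t)) (Icc (e m) (e (m + 1))) t := by
          have h2 := ((hPP m).2 t hmL).1
          have h4 := h2.congr (fun y hy => hagree m y hy) (hagree m t hmL)
          rwa [← hagree m t hmL] at h4
        have hR : HasDerivWithinAt γ (F (γ t)) (Icc (e (m + 1)) (e (m + 2))) t := by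
          have h2 := ((hPP (m + 1)).2 t hmR).1
          have h4 := h2.congr (fun y hy => hagree (m + 1) y hy) (hagree (m + 1) t hmR)
          rwa [← hagree (m + 1) t hmR] at h4
        have hU := hL.union hR
        have hsub2 : Ici (0:ℝ) ∩ Ioo (e m) (e (m + 2)) ⊆
            Icc (e m) (e (m + 1)) ∪ Icc (e (m + 1)) (e (m + 2)) := by
          intro x hx
          rcases le_total x (e (m + 1)) with hc | hc
          · exact Or.inl ⟨hx.2.1.le, hc⟩
          · exact Or.inr ⟨hc, hx.2.2.le⟩
        have hnb : Ioo (e m) (e (m + 2)) ∈ 𝓝 t :=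
          Ioo_mem_nhds (by rw [← heq]; exact hemono m)
            (by rw [← heq]; exact hemono (m + 1))
        exact (hasDerivWithinAt_inter hnb).mp (hU.mono hsub2)
    · -- interior of a grid interval
      have hIcc : Icc (e n) (e (n + 1)) ∈ 𝓝 t := Icc_mem_nhds hlt htn
      have hev : γ =ᶠ[𝓝 t] pieces n :=
        eventually_of_mem hIcc (fun y hy => hagree n y hy)
      have h2 := (((hPP n).2 t htIcc).1.hasDerivAt hIcc).congr_of_eventuallyEq hev
      rw [← hagree n t htIcc] at h2
      exact h2.hasDerivWithinAt
end

section
/- Let Ω ⊆ ℂ be open and connected, F holomorphic on Ω with F ≢ 0, and a ∈ Ω an equilibrium with F′(a) real and negative (i.e. Re F′(a) < 0 and Im F′(a) = 0). Then there exists δ > 0 such that every solution γ : [0,∞) → Ω of ẋ = F(x) with 0 < |γ(0) − a| < δ satisfies γ(t) → a as t → ∞, γ(t) ≠ a for all t, and there exists θ₀ ∈ [0, 2π) with (γ(t) − a)/|γ(t) − a| → e^{iθ₀} as t → ∞; that is, a is a stable node and each nearby orbit tends to a in a definite direction. -/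
open Set Filter Topology
open MeasureTheory intervalIntegral

lemma aux_re (g : ℝ → ℂ) {u v : ℝ} (h : IntervalIntegrable g volume u v) :
    (∫ s in u..v, g s).re = ∫ s in u..v, (g s).re := by
  rw [intervalIntegral, intervalIntegral, Complex.sub_re]
  simp only [← RCLike.re_to_complex]
  rw [← integral_re h.1, ← integral_re h.2]

lemma aux_im (g : ℝ → ℂ) {u v : ℝ} (h : IntervalIntegrable g volume u v) :
    (∫ s in u..v, g s).im = ∫ s in u..v, (g s).im := by
  rw [intervalIntegral, intervalIntegral, Complex.sub_im]
  simp only [← RCLike.im_to_complex]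
  rw [← integral_im h.1, ← integral_im h.2]


lemma aux_rep (a : ℂ) (γ g : ℝ → ℂ) {b : ℝ} (hb : 0 ≤ b)
    (hγc : ContinuousOn γ (Icc 0 b)) (hg : ContinuousOn g (Icc 0 b))
    (hγ : ∀ t ∈ Icc 0 b, HasDerivWithinAt γ ((γ t - a) * g t) (Ici t) t) :
    ∀ t ∈ Icc 0 b, γ t - a = (γ 0 - a) * Complex.exp (∫ s in (0:ℝ)..t, g s) := by
  set c : ℝ → ℝ := fun s => max 0 (min s b) with hc
  have hcc : Continuous c := continuous_const.max (continuous_id.min continuous_const)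
  have hcmap : ∀ s, c s ∈ Icc 0 b := fun s =>
    ⟨le_max_left _ _, max_le hb (min_le_right _ _)⟩
  have hceq : ∀ s ∈ Icc 0 b, c s = s := fun s hs => by
    simp [hc, min_eq_left hs.2, max_eq_right hs.1]
  set g' : ℝ → ℂ := fun s => g (c s) with hg'
  have hg'c : Continuous g' := hg.comp_continuous hcc hcmap
  have hg'eq : ∀ s ∈ Icc 0 b, g' s = g s := fun s hs => by
    show g (c s) = g s; rw [hceq s hs]
  set G : ℝ → ℂ := fun t => ∫ s in (0:ℝ)..t, g' s with hG
  have hGd : ∀ t, HasDerivAt G (g' t) t := fun t =>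
    (hg'c.integral_hasStrictDerivAt 0 t).hasDerivAt
  have hGc : Continuous G := by
    rw [continuous_iff_continuousAt]; exact fun t => (hGd t).continuousAt
  set φ : ℝ → ℂ := fun t => (γ t - a) * Complex.exp (-G t) with hφ
  have hφc : ContinuousOn φ (Icc 0 b) :=
    (hγc.sub continuousOn_const).mul (hGc.neg.cexp.continuousOn)
  have hφd : ∀ t ∈ Ico 0 b, HasDerivWithinAt φ 0 (Ici t) t := by
    intro t ht
    have h1 : HasDerivWithinAt (fun u => γ u - a) ((γ t - a) * g t) (Ici t) t :=
      (hγ t ⟨ht.1, ht.2.le⟩).sub_const a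
    have h2 : HasDerivAt (fun u => Complex.exp (-G u)) (Complex.exp (-G t) * -g' t) t :=
      (hGd t).neg.cexp
    have h3 := h1.mul h2.hasDerivWithinAt
    have : (γ t - a) * g t * Complex.exp (-G t) + (γ t - a) * (Complex.exp (-G t) * -g' t)
        = 0 := by
      rw [hg'eq t ⟨ht.1, ht.2.le⟩]; ring
    rwa [this] at h3
  have hconst := constant_of_has_deriv_right_zero hφc hφd
  intro t ht
  have h0 : φ t = φ 0 := hconst t ht
  have hG0 : G 0 = 0 := intervalIntegral.integral_same
  have hGt : G t = ∫ s in (0:ℝ)..t, g s := by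
    apply intervalIntegral.integral_congr
    intro s hs
    rw [uIcc_of_le ht.1] at hs
    exact hg'eq s ⟨hs.1, hs.2.trans ht.2⟩
  have : γ t - a = φ t * Complex.exp (G t) := by
    rw [hφ]; simp only []
    rw [mul_assoc, ← Complex.exp_add]; simp
  rw [this, h0, hφ]
  simp only [hG0, neg_zero, Complex.exp_zero, mul_one, hGt]

/-- If `F'(a)` is real and negative at an equilibrium `a` of a holomorphic flow,
then `a` is a stable node: nearby solutions tend to `a` in a definite direction `θ₀`. -/
theorem stmt_2 (Ω : Set ℂ) (hΩ : IsOpen Ω) (hconn : IsConnected Ω)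
    (F : ℂ → ℂ) (hF : DifferentiableOn ℂ F Ω) (hF0 : ∃ z ∈ Ω, F z ≠ 0)
    (a : ℂ) (ha : a ∈ Ω) (hFa : F a = 0)
    (hre : (deriv F a).re < 0) (him : (deriv F a).im = 0) :
    ∃ δ > 0, ∀ γ : ℝ → ℂ, IsSolOn F Ω (Ici 0) γ →
      0 < dist (γ 0) a → dist (γ 0) a < δ →
        Tendsto γ atTop (nhds a) ∧ (∀ t ∈ Ici (0 : ℝ), γ t ≠ a) ∧
        ∃ θ₀ ∈ Ico 0 (2 * Real.pi),
          Tendsto (fun t => (γ t - a) / ((‖γ t - a‖ : ℝ) : ℂ)) atTop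
            (nhds (Complex.exp ((θ₀ : ℂ) * Complex.I))) := by
  classical
  set lam := deriv F a with hlam
  set μ := lam.re with hμ
  have hμneg : μ < 0 := hre
  have hlam_eq : lam = (μ : ℂ) := Complex.ext rfl (by simpa using him)
  set h := dslope (dslope F a) a with hh
  have hmem : Ω ∈ 𝓝 a := hΩ.mem_nhds ha
  have hd1 : DifferentiableOn ℂ (dslope F a) Ω :=
    (Complex.differentiableOn_dslope hmem).2 hF
  have hd2 : DifferentiableOn ℂ h Ω :=
    (Complex.differentiableOn_dslope hmem).2 hd1
  have hhc : ContinuousOn h Ω := hd2.continuousOn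
  set M := ‖h a‖ + 1 with hM
  have hM0 : 0 < M := by positivity
  obtain ⟨r1, hr1, hr1sub⟩ := Metric.mem_nhds_iff.1 hmem
  have hev : ∀ᶠ z in 𝓝 a, ‖h z‖ < M := by
    have hca : ContinuousAt (fun z => ‖h z‖) a :=
      continuous_norm.continuousAt.comp (hhc.continuousAt hmem)
    exact hca.eventually_lt_const (by rw [hM]; linarith)
  obtain ⟨r2, hr2, hball2⟩ := Metric.eventually_nhds_iff_ball.1 hev
  set r := min r1 r2 with hr
  have hr0 : 0 < r := lt_min hr1 hr2
  have hrΩ : Metric.ball a r ⊆ Ω := (Metric.ball_subset_ball (min_le_left _ _)).trans hr1sub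
  have hrM : ∀ z ∈ Metric.ball a r, ‖h z‖ < M := fun z hz =>
    hball2 z (Metric.ball_subset_ball (min_le_right _ _) hz)
  -- key identity
  have key : ∀ z ∈ Ω, F z = (z - a) * (lam + (z - a) * h z) := by
    intro z hz
    rcases eq_or_ne z a with rfl | hne
    · simp [hFa]
    · have hza : z - a ≠ 0 := sub_ne_zero.2 hne
      have e1 : h z = (F z / (z - a) - lam) / (z - a) := by
        rw [hh, dslope_of_ne _ hne, slope_def_field, dslope_same, dslope_of_ne _ hne,
          slope_def_field, hFa, ← hlam, sub_zero]
      rw [e1]; field_simp; ring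
  set ε := -μ / 2 with hε
  have hε0 : 0 < ε := by rw [hε]; linarith
  have hμε : μ + ε < 0 := by rw [hε]; linarith
  refine ⟨min r (ε / M), lt_min hr0 (by positivity), ?_⟩
  set δ := min r (ε / M) with hδ
  have hδr : δ ≤ r := min_le_left _ _
  have hδεM : δ ≤ ε / M := min_le_right _ _
  intro γ hsol h0pos h0lt
  set d₀ := dist (γ 0) a with hd₀
  have hγc : ContinuousOn γ (Ici 0) := fun t ht => ((hsol t ht).2).continuousWithinAt
  have hγΩ : ∀ t ∈ Ici (0 : ℝ), γ t ∈ Ω := fun t ht => (hsol t ht).1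
  set g : ℝ → ℂ := fun t => lam + (γ t - a) * h (γ t) with hg
  have hgc : ContinuousOn g (Ici 0) :=
    continuousOn_const.add ((hγc.sub continuousOn_const).mul (hhc.comp hγc hγΩ))
  have hderiv : ∀ t ∈ Ici (0 : ℝ), HasDerivWithinAt γ ((γ t - a) * g t) (Ici t) t := by
    intro t ht
    have h1 := (hsol t ht).2.mono (Ici_subset_Ici.2 ht)
    rwa [key (γ t) (hγΩ t ht)] at h1
  have rep : ∀ t ∈ Ici (0 : ℝ),
      γ t - a = (γ 0 - a) * Complex.exp (∫ s in (0:ℝ)..t, g s) := by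
    intro t ht
    exact aux_rep a γ g ht (hγc.mono Icc_subset_Ici_self) (hgc.mono Icc_subset_Ici_self)
      (fun s hs => hderiv s hs.1) t ⟨ht, le_refl t⟩
  set G : ℝ → ℂ := fun t => ∫ s in (0:ℝ)..t, g s with hGdef
  have hgint : ∀ t ∈ Ici (0 : ℝ), IntervalIntegrable g volume 0 t := fun t ht =>
    (hgc.mono (by rw [uIcc_of_le ht]; exact Icc_subset_Ici_self)).intervalIntegrable
  have habs : ∀ t ∈ Ici (0 : ℝ), dist (γ t) a = d₀ * Real.exp ((G t).re) := by
    intro t ht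
    rw [Complex.dist_eq, rep t ht, norm_mul, Complex.norm_exp, hd₀, Complex.dist_eq]
  have hne0 : ∀ t ∈ Ici (0 : ℝ), γ t ≠ a := by
    intro t ht heq
    have h1 := habs t ht
    rw [heq, dist_self] at h1
    have h2 : 0 < d₀ * Real.exp ((G t).re) := mul_pos h0pos (Real.exp_pos _)
    linarith
  -- bound on g when close
  have hgbound : ∀ t ∈ Ici (0 : ℝ), dist (γ t) a < δ →
      (g t).re ≤ μ + ε ∧ |(g t).im| ≤ M * dist (γ t) a := by
    intro t ht hlt
    have hball : γ t ∈ Metric.ball a r := Metric.mem_ball.2 (hlt.trans_le hδr)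
    have habsh : ‖h (γ t)‖ < M := hrM _ hball
    have hsub : ‖g t - lam‖ ≤ M * dist (γ t) a := by
      have : g t - lam = (γ t - a) * h (γ t) := by rw [hg]; ring
      rw [this, norm_mul, ← Complex.dist_eq, mul_comm]
      exact mul_le_mul_of_nonneg_right habsh.le dist_nonneg
    constructor
    · have h1 : (g t).re - μ ≤ ‖g t - lam‖ := by
        have h2 : (g t - lam).re = (g t).re - μ := by rw [Complex.sub_re, hμ]
        calc (g t).re - μ = (g t - lam).re := h2.symm
          _ ≤ |(g t - lam).re| := le_abs_self _
          _ ≤ ‖g t - lam‖ := Complex.abs_re_le_norm _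
      have h3 : M * dist (γ t) a < ε := by
        have h4 : M * dist (γ t) a < M * (ε / M) :=
          mul_lt_mul_of_pos_left (hlt.trans_le hδεM) hM0
        rwa [mul_div_cancel₀ _ (ne_of_gt hM0)] at h4
      linarith
    · have h1 : (g t).im = (g t - lam).im := by
        rw [Complex.sub_im, hlam_eq]; simp
      rw [h1]
      exact (Complex.abs_im_le_norm _).trans hsub
  -- bootstrap main bound
  have main : ∀ t ∈ Ici (0 : ℝ), dist (γ t) a ≤ d₀ * Real.exp ((μ + ε) * t) := by
    by_contra hcon
    push_neg at hcon
    obtain ⟨T₀, hT₀mem, hT₀⟩ := hcon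
    set B := {t : ℝ | 0 ≤ t ∧ d₀ * Real.exp ((μ + ε) * t) < dist (γ t) a} with hB
    have hBne : B.Nonempty := ⟨T₀, hT₀mem, hT₀⟩
    have hBbd : BddBelow B := ⟨0, fun x hx => hx.1⟩
    set T := sInf B with hT
    have hT0 : 0 ≤ T := le_csInf hBne fun x hx => hx.1
    have hbelow : ∀ s, 0 ≤ s → s < T → dist (γ s) a ≤ d₀ * Real.exp ((μ + ε) * s) := by
      intro s hs0 hsT
      by_contra hs
      push_neg at hs
      exact absurd (csInf_le hBbd ⟨hs0, hs⟩) (not_le.2 hsT)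
    have hdistc : ContinuousOn (fun s => dist (γ s) a) (Ici 0) :=
      (continuous_id.dist continuous_const).comp_continuousOn hγc
    have hatT : dist (γ T) a ≤ d₀ * Real.exp ((μ + ε) * T) := by
      rcases eq_or_lt_of_le hT0 with heq | hlt
      · rw [← heq]; simp [← hd₀]
      · have hφc : ContinuousWithinAt
            (fun s => dist (γ s) a - d₀ * Real.exp ((μ + ε) * s)) (Ico 0 T) T := by
          apply ContinuousWithinAt.mono _ (Ico_subset_Ici_self)
          exact ((hdistc.sub (Continuous.continuousOn (by fun_prop))) T hT0)
        have hTcl : T ∈ closure (Ico 0 T) := by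
          rw [closure_Ico (ne_of_lt hlt)]
          exact ⟨hT0, le_refl T⟩
        have hnb : (𝓝[Ico 0 T] T).NeBot := mem_closure_iff_nhdsWithin_neBot.1 hTcl
        have hle := le_of_tendsto hφc
          (eventually_mem_nhdsWithin.mono fun s hs =>
            sub_nonpos.2 (hbelow s hs.1 hs.2))
        linarith [sub_nonpos.1 hle]
    have hd₀δ : d₀ < δ := h0lt
    have hexp1 : ∀ s : ℝ, 0 ≤ s → d₀ * Real.exp ((μ + ε) * s) ≤ d₀ := by
      intro s hs
      have : Real.exp ((μ + ε) * s) ≤ 1 :=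
        Real.exp_le_one_iff.2 (mul_nonpos_of_nonpos_of_nonneg hμε.le hs)
      calc d₀ * Real.exp ((μ + ε) * s) ≤ d₀ * 1 :=
            mul_le_mul_of_nonneg_left this dist_nonneg
        _ = d₀ := mul_one _
    have hevδ : ∀ᶠ s in 𝓝[Ici 0] T, dist (γ s) a < δ := by
      have htd : Tendsto (fun s => dist (γ s) a) (𝓝[Ici 0] T) (𝓝 (dist (γ T) a)) :=
        hdistc T hT0
      exact htd.eventually_lt_const (lt_of_le_of_lt (hatT.trans (hexp1 T hT0)) hd₀δ)
    obtain ⟨O, hOopen, hTO, hOsub⟩ := by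
      have := hevδ
      rw [eventually_iff, mem_nhdsWithin] at this
      exact this
    obtain ⟨η, hη0, hballη⟩ := Metric.isOpen_iff.1 hOopen T hTO
    set b := T + η / 2 with hbdef
    have hTb : T < b := by rw [hbdef]; linarith
    have hb0 : 0 ≤ b := hT0.trans hTb.le
    have hbub : ∀ s ∈ Icc 0 b, dist (γ s) a < δ := by
      intro s hs
      rcases le_or_gt s T with h' | h'
      · have hle : dist (γ s) a ≤ d₀ * Real.exp ((μ + ε) * s) := by
          rcases eq_or_lt_of_le h' with heq | hlt
          · rw [heq]; exact hatT
          · exact hbelow s hs.1 hlt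
        exact lt_of_le_of_lt (hle.trans (hexp1 s hs.1)) hd₀δ
      · apply hOsub
        refine ⟨hballη ?_, hs.1⟩
        have hsb : s ≤ T + η / 2 := hbdef ▸ hs.2
        rw [Metric.mem_ball, Real.dist_eq, abs_lt]
        constructor
        · linarith
        · linarith
    have hre_bound : ∀ t ∈ Icc 0 b, dist (γ t) a ≤ d₀ * Real.exp ((μ + ε) * t) := by
      intro t ht
      have h1 : (G t).re ≤ (μ + ε) * t := by
        rw [hGdef]
        simp only []
        rw [aux_re g (hgint t ht.1)]
        have hIcc : Icc (0:ℝ) t ⊆ Icc 0 b := Icc_subset_Icc le_rfl ht.2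
        have hint1 : IntervalIntegrable (fun s => (g s).re) volume 0 t := by
          apply ContinuousOn.intervalIntegrable
          rw [uIcc_of_le ht.1]
          exact Complex.continuous_re.comp_continuousOn (hgc.mono Icc_subset_Ici_self)
        calc ∫ s in (0:ℝ)..t, (g s).re ≤ ∫ _ in (0:ℝ)..t, (μ + ε) := by
              apply intervalIntegral.integral_mono_on ht.1 hint1 intervalIntegrable_const
              intro s hs
              exact (hgbound s hs.1 (hbub s (hIcc hs))).1
          _ = (μ + ε) * t := by simp [intervalIntegral.integral_const]; ring
      rw [habs t ht.1]
      exact mul_le_mul_of_nonneg_left (Real.exp_le_exp.2 h1) dist_nonneg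
    obtain ⟨x, hxB, hxlt⟩ := (csInf_lt_iff hBbd hBne).1 (hT ▸ hTb)
    exact absurd (hre_bound x ⟨hxB.1, hxlt.le⟩) (not_le.2 hxB.2)
  -- conclusion 1
  have htend0 : Tendsto (fun t : ℝ => d₀ * Real.exp ((μ + ε) * t)) atTop (𝓝 0) := by
    rw [show (0:ℝ) = d₀ * 0 by ring]
    apply Tendsto.const_mul
    apply Real.tendsto_exp_atBot.comp
    exact (tendsto_const_mul_atBot_of_neg hμε).2 tendsto_id
  have hγtend : Tendsto γ atTop (𝓝 a) := by
    rw [tendsto_iff_dist_tendsto_zero]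
    apply squeeze_zero' (Eventually.of_forall fun t => dist_nonneg)
      ((eventually_ge_atTop (0:ℝ)).mono fun t ht => main t ht) htend0
  refine ⟨hγtend, hne0, ?_⟩
  -- direction
  have hmainδ : ∀ t ∈ Ici (0:ℝ), dist (γ t) a < δ := by
    intro t ht
    have h1 := main t ht
    have h2 : Real.exp ((μ + ε) * t) ≤ 1 :=
      Real.exp_le_one_iff.2 (mul_nonpos_of_nonpos_of_nonneg hμε.le ht)
    calc dist (γ t) a ≤ d₀ * Real.exp ((μ + ε) * t) := h1
      _ ≤ d₀ * 1 := mul_le_mul_of_nonneg_left h2 dist_nonneg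
      _ = d₀ := mul_one _
      _ < δ := h0lt
  have himint : IntegrableOn (fun s => (g s).im) (Ioi 0) volume := by
    apply Integrable.mono' (g := fun s => M * d₀ * Real.exp (-(-(μ + ε)) * s))
    · exact ((exp_neg_integrableOn_Ioi 0 (by linarith : (0:ℝ) < -(μ + ε)))).const_mul _
    · exact ((Complex.continuous_im.comp_continuousOn hgc).mono
        (Ioi_subset_Ici le_rfl)).aestronglyMeasurable measurableSet_Ioi
    · filter_upwards [ae_restrict_mem measurableSet_Ioi] with s hs
      have hs0 : (0:ℝ) ≤ s := le_of_lt hs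
      have h2 := (hgbound s hs0 (hmainδ s hs0)).2
      rw [Real.norm_eq_abs]
      calc |(g s).im| ≤ M * dist (γ s) a := h2
        _ ≤ M * (d₀ * Real.exp ((μ + ε) * s)) :=
            mul_le_mul_of_nonneg_left (main s hs0) hM0.le
        _ = M * d₀ * Real.exp (-(-(μ + ε)) * s) := by rw [neg_neg]; ring
  set L := ∫ s in Ioi (0:ℝ), (g s).im with hL
  have hImtend : Tendsto (fun t => (G t).im) atTop (𝓝 L) := by
    have h1 := MeasureTheory.intervalIntegral_tendsto_integral_Ioi 0 himint tendsto_id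
    apply h1.congr'
    filter_upwards [eventually_ge_atTop (0:ℝ)] with t ht
    exact (aux_im g (hgint t ht)).symm
  set w₀ := (γ 0 - a) / (d₀ : ℂ) with hw₀
  have hd₀ne : (d₀ : ℂ) ≠ 0 := by
    simp only [ne_eq, Complex.ofReal_eq_zero]
    exact ne_of_gt h0pos
  have hunit : ∀ᶠ t in atTop, (γ t - a) / ((‖γ t - a‖ : ℝ) : ℂ)
      = w₀ * Complex.exp (((G t).im : ℂ) * Complex.I) := by
    filter_upwards [eventually_ge_atTop (0:ℝ)] with t ht
    rw [rep t ht]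
    have habs2 : ((‖(γ 0 - a) * Complex.exp (G t)‖ : ℝ) : ℂ)
        = (d₀ : ℂ) * Complex.exp (((G t).re : ℂ)) := by
      rw [norm_mul, Complex.norm_exp]
      have : d₀ = ‖γ 0 - a‖ := by rw [hd₀, Complex.dist_eq]
      rw [← this]
      push_cast [Complex.ofReal_exp]
      ring
    rw [habs2, mul_div_mul_comm, ← Complex.exp_sub, ← hw₀]
    congr 1
    rw [show G t - ((G t).re : ℂ) = ((G t).im : ℂ) * Complex.I by
      linear_combination -(Complex.re_add_im (G t))]
  have hcont2 : Continuous fun x : ℝ => w₀ * Complex.exp ((x : ℂ) * Complex.I) := by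
    fun_prop
  have hlim : Tendsto (fun t => (γ t - a) / ((‖γ t - a‖ : ℝ) : ℂ)) atTop
      (𝓝 (w₀ * Complex.exp ((L : ℂ) * Complex.I))) := by
    have h1 := (hcont2.tendsto L).comp hImtend
    exact Filter.Tendsto.congr' (hunit.mono fun t ht => ht.symm) h1
  set w := w₀ * Complex.exp ((L : ℂ) * Complex.I) with hw
  have hwabs : ‖w‖ = 1 := by
    rw [hw, norm_mul, norm_div, Complex.norm_exp]
    have h1 : ((L : ℂ) * Complex.I).re = 0 := by simp
    rw [h1, Real.exp_zero, mul_one]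
    rw [Complex.norm_real, Real.norm_eq_abs, abs_of_pos h0pos, ← Complex.dist_eq, ← hd₀]
    field_simp
  set θ := Complex.arg w with hθ
  have hπ1 := Complex.neg_pi_lt_arg w
  have hπ2 := Complex.arg_le_pi w
  have hπ0 := Real.pi_pos
  refine ⟨if 0 ≤ θ then θ else θ + 2 * Real.pi, ?_, ?_⟩
  · split_ifs with hcase
    · exact ⟨hcase, lt_of_le_of_lt hπ2 (by linarith)⟩
    · push_neg at hcase
      exact ⟨by linarith, by linarith⟩
  · have hexpθ : Complex.exp ((θ : ℂ) * Complex.I) = w := by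
      have h1 := Complex.norm_mul_exp_arg_mul_I w
      rwa [hwabs, Complex.ofReal_one, one_mul] at h1
    split_ifs with hcase
    · rw [hexpθ]; exact hlim
    · have h2 : Complex.exp (((θ + 2 * Real.pi : ℝ) : ℂ) * Complex.I)
          = Complex.exp ((θ : ℂ) * Complex.I) := by
        push_cast
        rw [add_mul, Complex.exp_add, Complex.exp_two_pi_mul_I, mul_one]
      rw [h2, hexpθ]
      exact hlim
end

section
/- Let Ω ⊆ ℂ be open and connected, F holomorphic on Ω with F ≢ 0, and a ∈ Ω an equilibrium with Re F′(a) < 0 and Im F′(a) ≠ 0. Then there exists δ > 0 such that every solution γ : [0,∞) → Ω of ẋ = F(x) with 0 < |γ(0) − a| < δ satisfies γ(t) → a as t → ∞, γ(t) ≠ a for all t ≥ 0, and every continuous function θ : [0,∞) → ℝ satisfying γ(t) − a = |γ(t) − a|·e^{iθ(t)} for all t ≥ 0 has |θ(t)| → ∞ as t → ∞; that is, a is a stable focus and nearby orbits spiral into a. -/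
open Set Filter Topology
open MeasureTheory

private lemma le_init_of_right_deriv_nonpos {f f' : ℝ → ℝ} {b : ℝ}
    (hcont : ContinuousOn f (Icc 0 b))
    (hderiv : ∀ t ∈ Ico (0:ℝ) b, HasDerivWithinAt f (f' t) (Ici t) t)
    (hneg : ∀ t ∈ Ico (0:ℝ) b, f' t ≤ 0) : ∀ t ∈ Icc (0:ℝ) b, f t ≤ f 0 := by
  intro t ht
  exact image_le_of_deriv_right_le_deriv_boundary (B := fun _ => f 0) (B' := fun _ => 0)
    hcont hderiv le_rfl continuousOn_const
    (fun x _ => hasDerivWithinAt_const x _ (f 0)) hneg ht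

private lemma inner_mul_self (x l : ℂ) : (inner ℝ x (x * l) : ℝ) = l.re * ‖x‖ ^ 2 := by
  rw [Complex.inner]
  have h : x * l * (starRingEnd ℂ) x = ((‖x‖ ^ 2 : ℝ) : ℂ) * l := by
    rw [mul_comm x l, mul_assoc, Complex.mul_conj]
    rw [← Complex.sq_norm, mul_comm]
  rw [h, Complex.re_ofReal_mul]
  ring

set_option maxHeartbeats 1000000 in
/-- If `Re F'(a) < 0` and `Im F'(a) ≠ 0` at an equilibrium `a` of a holomorphic
flow, then `a` is a stable focus: nearby solutions tend to `a`, stay away from `a`, and any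
continuous argument of `γ − a` blows up in absolute value. -/
theorem stmt_3 (Ω : Set ℂ) (hΩ : IsOpen Ω) (hconn : IsConnected Ω)
    (F : ℂ → ℂ) (hF : DifferentiableOn ℂ F Ω) (hF0 : ∃ z ∈ Ω, F z ≠ 0)
    (a : ℂ) (ha : a ∈ Ω) (hFa : F a = 0)
    (hre : (deriv F a).re < 0) (him : (deriv F a).im ≠ 0) :
    ∃ δ > 0, ∀ γ : ℝ → ℂ, IsSolOn F Ω (Ici 0) γ →
      0 < dist (γ 0) a → dist (γ 0) a < δ →
        Tendsto γ atTop (nhds a) ∧ (∀ t ∈ Ici (0 : ℝ), γ t ≠ a) ∧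
        ∀ θ : ℝ → ℝ, ContinuousOn θ (Ici 0) →
          (∀ t ∈ Ici (0 : ℝ), γ t - a =
            ((‖γ t - a‖ : ℝ) : ℂ) * Complex.exp ((θ t : ℂ) * Complex.I)) →
          Tendsto (fun t => |θ t|) atTop atTop := by
  classical
  set l := deriv F a with hldef
  have himpos : 0 < |l.im| := abs_pos.mpr him
  have hε : (0:ℝ) < min (-l.re/2) (|l.im|/2) := lt_min (by linarith) (by linarith)
  set ε := min (-l.re/2) (|l.im|/2) with hεdef
  have hε1 : ε ≤ -l.re/2 := min_le_left _ _
  have hε2 : ε ≤ |l.im|/2 := min_le_right _ _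
  have hda : HasDerivAt F l a := (hF.differentiableAt (hΩ.mem_nhds ha)).hasDerivAt
  have hlo := (hasDerivAt_iff_isLittleO.mp hda).def hε
  have hev : ∀ᶠ z in 𝓝 a, z ∈ Ω ∧ ‖F z - (z - a) * l‖ ≤ ε * ‖z - a‖ := by
    filter_upwards [hΩ.mem_nhds ha, hlo] with z h1 h2
    refine ⟨h1, ?_⟩
    simpa [hFa, smul_eq_mul] using h2
  rcases Metric.eventually_nhds_iff.mp hev with ⟨δ, hδpos, hδ⟩
  refine ⟨δ, hδpos, ?_⟩
  intro γ hγ hpos hlt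
  have hmem : ∀ t ∈ Ici (0:ℝ), γ t ∈ Ω := fun t ht => (hγ t ht).1
  have hderivγ : ∀ t ∈ Ici (0:ℝ), HasDerivWithinAt γ (F (γ t)) (Ici 0) t :=
    fun t ht => (hγ t ht).2
  have hγcont : ContinuousOn γ (Ici 0) := fun t ht => (hderivγ t ht).continuousWithinAt
  set w : ℝ → ℂ := fun t => γ t - a with hwdef
  have hwcont : ContinuousOn w (Ici 0) := hγcont.sub continuousOn_const
  set g : ℝ → ℝ := fun t => ‖w t‖ ^ 2 with hgdef
  have hgcont : ContinuousOn g (Ici 0) := hwcont.norm.pow 2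
  have hw0lt : ‖w 0‖ < δ := by simpa [hwdef, dist_eq_norm] using hlt
  have hw0pos : 0 < ‖w 0‖ := by simpa [hwdef, dist_eq_norm] using hpos
  have hg0lt : g 0 < δ ^ 2 := pow_lt_pow_left₀ hw0lt (norm_nonneg _) (by norm_num)
  have hg0pos : 0 < g 0 := pow_pos hw0pos 2
  -- the basic inner-product bounds in the ball
  have hkey : ∀ z : ℂ, dist z a < δ →
      (inner ℝ (z - a) (F z) : ℝ) ≤ (l.re + ε) * ‖z - a‖ ^ 2 ∧
      -((‖l‖ + ε) * ‖z - a‖ ^ 2) ≤ (inner ℝ (z - a) (F z) : ℝ) := by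
    intro z hz
    obtain ⟨-, hb⟩ := hδ hz
    have hsplit : (inner ℝ (z - a) (F z) : ℝ)
        = (inner ℝ (z - a) ((z - a) * l) : ℝ) + (inner ℝ (z - a) (F z - (z - a) * l) : ℝ) := by
      rw [← inner_add_right]
      congr 1
      ring
    have h1 : (inner ℝ (z - a) ((z - a) * l) : ℝ) = l.re * ‖z - a‖ ^ 2 := inner_mul_self _ _
    have h2 : |(inner ℝ (z - a) (F z - (z - a) * l) : ℝ)| ≤ ε * ‖z - a‖ ^ 2 := by
      refine (abs_real_inner_le_norm _ _).trans ?_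
      calc ‖z - a‖ * ‖F z - (z - a) * l‖ ≤ ‖z - a‖ * (ε * ‖z - a‖) :=
            mul_le_mul_of_nonneg_left hb (norm_nonneg _)
        _ = ε * ‖z - a‖ ^ 2 := by ring
    have habs : |l.re| ≤ ‖l‖ := by
      exact Complex.abs_re_le_norm l
    obtain ⟨h2a, h2b⟩ := abs_le.mp h2
    obtain ⟨h3a, h3b⟩ := abs_le.mp habs
    constructor
    · nlinarith [sq_nonneg ‖z - a‖]
    · nlinarith [sq_nonneg ‖z - a‖, mul_le_mul_of_nonneg_right h3a (sq_nonneg ‖z - a‖)]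
  -- derivative of the squared norm
  have hg' : ∀ t ∈ Ici (0:ℝ),
      HasDerivWithinAt g (2 * (inner ℝ (w t) (F (γ t)) : ℝ)) (Ici 0) t := by
    intro t ht
    have hw' : HasDerivWithinAt w (F (γ t)) (Ici 0) t := (hderivγ t ht).sub_const a
    have h := hw'.inner ℝ hw'
    have heq : (fun s : ℝ => (inner ℝ (w s) (w s) : ℝ)) = g := by
      funext s; rw [real_inner_self_eq_norm_sq]
    rw [heq] at h
    refine h.congr_deriv ?_
    rw [real_inner_comm (F (γ t)) (w t)]
    ring
  -- Step A : the solution never leaves the ball, and `g` never exceeds `g 0`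
  have hstayA : ∀ T ∈ Ici (0:ℝ), ∀ s ∈ Icc (0:ℝ) T, g s ≤ g 0 := by
    intro T hT
    set A : Set ℝ := {t | t ∈ Icc (0:ℝ) T ∧ ∀ s ∈ Icc (0:ℝ) t, g s ≤ g 0} with hAdef
    have h0A : (0:ℝ) ∈ A := ⟨⟨le_refl 0, hT⟩, fun s hs => by
      have hs0 : s = 0 := le_antisymm hs.2 hs.1
      simp [hs0]⟩
    have hAbdd : BddAbove A := ⟨T, fun x hx => hx.1.2⟩
    have hAne : A.Nonempty := ⟨0, h0A⟩
    set u := sSup A with hudef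
    have hu0 : (0:ℝ) ≤ u := le_csSup hAbdd h0A
    have huT : u ≤ T := csSup_le hAne fun x hx => hx.1.2
    have hIco : ∀ s ∈ Ico (0:ℝ) u, g s ≤ g 0 := by
      intro s hs
      obtain ⟨t, htA, hst⟩ := exists_lt_of_lt_csSup hAne hs.2
      exact htA.2 s ⟨hs.1, hst.le⟩
    have hgu : g u ≤ g 0 := by
      rcases eq_or_lt_of_le hu0 with h | h
      · rw [← h]
      · have hcl : u ∈ closure (Ico (0:ℝ) u) := by
          rw [closure_Ico h.ne]
          exact ⟨hu0, le_refl u⟩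
        have hnb : (𝓝[Ico (0:ℝ) u] u).NeBot := mem_closure_iff_nhdsWithin_neBot.mp hcl
        have htend : Tendsto g (𝓝[Ico (0:ℝ) u] u) (𝓝 (g u)) :=
          (hgcont u hu0).mono (fun x hx => hx.1)
        exact le_of_tendsto htend (eventually_mem_nhdsWithin.mono fun x hx => hIco x hx)
    have huA : u ∈ A := ⟨⟨hu0, huT⟩, fun s hs =>
      (eq_or_lt_of_le hs.2).elim (fun h => by rw [h]; exact hgu) (fun h => hIco s ⟨hs.1, h⟩)⟩
    rcases eq_or_lt_of_le huT with heq | hlt'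
    · exact heq ▸ huA.2
    · exfalso
      have hguδ : g u < δ ^ 2 := lt_of_le_of_lt hgu hg0lt
      have hmem' : g ⁻¹' (Iio (δ ^ 2)) ∈ 𝓝[Ici 0] u := (hgcont u hu0) (Iio_mem_nhds hguδ)
      rcases Metric.mem_nhdsWithin_iff.mp hmem' with ⟨r, hr, hrsub⟩
      set η := min (r/2) (T - u) with hηdef
      have hη : 0 < η := lt_min (by linarith) (by linarith)
      have hηr : η ≤ r/2 := min_le_left _ _
      have hvT : u + η ≤ T := by
        have h2 : η ≤ T - u := hηdef ▸ min_le_right (r/2) (T - u)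
        linarith
      have hballv : ∀ s ∈ Icc (0:ℝ) (u + η), g s < δ ^ 2 := by
        intro s hs
        rcases le_or_gt s u with h | h
        · exact lt_of_le_of_lt (huA.2 s ⟨hs.1, h⟩) hg0lt
        · refine hrsub ?_
          constructor
          · rw [Metric.mem_ball, Real.dist_eq, abs_of_pos (by linarith : (0:ℝ) < s - u)]
            have := hs.2
            linarith
          · exact hs.1
      have hsubδ : ∀ s ∈ Icc (0:ℝ) (u + η), dist (γ s) a < δ := by
        intro s hs
        rw [dist_eq_norm]
        exact lt_of_pow_lt_pow_left₀ 2 hδpos.le (hballv s hs)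
      have hfle := le_init_of_right_deriv_nonpos
        (f := g) (f' := fun s => 2 * (inner ℝ (w s) (F (γ s)) : ℝ)) (b := u + η)
        (hgcont.mono (fun x hx => hx.1))
        (fun s hs => (hg' s hs.1).mono (Ici_subset_Ici.mpr hs.1))
        (fun s hs => by
          have hk : (inner ℝ (w s) (F (γ s)) : ℝ) ≤ (l.re + ε) * ‖w s‖ ^ 2 :=
            (hkey _ (hsubδ s ⟨hs.1, hs.2.le⟩)).1
          have hc1 : l.re + ε ≤ l.re/2 := by linarith
          show 2 * (inner ℝ (w s) (F (γ s)) : ℝ) ≤ 0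
          nlinarith [sq_nonneg ‖w s‖])
      have hvA : u + η ∈ A := ⟨⟨by linarith, hvT⟩, hfle⟩
      have := le_csSup hAbdd hvA
      linarith
  have hball : ∀ t ∈ Ici (0:ℝ), dist (γ t) a < δ := by
    intro t ht
    rw [dist_eq_norm]
    exact lt_of_pow_lt_pow_left₀ 2 hδpos.le
      (lt_of_le_of_lt (hstayA t ht t ⟨ht, le_refl t⟩) hg0lt)
  have hup : ∀ t ∈ Ici (0:ℝ), (inner ℝ (w t) (F (γ t)) : ℝ) ≤ (l.re + ε) * g t :=
    fun t ht => (hkey _ (hball t ht)).1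
  have hdn : ∀ t ∈ Ici (0:ℝ), -((‖l‖ + ε) * g t) ≤ (inner ℝ (w t) (F (γ t)) : ℝ) :=
    fun t ht => (hkey _ (hball t ht)).2
  set c1 : ℝ := l.re + ε with hc1def
  have hc1neg : c1 < 0 := by rw [hc1def]; linarith
  set c2 : ℝ := ‖l‖ + ε with hc2def
  have hc2pos : 0 < c2 := by
    rw [hc2def]; positivity
  -- Step B : exponential decay
  have hdecay : ∀ t ∈ Ici (0:ℝ), g t ≤ g 0 * Real.exp (2 * c1 * t) := by
    intro T hT
    set f : ℝ → ℝ := fun t => g t * Real.exp (-(2*c1) * t) with hfdef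
    have hf' : ∀ t ∈ Ico (0:ℝ) T, HasDerivWithinAt f
        ((2 * (inner ℝ (w t) (F (γ t)) : ℝ)) * Real.exp (-(2*c1)*t)
          + g t * (Real.exp (-(2*c1)*t) * (-(2*c1)))) (Ici t) t := by
      intro t ht
      have h1 := (hg' t ht.1).mono (Ici_subset_Ici.mpr ht.1)
      have h2 : HasDerivAt (fun s : ℝ => Real.exp (-(2*c1) * s))
          (Real.exp (-(2*c1)*t) * (-(2*c1))) t := by
        simpa [mul_comm] using ((hasDerivAt_id t).const_mul (-(2*c1))).exp
      exact h1.mul h2.hasDerivWithinAt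
    have hcontf : ContinuousOn f (Icc 0 T) :=
      (hgcont.mono (fun x hx => hx.1)).mul
        ((Real.continuous_exp.comp (continuous_const.mul continuous_id)).continuousOn)
    have hfle := le_init_of_right_deriv_nonpos hcontf hf'
      (fun t ht => by
        have hE := Real.exp_pos (-(2*c1)*t)
        have h3 := hup t ht.1
        have h4 : 0 ≤ g t := sq_nonneg ‖w t‖
        show (2 * (inner ℝ (w t) (F (γ t)) : ℝ)) * Real.exp (-(2*c1)*t)
          + g t * (Real.exp (-(2*c1)*t) * (-(2*c1))) ≤ 0
        nlinarith) T ⟨hT, le_refl T⟩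
    have hf0 : f 0 = g 0 := by
      show g 0 * Real.exp (-(2*c1) * 0) = g 0
      simp
    rw [hf0] at hfle
    have hexp1 : Real.exp (-(2*c1)*T) * Real.exp (2*c1*T) = 1 := by
      rw [← Real.exp_add]; ring_nf; exact Real.exp_zero
    have hgT : g T = f T * Real.exp (2*c1*T) := by
      show g T = g T * Real.exp (-(2*c1) * T) * Real.exp (2*c1*T)
      rw [mul_assoc, hexp1, mul_one]
    rw [hgT]
    exact mul_le_mul_of_nonneg_right hfle (Real.exp_pos _).le
  -- Step C : exponential lower bound, so the solution never hits `a`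
  have hlow : ∀ t ∈ Ici (0:ℝ), g 0 * Real.exp (-(2*c2) * t) ≤ g t := by
    intro T hT
    set f : ℝ → ℝ := fun t => -(g t * Real.exp ((2*c2) * t)) with hfdef
    have hf' : ∀ t ∈ Ico (0:ℝ) T, HasDerivWithinAt f
        (-((2 * (inner ℝ (w t) (F (γ t)) : ℝ)) * Real.exp ((2*c2)*t)
          + g t * (Real.exp ((2*c2)*t) * (2*c2)))) (Ici t) t := by
      intro t ht
      have h1 := (hg' t ht.1).mono (Ici_subset_Ici.mpr ht.1)
      have h2 : HasDerivAt (fun s : ℝ => Real.exp ((2*c2) * s))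
          (Real.exp ((2*c2)*t) * (2*c2)) t := by
        simpa [mul_comm] using ((hasDerivAt_id t).const_mul (2*c2)).exp
      exact (h1.mul h2.hasDerivWithinAt).neg
    have hcontf : ContinuousOn f (Icc 0 T) :=
      ((hgcont.mono (fun x hx => hx.1)).mul
        ((Real.continuous_exp.comp (continuous_const.mul continuous_id)).continuousOn)).neg
    have hfle := le_init_of_right_deriv_nonpos hcontf hf'
      (fun t ht => by
        have hE := Real.exp_pos ((2*c2)*t)
        have h3 := hdn t ht.1
        have h4 : 0 ≤ g t := sq_nonneg ‖w t‖
        show -((2 * (inner ℝ (w t) (F (γ t)) : ℝ)) * Real.exp ((2*c2)*t)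
          + g t * (Real.exp ((2*c2)*t) * (2*c2))) ≤ 0
        nlinarith) T ⟨hT, le_refl T⟩
    have hf0 : f 0 = -(g 0) := by
      show -(g 0 * Real.exp ((2*c2) * 0)) = -(g 0)
      simp
    rw [hf0] at hfle
    have h5 : g 0 ≤ g T * Real.exp ((2*c2)*T) := by
      have := neg_le_neg hfle
      simpa [hfdef] using this
    have hexp1 : Real.exp ((2*c2)*T) * Real.exp (-(2*c2)*T) = 1 := by
      rw [← Real.exp_add]; ring_nf; exact Real.exp_zero
    calc g 0 * Real.exp (-(2*c2) * T) ≤ (g T * Real.exp ((2*c2)*T)) * Real.exp (-(2*c2)*T) :=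
          mul_le_mul_of_nonneg_right h5 (Real.exp_pos _).le
      _ = g T := by rw [mul_assoc, hexp1, mul_one]
  have hgpos : ∀ t ∈ Ici (0:ℝ), 0 < g t := fun t ht =>
    lt_of_lt_of_le (mul_pos hg0pos (Real.exp_pos _)) (hlow t ht)
  have hwne : ∀ t ∈ Ici (0:ℝ), w t ≠ 0 := by
    intro t ht h
    have := hgpos t ht
    rw [hgdef] at this
    simp [h] at this
  have hne : ∀ t ∈ Ici (0:ℝ), γ t ≠ a := by
    intro t ht
    exact sub_ne_zero.mp (hwne t ht)
  -- convergence to `a`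
  have htend : Tendsto γ atTop (𝓝 a) := by
    rw [tendsto_iff_dist_tendsto_zero]
    have hbot : Tendsto (fun t : ℝ => 2 * c1 * t) atTop atBot := by
      have h1 : Tendsto (fun t : ℝ => (-(2*c1)) * t) atTop atTop :=
        Tendsto.const_mul_atTop (by linarith) tendsto_id
      have h2 := tendsto_neg_atTop_atBot.comp h1
      refine h2.congr fun t => ?_
      simp only [Function.comp]
      ring
    have h1 : Tendsto (fun t => g 0 * Real.exp (2*c1*t)) atTop (𝓝 0) := by
      have h2 := Tendsto.const_mul (g 0) (Real.tendsto_exp_comp_nhds_zero.mpr hbot)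
      simpa using h2
    have hgtend : Tendsto g atTop (𝓝 0) := by
      apply squeeze_zero' (f := g) (g := fun t => g 0 * Real.exp (2*c1*t))
      · filter_upwards with t; exact sq_nonneg ‖w t‖
      · filter_upwards [eventually_ge_atTop (0:ℝ)] with t ht using hdecay t ht
      · exact h1
    have hsq : Tendsto (fun t => Real.sqrt (g t)) atTop (𝓝 0) := by
      have := (Real.continuous_sqrt.tendsto 0).comp hgtend
      simpa [Function.comp_def] using this
    refine hsq.congr' ?_
    filter_upwards with t
    rw [hgdef]
    simp only []
    rw [Real.sqrt_sq (norm_nonneg _), dist_eq_norm]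
  -- the logarithmic primitive
  have hFγcont : ContinuousOn (fun t => F (γ t)) (Ici 0) := hF.continuousOn.comp hγcont hmem
  set q : ℝ → ℂ := fun t => F (γ t) / w t with hqdef
  have hqcont : ContinuousOn q (Ici 0) := hFγcont.div hwcont hwne
  set L : ℝ → ℂ := fun t => ∫ s in (0:ℝ)..t, q s with hLdef
  have hL0 : L 0 = 0 := intervalIntegral.integral_same
  have hqint : ∀ t ∈ Ici (0:ℝ), IntervalIntegrable q volume 0 t := by
    intro t ht
    apply ContinuousOn.intervalIntegrable
    apply hqcont.mono
    rw [uIcc_of_le ht]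
    exact fun x hx => hx.1
  have hL' : ∀ t ∈ Ici (0:ℝ), HasDerivWithinAt L (q t) (Ici t) t := by
    intro t ht
    refine intervalIntegral.integral_hasDerivWithinAt_right (hqint t ht)
      ⟨Ioi t, self_mem_nhdsWithin, ?_⟩ ((hqcont t ht).mono ?_)
    · exact (hqcont.mono (fun x (hx : x ∈ Ioi t) => mem_Ici.mpr (le_trans ht hx.le))).aestronglyMeasurable
        measurableSet_Ioi
    · exact fun x (hx : x ∈ Ioi t) => mem_Ici.mpr (le_trans ht hx.le)
  have hLcont : ContinuousOn L (Ici 0) := by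
    intro t ht
    have ht' : (0:ℝ) ≤ t := ht
    have hsub : uIcc (0:ℝ) (t+1) = Icc 0 (t+1) := uIcc_of_le (by linarith)
    have hc : ContinuousOn L (Icc 0 (t+1)) := by
      rw [← hsub]
      apply intervalIntegral.continuousOn_primitive_interval'
      · apply ContinuousOn.intervalIntegrable
        rw [hsub]
        exact hqcont.mono (fun x hx => hx.1)
      · rw [hsub]; exact ⟨le_refl 0, by linarith⟩
    have hmem2 : Icc (0:ℝ) (t+1) ∈ 𝓝[Ici 0] t := by
      rw [← Ici_inter_Iic]
      exact Filter.inter_mem self_mem_nhdsWithin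
        (mem_nhdsWithin_of_mem_nhds (Iic_mem_nhds (by linarith)))
    exact (hc t ⟨ht', by linarith⟩).mono_of_mem_nhdsWithin hmem2
  have hwq : ∀ t ∈ Ici (0:ℝ), w t * q t = F (γ t) := by
    intro t ht
    show w t * (F (γ t) / w t) = F (γ t)
    rw [mul_div_cancel₀ _ (hwne t ht)]
  have hMconst : ∀ t ∈ Ici (0:ℝ), w t * Complex.exp (-L t) = w 0 := by
    intro T hT
    have hcontM : ContinuousOn (fun t => w t * Complex.exp (-L t)) (Icc 0 T) :=
      (hwcont.mono (fun x hx => hx.1)).mul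
        (Complex.continuous_exp.comp_continuousOn ((hLcont.mono (fun x hx => hx.1)).neg))
    have hder : ∀ x ∈ Ico (0:ℝ) T,
        HasDerivWithinAt (fun t => w t * Complex.exp (-L t)) 0 (Ici x) x := by
      intro x hx
      have hw' : HasDerivWithinAt w (F (γ x)) (Ici x) x :=
        ((hderivγ x hx.1).sub_const a).mono (Ici_subset_Ici.mpr hx.1)
      have hexp' : HasDerivWithinAt (fun s => Complex.exp (-L s))
          (Complex.exp (-L x) * (-(q x))) (Ici x) x := ((hL' x hx.1).neg).cexp
      have := hw'.mul hexp'
      refine this.congr_deriv ?_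
      rw [← hwq x hx.1]
      ring
    have := constant_of_has_deriv_right_zero hcontM hder T ⟨hT, le_refl T⟩
    simpa [hL0] using this
  have hwL : ∀ t ∈ Ici (0:ℝ), w t = w 0 * Complex.exp (L t) := by
    intro t ht
    have h := hMconst t ht
    have h2 : w t * Complex.exp (-L t) * Complex.exp (L t) = w 0 * Complex.exp (L t) := by
      rw [h]
    rwa [mul_assoc, ← Complex.exp_add, neg_add_cancel, Complex.exp_zero, mul_one] at h2
  -- the canonical continuous argument
  set θ₀ : ℝ → ℝ := fun t => Complex.arg (w 0) + (L t).im with hθ₀def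
  have hθ₀cont : ContinuousOn θ₀ (Ici 0) :=
    continuousOn_const.add (Complex.continuous_im.comp_continuousOn hLcont)
  have habsw : ∀ t ∈ Ici (0:ℝ), ‖w t‖ = ‖w 0‖ * Real.exp ((L t).re) := by
    intro t ht
    rw [hwL t ht, norm_mul, Complex.norm_exp]
  have hθ₀rep : ∀ t ∈ Ici (0:ℝ),
      w t = ((‖w t‖ : ℝ) : ℂ) * Complex.exp ((θ₀ t : ℂ) * Complex.I) := by
    intro t ht
    have harg : ((‖w 0‖ : ℝ) : ℂ) *
        Complex.exp ((Complex.arg (w 0) : ℂ) * Complex.I) = w 0 :=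
      Complex.norm_mul_exp_arg_mul_I (w 0)
    have key : ((‖w t‖ : ℝ) : ℂ) * Complex.exp ((θ₀ t : ℂ) * Complex.I)
        = w 0 * Complex.exp (L t) := by
      rw [habsw t ht]
      show ((‖w 0‖ * Real.exp ((L t).re) : ℝ) : ℂ) *
        Complex.exp (((Complex.arg (w 0) + (L t).im : ℝ) : ℂ) * Complex.I)
        = w 0 * Complex.exp (L t)
      conv_rhs => rw [← harg]
      conv_rhs => rw [← Complex.re_add_im (L t)]
      push_cast
      rw [add_mul, Complex.exp_add, Complex.exp_add]
      ring
    exact (hwL t ht).trans key.symm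
  -- linear growth of the imaginary part of `L`
  have hLlin : ∀ t ∈ Ici (0:ℝ), ‖L t - (t : ℂ) * l‖ ≤ ε * t := by
    intro t ht
    have hconst : (∫ _ in (0:ℝ)..t, l) = (t : ℂ) * l := by
      simp [intervalIntegral.integral_const, Complex.real_smul]
    have hsub' : L t - (t:ℂ)*l = ∫ s in (0:ℝ)..t, (q s - l) := by
      rw [intervalIntegral.integral_sub (hqint t ht) intervalIntegrable_const, hconst]
    rw [hsub']
    have hbd : ∀ x ∈ Set.uIoc (0:ℝ) t, ‖q x - l‖ ≤ ε := by
      intro x hx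
      rw [uIoc_of_le ht] at hx
      have hx0 : x ∈ Ici (0:ℝ) := le_of_lt hx.1
      have hnum : q x - l = (F (γ x) - w x * l) / w x := by
        show F (γ x) / w x - l = (F (γ x) - w x * l) / w x
        field_simp [hwne x hx0]
      rw [hnum, norm_div, div_le_iff₀ (norm_pos_iff.mpr (hwne x hx0))]
      exact (hδ (hball x hx0)).2
    have := intervalIntegral.norm_integral_le_of_norm_le_const hbd
    simpa [abs_of_nonneg (show (0:ℝ) ≤ t from ht)] using this
  have hθ₀low : ∀ t ∈ Ici (0:ℝ),
      (|l.im|/2) * t - |Complex.arg (w 0)| ≤ |θ₀ t| := by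
    intro t ht
    have h1 : |(L t).im - t * l.im| ≤ ε * t := by
      have h2 := hLlin t ht
      have h3 : (L t - (t:ℂ)*l).im = (L t).im - t * l.im := by
        simp [Complex.sub_im, Complex.mul_im]
      calc |(L t).im - t * l.im| = |(L t - (t:ℂ)*l).im| := by rw [h3]
        _ ≤ ‖L t - (t:ℂ)*l‖ := Complex.abs_im_le_norm _
        _ = ‖L t - (t:ℂ)*l‖ := rfl
        _ ≤ ε * t := h2
    have h4 : |t * l.im| = t * |l.im| := by rw [abs_mul, abs_of_nonneg ht]
    have h6 : |t * l.im| - |(L t).im| ≤ |(L t).im - t * l.im| := by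
      rw [abs_sub_comm]
      exact abs_sub_abs_le_abs_sub _ _
    have h5 : t * |l.im| - ε * t ≤ |(L t).im| := by
      rw [← h4]
      linarith
    have h7 : |(L t).im| ≤ |θ₀ t| + |Complex.arg (w 0)| := by
      have he : (L t).im = θ₀ t - Complex.arg (w 0) := by
        show (L t).im = Complex.arg (w 0) + (L t).im - Complex.arg (w 0)
        ring
      rw [he]
      calc |θ₀ t - Complex.arg (w 0)| = |θ₀ t + -(Complex.arg (w 0))| := by
            rw [sub_eq_add_neg]
        _ ≤ |θ₀ t| + |-(Complex.arg (w 0))| := abs_add_le _ _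
        _ = |θ₀ t| + |Complex.arg (w 0)| := by rw [abs_neg]
    have h9 : ε * t ≤ (|l.im|/2) * t := mul_le_mul_of_nonneg_right hε2 ht
    linarith
  refine ⟨htend, hne, ?_⟩
  -- the argument part
  intro θ hθcont hθrep
  have hdvals : ∀ t ∈ Ici (0:ℝ), ∃ n : ℤ, θ t - θ₀ t = 2 * Real.pi * n := by
    intro t ht
    have h1 := hθrep t ht
    have h2 := hθ₀rep t ht
    have habsne : ((‖w t‖ : ℝ) : ℂ) ≠ 0 := by
      simp only [ne_eq, Complex.ofReal_eq_zero, norm_eq_zero]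
      exact hwne t ht
    have hexpeq : Complex.exp ((θ t : ℂ) * Complex.I)
        = Complex.exp ((θ₀ t : ℂ) * Complex.I) :=
      mul_left_cancel₀ habsne (by rw [← h1, ← h2])
    rcases Complex.exp_eq_exp_iff_exists_int.mp hexpeq with ⟨n, hn⟩
    refine ⟨n, ?_⟩
    have h3 : ((θ t - θ₀ t - 2*Real.pi*n : ℝ) : ℂ) * Complex.I = 0 := by
      push_cast
      linear_combination hn
    have h4 : ((θ t - θ₀ t - 2*Real.pi*n : ℝ) : ℂ) = 0 := by
      rcases mul_eq_zero.mp h3 with h | h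
      · exact h
      · exact absurd h Complex.I_ne_zero
    have h5 : θ t - θ₀ t - 2*Real.pi*n = 0 := by exact_mod_cast h4
    linarith
  have hπ := Real.pi_pos
  have hdconst : ∀ t ∈ Ici (0:ℝ), θ t - θ₀ t = θ 0 - θ₀ 0 := by
    intro t ht
    by_contra hne'
    obtain ⟨n, hn⟩ := hdvals t ht
    obtain ⟨n0, hn0⟩ := hdvals 0 Set.self_mem_Ici
    have hdcont : ContinuousOn (fun s => θ s - θ₀ s) (Icc 0 t) :=
      (hθcont.sub hθ₀cont).mono (fun x hx => hx.1)
    rcases lt_or_gt_of_ne hne' with h | h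
    · -- θ t - θ₀ t < θ 0 - θ₀ 0
      have hdn' : ((n:ℝ)) < n0 := by
        have h2 : 2*Real.pi*n < 2*Real.pi*n0 := by rw [← hn, ← hn0]; exact h
        nlinarith
      have hzn : (n:ℝ) + 1 ≤ n0 := by exact_mod_cast (by exact_mod_cast hdn' : n < n0)
      have hsep : θ t - θ₀ t ≤ (θ 0 - θ₀ 0) - 2 * Real.pi := by
        rw [hn, hn0]; nlinarith
      have hv : (θ 0 - θ₀ 0) - Real.pi ∈ Icc (θ t - θ₀ t) (θ 0 - θ₀ 0) :=
        ⟨by linarith, by linarith⟩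
      obtain ⟨s, hs, hsv⟩ := intermediate_value_Icc' ht hdcont hv
      obtain ⟨m, hm⟩ := hdvals s hs.1
      have hsv' : θ s - θ₀ s = (θ 0 - θ₀ 0) - Real.pi := hsv
      have hpq : Real.pi * ((2*m - 2*n0 + 1 : ℤ) : ℝ) = Real.pi * 0 := by
        push_cast
        rw [hm] at hsv'
        rw [hn0] at hsv'
        linarith
      have h10 : ((2*m - 2*n0 + 1 : ℤ) : ℝ) = 0 := mul_left_cancel₀ hπ.ne' hpq
      have : (2*m - 2*n0 + 1 : ℤ) = 0 := by exact_mod_cast h10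
      omega
    · -- θ t - θ₀ t > θ 0 - θ₀ 0
      have hdn' : ((n0:ℝ)) < n := by
        have h2 : 2*Real.pi*n0 < 2*Real.pi*n := by rw [← hn, ← hn0]; exact h
        nlinarith
      have hzn : (n0:ℝ) + 1 ≤ n := by exact_mod_cast (by exact_mod_cast hdn' : n0 < n)
      have hsep : (θ 0 - θ₀ 0) + 2 * Real.pi ≤ θ t - θ₀ t := by
        rw [hn, hn0]; nlinarith
      have hv : (θ 0 - θ₀ 0) + Real.pi ∈ Icc (θ 0 - θ₀ 0) (θ t - θ₀ t) :=
        ⟨by linarith, by linarith⟩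
      obtain ⟨s, hs, hsv⟩ := intermediate_value_Icc ht hdcont hv
      obtain ⟨m, hm⟩ := hdvals s hs.1
      have hsv' : θ s - θ₀ s = (θ 0 - θ₀ 0) + Real.pi := hsv
      have hpq : Real.pi * ((2*m - 2*n0 - 1 : ℤ) : ℝ) = Real.pi * 0 := by
        push_cast
        rw [hm] at hsv'
        rw [hn0] at hsv'
        linarith
      have h10 : ((2*m - 2*n0 - 1 : ℤ) : ℝ) = 0 := mul_left_cancel₀ hπ.ne' hpq
      have : (2*m - 2*n0 - 1 : ℤ) = 0 := by exact_mod_cast h10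
      omega
  -- conclusion
  have hlin : Tendsto
      (fun t => (|l.im|/2) * t - (|Complex.arg (w 0)| + |θ 0 - θ₀ 0|)) atTop atTop := by
    apply tendsto_atTop_add_const_right
    exact Tendsto.const_mul_atTop (by linarith) tendsto_id
  apply tendsto_atTop_mono' atTop ?_ hlin
  filter_upwards [eventually_ge_atTop (0:ℝ)] with t ht
  have hθt : θ t = θ₀ t + (θ 0 - θ₀ 0) := by
    have := hdconst t ht
    linarith
  have h11 : |θ₀ t| - |θ 0 - θ₀ 0| ≤ |θ t| := by
    rw [hθt]
    have h12 := abs_add_le (θ₀ t + (θ 0 - θ₀ 0)) (-(θ 0 - θ₀ 0))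
    rw [abs_neg] at h12
    simp only [add_neg_cancel_right] at h12
    linarith
  linarith [hθ₀low t ht]
end

section
/- Let Ω ⊆ ℂ be open and connected, F holomorphic on Ω with F ≢ 0, and a ∈ Ω an equilibrium with Re F′(a) = 0 and Im F′(a) ≠ 0. Then a is a center or a focus; precisely, there exists δ > 0 such that at least one of the following holds: (a) every maximal solution of ẋ = F(x) through a point of { y : 0 < |y − a| < δ } is a nonconstant periodic solution γ : ℝ → Ω; (b) every solution γ : [0,∞) → Ω with 0 < |γ(0) − a| < δ satisfies γ(t) → a as t → ∞ and every continuous θ : [0,∞) → ℝ with γ(t) − a = |γ(t) − a|·e^{iθ(t)} has |θ(t)| → ∞; (c) the statement of (b) with [0,∞) replaced by (−∞,0] and t → ∞ replaced by t → −∞. -/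
open Set Filter Topology
open scoped ENNReal NNReal

/-- A holomorphic (analytic) function has a primitive on a small ball. -/
lemma exists_primitive_ball {h : ℂ → ℂ} {a : ℂ} (hh : AnalyticAt ℂ h a) :
    ∃ ρ : ℝ, 0 < ρ ∧ ∃ u : ℂ → ℂ, ∀ z ∈ Metric.ball a ρ, HasDerivAt u (h z) z := by
  obtain ⟨p, r, hp⟩ := hh
  obtain ⟨ρ, hρ0, hρr⟩ := ENNReal.lt_iff_exists_nnreal_btwn.1 hp.r_pos
  have hρpos : (0 : ℝ) < ρ := by exact_mod_cast hρ0
  set g : ℕ → ℂ → ℂ := fun n z => (p.coeff n / (n + 1)) * (z - a) ^ (n + 1) with hg_def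
  set g' : ℕ → ℂ → ℂ := fun n z => p.coeff n * (z - a) ^ n with hg'_def
  have hsum : Summable (fun n : ℕ => ‖p n‖ * (ρ : ℝ) ^ n) :=
    p.summable_norm_mul_pow (hρr.trans_le hp.r_le)
  have hgderiv : ∀ (n : ℕ) (z : ℂ), HasDerivAt (g n) (g' n z) z := by
    intro n z
    have h1 : HasDerivAt (fun z : ℂ => (z - a) ^ (n + 1))
        ((n + 1 : ℕ) * (z - a) ^ n * 1) z := by
      simpa using (((hasDerivAt_id z).sub_const a).fun_pow (n + 1))
    have h2 := h1.const_mul (p.coeff n / (n + 1))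
    refine h2.congr_deriv ?_
    have hne : ((n : ℂ) + 1) ≠ 0 := Nat.cast_add_one_ne_zero n
    simp only [hg'_def]
    push_cast
    field_simp
  have hbound : ∀ (n : ℕ), ∀ z ∈ Metric.ball a (ρ : ℝ), ‖g' n z‖ ≤ ‖p n‖ * (ρ : ℝ) ^ n := by
    intro n z hz
    have hz' : ‖z - a‖ ≤ (ρ : ℝ) := by
      rw [Metric.mem_ball, dist_eq_norm] at hz; exact hz.le
    calc ‖g' n z‖ = ‖p.coeff n‖ * ‖z - a‖ ^ n := by simp [hg'_def, norm_mul, norm_pow]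
    _ ≤ ‖p.coeff n‖ * (ρ : ℝ) ^ n := by
        gcongr
    _ = ‖p n‖ * (ρ : ℝ) ^ n := by rw [p.norm_apply_eq_norm_coef]
  have hsum0 : Summable fun n => g n a := by
    apply summable_of_ne_finset_zero (s := ∅)
    intro n _
    simp [hg_def]
  refine ⟨ρ, hρpos, fun z => ∑' n, g n z, fun z hz => ?_⟩
  have hd := hasDerivAt_tsum_of_isPreconnected hsum Metric.isOpen_ball
    ((convex_ball a (ρ:ℝ)).isPreconnected) (fun n y hy => hgderiv n y) hbound
    (Metric.mem_ball_self hρpos) hsum0 hz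
  have hzE : z ∈ Metric.eball a r := by
    have : z ∈ Metric.eball a (ρ : ℝ≥0∞) := by
      rwa [Metric.emetric_ball_nnreal]
    exact Metric.eball_subset_eball hρr.le this
  have hsumh : HasSum (fun n : ℕ => p n fun _ => z - a) (h z) := hp.hasSum_sub hzE
  have : (fun n : ℕ => p n fun _ => z - a) = fun n => g' n z := by
    funext n
    rw [p.apply_eq_pow_smul_coeff, smul_eq_mul, hg'_def]
    ring
  rw [this] at hsumh
  rwa [hsumh.tsum_eq] at hd

/-- Local linearizing chart for a holomorphic vector field near a simple equilibrium. -/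
lemma exists_chart {Ω : Set ℂ} (hΩ : IsOpen Ω) {F : ℂ → ℂ} (hF : DifferentiableOn ℂ F Ω)
    {a : ℂ} (ha : a ∈ Ω) (hFa : F a = 0) (hc : deriv F a ≠ 0) :
    ∃ (ψ ψd : ℂ → ℂ) (ρ : ℝ), 0 < ρ ∧ Metric.ball a ρ ⊆ Ω ∧ ψ a = 0 ∧
      HasStrictDerivAt ψ (ψd a) a ∧
      ∀ z ∈ Metric.ball a ρ,
        HasDerivAt ψ (ψd z) z ∧ ψd z ≠ 0 ∧ ψd z * F z = deriv F a * ψ z := by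
  obtain ⟨r₀, hr₀, hball⟩ := Metric.mem_nhds_iff.1 (hΩ.mem_nhds ha)
  have hFB : DifferentiableOn ℂ F (Metric.ball a r₀) := hF.mono hball
  have hnb : Metric.ball a r₀ ∈ 𝓝 a := Metric.ball_mem_nhds a hr₀
  set G : ℂ → ℂ := dslope F a with hG_def
  have hGB : DifferentiableOn ℂ G (Metric.ball a r₀) :=
    (Complex.differentiableOn_dslope hnb).2 hFB
  set H : ℂ → ℂ := dslope G a with hH_def
  have hHB : DifferentiableOn ℂ H (Metric.ball a r₀) :=
    (Complex.differentiableOn_dslope hnb).2 hGB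
  have hGa : G a = deriv F a := dslope_same F a
  have hGa0 : G a ≠ 0 := hGa ▸ hc
  have hGanal : AnalyticAt ℂ G a := hGB.analyticAt hnb
  have hHanal : AnalyticAt ℂ H a := hHB.analyticAt hnb
  set h : ℂ → ℂ := fun z => -(H z / G z) with hh_def
  have hhanal : AnalyticAt ℂ h a := (hHanal.div hGanal hGa0).neg
  obtain ⟨ρ₂, hρ₂, u, hu⟩ := exists_primitive_ball hhanal
  set ψ : ℂ → ℂ := fun z => (z - a) * Complex.exp (u z) with hψ_def
  set ψd : ℂ → ℂ := fun z => Complex.exp (u z) * (1 + (z - a) * h z) with hψd_def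
  have hψa : ψ a = 0 := by simp [hψ_def]
  have hψderiv : ∀ z ∈ Metric.ball a ρ₂, HasDerivAt ψ (ψd z) z := by
    intro z hz
    have h1 : HasDerivAt (fun w : ℂ => w - a) 1 z := (hasDerivAt_id z).sub_const a
    have h2 : HasDerivAt (fun w : ℂ => Complex.exp (u w)) (Complex.exp (u z) * h z) z :=
      (hu z hz).cexp
    have := h1.fun_mul h2
    refine this.congr_deriv ?_
    simp [hψd_def]
    ring
  -- the set where everything is good
  have hcontG : ContinuousAt G a := hGanal.continuousAt
  have hcontH : ContinuousAt h a := hhanal.continuousAt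
  have hev : ∀ᶠ z in 𝓝 a, G z ≠ 0 ∧ (1 + (z - a) * h z) ≠ 0 := by
    have e1 : ∀ᶠ z in 𝓝 a, G z ≠ 0 := hcontG.eventually_ne hGa0
    have e2 : ContinuousAt (fun z => 1 + (z - a) * h z) a := by
      exact continuousAt_const.add ((continuousAt_id.sub continuousAt_const).mul hcontH)
    have e3 : ∀ᶠ z in 𝓝 a, (1 + (z - a) * h z) ≠ 0 := by
      apply e2.eventually_ne
      simp
    exact e1.and e3
  obtain ⟨ρ₃', hρ₃', hsub⟩ := Metric.mem_nhds_iff.1 hev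
  set ρ : ℝ := min ρ₃' (min ρ₂ r₀) with hρ_def
  have hρpos : 0 < ρ := lt_min hρ₃' (lt_min hρ₂ hr₀)
  have hsub1 : Metric.ball a ρ ⊆ Metric.ball a ρ₃' := Metric.ball_subset_ball (min_le_left _ _)
  have hsub2 : Metric.ball a ρ ⊆ Metric.ball a ρ₂ :=
    Metric.ball_subset_ball ((min_le_right _ _).trans (min_le_left _ _))
  have hsub3 : Metric.ball a ρ ⊆ Ω := fun z hz => hball
    (Metric.ball_subset_ball ((min_le_right _ _).trans (min_le_right _ _)) hz)
  -- strict derivative at a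
  have hψanal : AnalyticAt ℂ ψ a := by
    have hudiff : DifferentiableOn ℂ u (Metric.ball a ρ₂) := fun z hz =>
      (hu z hz).differentiableAt.differentiableWithinAt
    have huanal : AnalyticAt ℂ u a := hudiff.analyticAt (Metric.ball_mem_nhds a hρ₂)
    exact ((analyticAt_id.sub analyticAt_const).mul
      (analyticAt_cexp.comp huanal))
  have hstrict : HasStrictDerivAt ψ (ψd a) a := by
    obtain ⟨p, hp⟩ := hψanal
    have h1 := hp.hasStrictDerivAt
    have h2 := hp.hasDerivAt
    have h3 := hψderiv a (Metric.mem_ball_self hρ₂)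
    rwa [h2.unique h3] at h1
  refine ⟨ψ, ψd, ρ, hρpos, hsub3, hψa, hstrict, fun z hz => ?_⟩
  obtain ⟨hGz, hfac⟩ := hsub (hsub1 hz)
  refine ⟨hψderiv z (hsub2 hz), ?_, ?_⟩
  · exact mul_ne_zero (Complex.exp_ne_zero _) hfac
  · -- key identity
    have e1 : (z - a) * G z = F z := by
      have := sub_smul_dslope F a z
      rw [smul_eq_mul, hFa, sub_zero] at this
      exact this
    have e2 : (z - a) * H z = G z - deriv F a := by
      have := sub_smul_dslope G a z
      rw [smul_eq_mul, hGa] at this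
      exact this
    have key : (1 + (z - a) * h z) * G z = deriv F a := by
      simp only [hh_def]
      field_simp
      linear_combination -e2
    calc ψd z * F z = Complex.exp (u z) * ((1 + (z - a) * h z) * G z) * (z - a) := by
          rw [← e1, hψd_def]; ring
      _ = deriv F a * ψ z := by rw [key, hψ_def]; ring

/-- If `Re F'(a) = 0` and `Im F'(a) ≠ 0` at an equilibrium `a` of a holomorphic
flow, then `a` is a center or a (stable or unstable) focus. -/
theorem stmt_4 (Ω : Set ℂ) (hΩ : IsOpen Ω) (hconn : IsConnected Ω)
    (F : ℂ → ℂ) (hF : DifferentiableOn ℂ F Ω) (hF0 : ∃ z ∈ Ω, F z ≠ 0)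
    (a : ℂ) (ha : a ∈ Ω) (hFa : F a = 0)
    (hre : (deriv F a).re = 0) (him : (deriv F a).im ≠ 0) :
    ∃ δ > 0,
      -- (a) center: through every point of the punctured δ-ball there is a nonconstant
      -- periodic global solution (hence every maximal solution there is such)
      ((∀ y : ℂ, 0 < dist y a → dist y a < δ →
        ∃ γ : ℝ → ℂ, IsSolOn F Ω univ γ ∧ γ 0 = y ∧
          (∃ T > 0, ∀ t : ℝ, γ (t + T) = γ t) ∧ (∃ t s : ℝ, γ t ≠ γ s)) ∨
      -- (b) stable focus
      (∀ γ : ℝ → ℂ, IsSolOn F Ω (Ici 0) γ → 0 < dist (γ 0) a → dist (γ 0) a < δ →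
        Tendsto γ atTop (nhds a) ∧
        ∀ θ : ℝ → ℝ, ContinuousOn θ (Ici 0) →
          (∀ t ∈ Ici (0 : ℝ), γ t - a =
            ((‖γ t - a‖ : ℝ) : ℂ) * Complex.exp ((θ t : ℂ) * Complex.I)) →
          Tendsto (fun t => |θ t|) atTop atTop) ∨
      -- (c) unstable focus
      (∀ γ : ℝ → ℂ, IsSolOn F Ω (Iic 0) γ → 0 < dist (γ 0) a → dist (γ 0) a < δ →
        Tendsto γ atBot (nhds a) ∧
        ∀ θ : ℝ → ℝ, ContinuousOn θ (Iic 0) →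
          (∀ t ∈ Iic (0 : ℝ), γ t - a =
            ((‖γ t - a‖ : ℝ) : ℂ) * Complex.exp ((θ t : ℂ) * Complex.I)) →
          Tendsto (fun t => |θ t|) atBot atTop)) := by
  set c := deriv F a with hc_def
  have hc0 : c ≠ 0 := by
    intro h
    apply him
    rw [h]
    simp
  obtain ⟨ψ, ψd, ρ₃, hρ₃, hsubΩ, hψa, hstrict, hgood⟩ := exists_chart hΩ hF ha hFa hc0
  have hψda : ψd a ≠ 0 := (hgood a (Metric.mem_ball_self hρ₃)).2.1
  set e0 := (hstrict.hasStrictFDerivAt_equiv hψda).toOpenPartialHomeomorph ψ with he0_def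
  have he0coe : ⇑e0 = ψ := (hstrict.hasStrictFDerivAt_equiv hψda).toOpenPartialHomeomorph_coe
  set e := e0.restrOpen (Metric.ball a ρ₃) Metric.isOpen_ball with he_def
  have hecoe : ⇑e = ψ := he0coe
  have hesymm : ⇑e.symm = ⇑e0.symm := rfl
  have hesrc : e.source = e0.source ∩ Metric.ball a ρ₃ :=
    e0.restrOpen_source _ _
  have hae : a ∈ e.source := by
    rw [hesrc]
    exact ⟨(hstrict.hasStrictFDerivAt_equiv hψda).mem_toOpenPartialHomeomorph_source,
      Metric.mem_ball_self hρ₃⟩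
  have hsourceball : e.source ⊆ Metric.ball a ρ₃ := by
    rw [hesrc]; exact inter_subset_right
  have h0t : (0 : ℂ) ∈ e.target := by
    have := e.map_source hae
    rwa [hecoe, hψa] at this
  obtain ⟨ρ, hρ, hballt⟩ := Metric.mem_nhds_iff.1 (e.open_target.mem_nhds h0t)
  have hψcont : ContinuousAt ψ a := hstrict.hasDerivAt.continuousAt
  have hN : e.source ∩ ψ ⁻¹' Metric.ball 0 ρ ∈ 𝓝 a := by
    apply Filter.inter_mem (e.open_source.mem_nhds hae)
    apply hψcont.preimage_mem_nhds
    rw [hψa] at *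
    exact Metric.ball_mem_nhds 0 hρ
  obtain ⟨δ, hδ, hδsub⟩ := Metric.mem_nhds_iff.1 hN
  refine ⟨δ, hδ, Or.inl ?_⟩
  intro y hy0 hyδ
  obtain ⟨hys, hyw⟩ := hδsub (show y ∈ Metric.ball a δ from Metric.mem_ball.2 hyδ)
  set w := ψ y with hw_def
  have hw0 : w ≠ 0 := by
    intro hw
    have hya : y = a := by
      apply e.injOn hys hae
      rw [hecoe, hψa, ← hw_def, hw]
    rw [hya] at hy0
    simp at hy0
  have hwρ : ‖w‖ < ρ := by
    have := hyw
    rwa [mem_preimage, Metric.mem_ball, Complex.dist_eq, sub_zero] at this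
  set wt : ℝ → ℂ := fun t => Complex.exp (t * c) * w with hwt_def
  have habs : ∀ t, ‖wt t‖ = ‖w‖ := by
    intro t
    have hr : ((t : ℂ) * c).re = 0 := by
      simp [Complex.mul_re, ← hc_def, hre]
    rw [hwt_def]
    simp only [norm_mul, Complex.norm_exp, hr, Real.exp_zero, one_mul]
  have hwt_t : ∀ t, wt t ∈ e.target := by
    intro t
    apply hballt
    rw [Metric.mem_ball, Complex.dist_eq, sub_zero, habs]
    exact hwρ
  set γ : ℝ → ℂ := fun t => e.symm (wt t) with hγ_def
  have hγsrc : ∀ t, γ t ∈ e.source := fun t => e.map_target (hwt_t t)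
  have hψγ : ∀ t, ψ (γ t) = wt t := by
    intro t
    rw [← hecoe]
    exact e.right_inv (hwt_t t)
  have hderiv : ∀ t, HasDerivAt γ (F (γ t)) t := by
    intro t
    have hzball := hsourceball (hγsrc t)
    obtain ⟨hψz, hψdz, hid⟩ := hgood (γ t) hzball
    have hgcont : ContinuousAt e.symm (wt t) := e.continuousAt_symm (hwt_t t)
    have hfg : ∀ᶠ v in 𝓝 (wt t), ψ (e.symm v) = v := by
      filter_upwards [e.open_target.mem_nhds (hwt_t t)] with v hv
      rw [← hecoe]
      exact e.right_inv hv
    have hinv : HasDerivAt e.symm (ψd (γ t))⁻¹ (wt t) :=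
      HasDerivAt.of_local_left_inverse hgcont hψz hψdz hfg
    have hwtd : HasDerivAt wt (c * wt t) t := by
      have h2 : HasDerivAt (fun s : ℝ => Complex.exp ((s : ℂ) * c) * w)
          (Complex.exp ((t : ℂ) * c) * (1 * c) * w) t :=
        ((((hasDerivAt_id ((t : ℂ))).mul_const c).cexp).mul_const w).comp_ofReal
      convert h2 using 1
      rw [hwt_def]
      simp only
      ring
    have hcomp := hinv.comp t hwtd
    have : HasDerivAt γ ((ψd (γ t))⁻¹ * (c * wt t)) t := hcomp
    convert this using 1
    rw [← hψγ t]
    rw [← hc_def] at hid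
    field_simp
    linear_combination hid
  have hγΩ : ∀ t, γ t ∈ Ω := fun t => hsubΩ (hsourceball (hγsrc t))
  refine ⟨γ, fun t _ => ⟨hγΩ t, (hderiv t).hasDerivWithinAt⟩, ?_, ?_, ?_⟩
  · -- γ 0 = y
    have : wt 0 = w := by
      rw [hwt_def]
      simp
    rw [hγ_def]
    simp only [this]
    have : e y = w := by rw [hecoe]
    rw [← this]
    exact e.left_inv hys
  · -- periodicity
    set T : ℝ := 2 * Real.pi / |c.im| with hT_def
    have hT : 0 < T := div_pos Real.two_pi_pos (abs_pos.2 him)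
    refine ⟨T, hT, fun t => ?_⟩
    have hcI : c = (c.im : ℂ) * Complex.I := by
      apply Complex.ext <;> simp [← hc_def, hre]
    have hexpT : Complex.exp ((T : ℂ) * c) = 1 := by
      rw [hcI]
      have : (T : ℂ) * ((c.im : ℂ) * Complex.I) = ((T * c.im : ℝ) : ℂ) * Complex.I := by
        push_cast
        ring
      rw [this]
      rcases him.lt_or_gt with hneg | hpos
      · have : T * c.im = -(2 * Real.pi) := by
          rw [hT_def, abs_of_neg hneg, div_neg, neg_mul, div_mul_cancel₀ _ him]
        rw [this]
        push_cast
        rw [show (-(2 * (Real.pi : ℂ))) * Complex.I = -(2 * (Real.pi : ℂ) * Complex.I) by ring,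
          Complex.exp_neg, Complex.exp_two_pi_mul_I, inv_one]
      · have : T * c.im = 2 * Real.pi := by
          rw [hT_def, abs_of_pos hpos, div_mul_cancel₀ _ him]
        rw [this]
        push_cast
        exact Complex.exp_two_pi_mul_I
    have : wt (t + T) = wt t := by
      rw [hwt_def]
      simp only
      have : ((t + T : ℝ) : ℂ) * c = (t : ℂ) * c + (T : ℂ) * c := by
        push_cast
        ring
      rw [this, Complex.exp_add, hexpT, mul_one]
    rw [hγ_def]
    simp only [this]
  · -- nonconstant
    set T : ℝ := Real.pi / |c.im| with hT_def
    refine ⟨T, 0, fun h => ?_⟩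
    have hcI : c = (c.im : ℂ) * Complex.I := by
      apply Complex.ext <;> simp [← hc_def, hre]
    have hexpT : Complex.exp ((T : ℂ) * c) = -1 := by
      rw [hcI]
      have : (T : ℂ) * ((c.im : ℂ) * Complex.I) = ((T * c.im : ℝ) : ℂ) * Complex.I := by
        push_cast
        ring
      rw [this]
      rcases him.lt_or_gt with hneg | hpos
      · have : T * c.im = -Real.pi := by
          rw [hT_def, abs_of_neg hneg, div_neg, neg_mul, div_mul_cancel₀ _ him]
        rw [this]
        push_cast
        rw [show (-(Real.pi : ℂ)) * Complex.I = -((Real.pi : ℂ) * Complex.I) by ring,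
          Complex.exp_neg, Complex.exp_pi_mul_I]
        norm_num
      · have : T * c.im = Real.pi := by
          rw [hT_def, abs_of_pos hpos, div_mul_cancel₀ _ him]
        rw [this]
        exact Complex.exp_pi_mul_I
    have h1 : ψ (γ T) = -w := by
      rw [hψγ T, hwt_def]
      simp only [hexpT]
      ring
    have h2 : ψ (γ 0) = w := by
      rw [hψγ 0, hwt_def]
      simp
    rw [h, h2] at h1
    apply hw0
    have h2w : (2 : ℂ) * w = 0 := by linear_combination h1
    simpa using h2w
end

section
/- Let Ω ⊆ ℂ be open and connected, F holomorphic on Ω with F ≢ 0, and a ∈ Ω an equilibrium with F′(a) ≠ 0. Then a cannot be a saddle: there exists δ₀ > 0 such that for every δ ∈ (0, δ₀] there exist a point y with 0 < |y − a| < δ and a solution γ of ẋ = F(x) with γ(0) = y, defined on [0,∞) or on (−∞,0], whose image is contained in { x : |x − a| < δ }. -/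
open Set Filter Topology

/-- Every function analytic at a point has a local primitive on a small ball. -/
lemma exists_local_primitive {g : ℂ → ℂ} {a : ℂ} (hg : AnalyticAt ℂ g a) :
    ∃ ρ > (0:ℝ), ∃ G : ℂ → ℂ, ∀ z ∈ Metric.ball a ρ, HasDerivAt G (g z) z := by
  obtain ⟨p, hp⟩ := hg
  have hsum := hasFPowerSeriesAt_iff'.mp hp
  rw [Metric.eventually_nhds_iff] at hsum
  obtain ⟨ρ₁, hρ₁, hsum⟩ := hsum
  obtain ⟨r, hr0, hrρ⟩ := ENNReal.lt_iff_exists_nnreal_btwn.mp hp.radius_pos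
  obtain ⟨C, hC, hCoef⟩ := p.norm_mul_pow_le_of_lt_radius hrρ
  have hr0' : (0:ℝ) < r := by exact_mod_cast (ENNReal.coe_pos.mp hr0)
  set ρ : ℝ := min ρ₁ ((r:ℝ)/2) with hρdef
  have hρ0 : 0 < ρ := lt_min hρ₁ (by positivity)
  set c : ℕ → ℂ := fun n => p.coeff n with hc
  set f : ℕ → ℂ → ℂ := fun n z => ((n:ℂ)+1)⁻¹ * c n * (z - a)^(n+1) with hf
  set f' : ℕ → ℂ → ℂ := fun n z => c n * (z - a)^n with hf'
  have hd : ∀ n z, HasDerivAt (f n) (f' n z) z := by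
    intro n z
    have h1 : HasDerivAt (fun z : ℂ => (z - a)^(n+1))
        (((n:ℂ)+1) * (z - a)^n * 1) z := by
      simpa [Pi.pow_def] using (((hasDerivAt_id z).sub_const a).pow (n+1))
    have := h1.const_mul (((n:ℂ)+1)⁻¹ * c n)
    refine this.congr_deriv ?_
    have hne : ((n:ℂ)+1) ≠ 0 := Nat.cast_add_one_ne_zero n
    rw [hf']
    field_simp
  have hbound : ∀ n z, z ∈ Metric.ball a ρ → ‖f' n z‖ ≤ C * (1/2)^n := by
    intro n z hz
    have hza : ‖z - a‖ ≤ (r:ℝ)/2 := by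
      have : dist z a < ρ := Metric.mem_ball.mp hz
      rw [dist_eq_norm] at this
      exact le_of_lt (lt_of_lt_of_le this (min_le_right _ _))
    have h1 : ‖f' n z‖ ≤ ‖c n‖ * ((r:ℝ)/2)^n := by
      rw [hf']
      simp only [norm_mul, norm_pow]
      exact mul_le_mul_of_nonneg_left (pow_le_pow_left₀ (norm_nonneg _) hza n)
        (norm_nonneg _)
    have h2 : ‖c n‖ * ((r:ℝ)/2)^n = (‖p n‖ * (r:ℝ)^n) * (1/2)^n := by
      rw [hc, p.norm_apply_eq_norm_coef, div_pow]
      beta_reduce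
      ring_nf
      rw [one_div]
    calc ‖f' n z‖ ≤ (‖p n‖ * (r:ℝ)^n) * (1/2)^n := by rw [← h2]; exact h1
      _ ≤ C * (1/2)^n := by
          apply mul_le_mul_of_nonneg_right _ (by positivity)
          exact hCoef n
  have hu : Summable (fun n : ℕ => C * (1/2:ℝ)^n) :=
    (summable_geometric_of_lt_one (by norm_num) (by norm_num)).mul_left C
  have h0 : Summable fun n => f n a := by
    have : (fun n => f n a) = fun _ => (0:ℂ) := by
      funext n; simp [hf]
    rw [this]; exact summable_zero
  refine ⟨ρ, hρ0, fun z => ∑' n, f n z, fun z hz => ?_⟩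
  have hder := hasDerivAt_tsum_of_isPreconnected hu Metric.isOpen_ball
    (convex_ball a ρ).isPreconnected (fun n y hy => hd n y)
    (fun n y hy => hbound n y hy) (Metric.mem_ball_self hρ0) h0 hz
  have hgz : g z = ∑' n, f' n z := by
    have hzρ : dist z a < ρ₁ := lt_of_lt_of_le (Metric.mem_ball.mp hz) (min_le_left _ _)
    have := hsum hzρ
    have h2 : (fun n => (z - a)^n • p.coeff n) = fun n => f' n z := by
      funext n; simp [hf', hc, smul_eq_mul, mul_comm]
    rw [h2] at this
    exact this.tsum_eq.symm
  rw [hgz]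
  exact hder

/-- An equilibrium `a` with `F'(a) ≠ 0` of a holomorphic flow cannot be a
saddle: for all small `δ`, some orbit starting in the punctured `δ`-ball stays in the
`δ`-ball for all forward times or for all backward times. -/
theorem stmt_5 (Ω : Set ℂ) (hΩ : IsOpen Ω) (hconn : IsConnected Ω)
    (F : ℂ → ℂ) (hF : DifferentiableOn ℂ F Ω) (hF0 : ∃ z ∈ Ω, F z ≠ 0)
    (a : ℂ) (ha : a ∈ Ω) (hFa : F a = 0) (hne : deriv F a ≠ 0) :
    ∃ δ₀ > 0, ∀ δ : ℝ, 0 < δ → δ ≤ δ₀ →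
      ∃ y : ℂ, 0 < dist y a ∧ dist y a < δ ∧
        ((∃ γ : ℝ → ℂ, IsSolOn F Ω (Ici 0) γ ∧ γ 0 = y ∧
            ∀ t ∈ Ici (0 : ℝ), dist (γ t) a < δ) ∨
         (∃ γ : ℝ → ℂ, IsSolOn F Ω (Iic 0) γ ∧ γ 0 = y ∧
            ∀ t ∈ Iic (0 : ℝ), dist (γ t) a < δ)) := by
  set lam := deriv F a with hlamdef
  have hFan : AnalyticAt ℂ F a := hF.analyticAt (hΩ.mem_nhds ha)
  set k := dslope F a with hkdef
  have hkan : AnalyticAt ℂ k a := by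
    obtain ⟨p, hp⟩ := hFan
    exact ⟨p.fslope, hp.has_fpower_series_dslope_fslope⟩
  set m := dslope k a with hmdef
  have hman : AnalyticAt ℂ m a := by
    obtain ⟨q, hq⟩ := hkan
    exact ⟨q.fslope, hq.has_fpower_series_dslope_fslope⟩
  have hka : k a = lam := dslope_same F a
  set g : ℂ → ℂ := fun z => -(m z / k z) with hgdef
  have hgan : AnalyticAt ℂ g a := (hman.div hkan (by rw [hka]; exact hne)).neg
  obtain ⟨ρ, hρ0, G, hG⟩ := exists_local_primitive hgan
  -- choose r > 0 such that ball a r ⊆ Ω ∩ ball a ρ ∩ {k ≠ 0}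
  have hknz : ∀ᶠ z in 𝓝 a, k z ≠ 0 :=
    hkan.continuousAt.eventually_ne (by rw [hka]; exact hne)
  have hmem : (Ω ∩ Metric.ball a ρ) ∩ {z | k z ≠ 0} ∈ 𝓝 a := by
    refine Filter.inter_mem (Filter.inter_mem (hΩ.mem_nhds ha)
      (Metric.ball_mem_nhds a hρ0)) hknz
  obtain ⟨r, hr0, hrsub⟩ := Metric.mem_nhds_iff.mp hmem
  have hballΩ : Metric.ball a r ⊆ Ω := fun z hz => (hrsub hz).1.1
  have hballρ : Metric.ball a r ⊆ Metric.ball a ρ := fun z hz => (hrsub hz).1.2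
  have hballk : ∀ z ∈ Metric.ball a r, k z ≠ 0 := fun z hz => (hrsub hz).2
  -- the linearizing map ψ and its derivative D
  set ψ : ℂ → ℂ := fun z => (z - a) * Complex.exp (G z) with hψdef
  set D : ℂ → ℂ := fun z => Complex.exp (G z) * (1 + (z - a) * g z) with hDdef
  have hψd : ∀ z ∈ Metric.ball a r, HasDerivAt ψ (D z) z := by
    intro z hz
    have hGz : HasDerivAt G (g z) z := hG z (hballρ hz)
    have hexp : HasDerivAt (fun w => Complex.exp (G w))
        (Complex.exp (G z) * g z) z := (Complex.hasDerivAt_exp (G z)).comp z hGz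
    have hlin : HasDerivAt (fun w : ℂ => w - a) 1 z := (hasDerivAt_id z).sub_const a
    have := hlin.mul hexp
    refine this.congr_deriv ?_
    rw [hDdef]; ring
  have hkey : ∀ z ∈ Metric.ball a r, k z * (1 + (z - a) * g z) = lam := by
    intro z hz
    have hkz := hballk z hz
    have h1 : (z - a) * m z = k z - lam := by
      rw [← hka]
      simpa [smul_eq_mul] using sub_smul_dslope k a z
    rw [hgdef]
    field_simp
    linear_combination -h1
  have hFfac : ∀ z, F z = (z - a) * k z := by
    intro z
    have := sub_smul_dslope F a z
    rw [smul_eq_mul, hFa, sub_zero] at this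
    rw [← this, hkdef]
  have hFD : ∀ z ∈ Metric.ball a r, F z * D z = lam * ψ z := by
    intro z hz
    rw [hFfac z, hDdef, hψdef]
    have := hkey z hz
    linear_combination ((z - a) * Complex.exp (G z)) * this
  have hDne : ∀ z ∈ Metric.ball a r, D z ≠ 0 := by
    intro z hz
    have h1 : (1 + (z - a) * g z) ≠ 0 := by
      intro h
      have := hkey z hz
      rw [h, mul_zero] at this
      exact hne this.symm
    exact mul_ne_zero (Complex.exp_ne_zero _) h1
  have hψa : ψ a = 0 := by rw [hψdef]; simp
  have haball : a ∈ Metric.ball a r := Metric.mem_ball_self hr0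
  have hDa : D a ≠ 0 := hDne a haball
  -- strict derivative at a, local inverse
  have hψdiff : DifferentiableOn ℂ ψ (Metric.ball a r) :=
    fun z hz => (hψd z hz).differentiableAt.differentiableWithinAt
  have hψan : AnalyticAt ℂ ψ a := hψdiff.analyticAt (Metric.ball_mem_nhds a hr0)
  have hstrict : HasStrictDerivAt ψ (D a) a := by
    obtain ⟨pp, hpp⟩ := hψan
    have h1 := hpp.hasStrictDerivAt
    have h2 : (pp 1 fun _ => 1) = D a := hpp.hasDerivAt.unique (hψd a haball)
    rwa [h2] at h1
  set e := (hstrict.hasStrictFDerivAt_equiv hDa).toOpenPartialHomeomorph ψ with hedef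
  have hecoe : ∀ z, e z = ψ z := fun z => rfl
  have hasrc : a ∈ e.source :=
    (hstrict.hasStrictFDerivAt_equiv hDa).mem_toOpenPartialHomeomorph_source
  have hea : e a = 0 := by rw [hecoe, hψa]
  have h0tgt : (0 : ℂ) ∈ e.target := hea ▸ e.map_source hasrc
  have hsymm0 : e.symm 0 = a := by rw [← hea]; exact e.left_inv hasrc
  refine ⟨r, hr0, fun δ hδ0 hδr => ?_⟩
  -- find ε
  set U := Metric.ball a (min δ r) ∩ e.source with hUdef
  have hUopen : IsOpen U := Metric.isOpen_ball.inter e.open_source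
  have haU : a ∈ U := ⟨Metric.mem_ball_self (lt_min hδ0 hr0), hasrc⟩
  have hVmem : e.target ∩ e.symm ⁻¹' U ∈ 𝓝 (0 : ℂ) := by
    refine Filter.inter_mem (e.open_target.mem_nhds h0tgt) ?_
    have hcont : ContinuousAt e.symm 0 :=
      e.continuousAt_symm h0tgt
    exact hcont.preimage_mem_nhds (hsymm0 ▸ hUopen.mem_nhds (hsymm0 ▸ haU))
  obtain ⟨ε, hε0, hεsub⟩ := Metric.mem_nhds_iff.mp hVmem
  set ε' : ℝ := ε / 2 with hε'def
  have hε'0 : 0 < ε' := by positivity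
  have hsmall : ∀ w : ℂ, ‖w‖ ≤ ε' → w ∈ e.target ∩ e.symm ⁻¹' U := by
    intro w hw
    apply hεsub
    rw [Metric.mem_ball, dist_zero_right]
    exact lt_of_le_of_lt hw (by rw [hε'def]; linarith)
  set w₀ : ℂ := (ε' : ℂ) with hw₀def
  have hw₀norm : ‖w₀‖ = ε' := by
    rw [hw₀def, Complex.norm_real, Real.norm_eq_abs, abs_of_pos hε'0]
  have hw₀ne : w₀ ≠ 0 := by
    rw [hw₀def]
    exact_mod_cast ne_of_gt hε'0
  have hw₀mem := hsmall w₀ (le_of_eq hw₀norm)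
  set y := e.symm w₀ with hydef
  have hyU : y ∈ U := hw₀mem.2
  have hyne : y ≠ a := by
    intro h
    apply hw₀ne
    have hinj : Set.InjOn e.symm e.target := e.symm.injOn
    exact hinj hw₀mem.1 h0tgt (by rw [← hydef, h, hsymm0])
  have hydist : dist y a < δ :=
    lt_of_lt_of_le (Metric.mem_ball.mp hyU.1) (min_le_left _ _)
  -- the key construction
  have key : ∀ s : Set ℝ, (∀ t ∈ s, t * lam.re ≤ 0) →
      ∃ γ : ℝ → ℂ, IsSolOn F Ω s γ ∧ γ 0 = y ∧ ∀ t ∈ s, dist (γ t) a < δ := by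
    intro s hs
    set w : ℝ → ℂ := fun t => w₀ * Complex.exp (t * lam) with hwdef
    set γ : ℝ → ℂ := fun t => e.symm (w t) with hγdef
    have hwnorm : ∀ t ∈ s, ‖w t‖ ≤ ε' := by
      intro t ht
      rw [hwdef]
      simp only [norm_mul, Complex.norm_exp]
      have hre : ((t : ℂ) * lam).re = t * lam.re := by
        simp [Complex.mul_re]
      rw [hre]
      calc ‖w₀‖ * Real.exp (t * lam.re)
          ≤ ‖w₀‖ * Real.exp 0 :=
            mul_le_mul_of_nonneg_left (Real.exp_le_exp.mpr (hs t ht))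
              (norm_nonneg _)
        _ = ε' := by rw [Real.exp_zero, mul_one, hw₀norm]
    have hwmem : ∀ t ∈ s, w t ∈ e.target ∩ e.symm ⁻¹' U :=
      fun t ht => hsmall (w t) (hwnorm t ht)
    have hγU : ∀ t ∈ s, γ t ∈ U := fun t ht => (hwmem t ht).2
    have hγball : ∀ t ∈ s, γ t ∈ Metric.ball a r := by
      intro t ht
      exact Metric.ball_subset_ball (min_le_right δ r) (hγU t ht).1
    have hγ0 : γ 0 = y := by
      rw [hγdef, hwdef, hydef]
      norm_num
    refine ⟨γ, ?_, hγ0, ?_⟩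
    · intro t ht
      refine ⟨hballΩ (hγball t ht), ?_⟩
      have hwt : w t ∈ e.target := (hwmem t ht).1
      have hψγ : ψ (γ t) = w t := by
        rw [← hecoe]; exact e.right_inv hwt
      -- derivative of w as a function ℂ → ℂ
      have h1 : HasDerivAt (fun z : ℂ => w₀ * Complex.exp (z * lam))
          (w₀ * Complex.exp ((t : ℂ) * lam) * lam) (t : ℂ) := by
        have hin : HasDerivAt (fun z : ℂ => z * lam) lam (t : ℂ) := by
          simpa using (hasDerivAt_id ((t : ℂ))).mul_const lam
        have := ((Complex.hasDerivAt_exp ((t : ℂ) * lam)).comp ((t : ℂ)) hin).const_mul w₀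
        refine this.congr_deriv ?_
        ring
      have h2 : HasDerivAt e.symm (D (γ t))⁻¹ (w t) :=
        HasDerivAt.of_local_left_inverse (e.continuousAt_symm hwt)
          (hψd (γ t) (hγball t ht)) (hDne _ (hγball t ht))
          ((e.eventually_right_inverse hwt).mono fun z hz => by
            rw [← hecoe]; exact hz)
      have h3 := (h2.comp (t : ℂ) h1).comp_ofReal
      have h4 : (D (γ t))⁻¹ * (w₀ * Complex.exp ((t : ℂ) * lam) * lam) = F (γ t) := by
        have hw' : w₀ * Complex.exp ((t : ℂ) * lam) = ψ (γ t) := hψγ.symm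
        rw [hw']
        have hFDt := hFD (γ t) (hγball t ht)
        have hDt := hDne (γ t) (hγball t ht)
        field_simp
        linear_combination -hFDt
      rw [h4] at h3
      exact h3.hasDerivWithinAt
    · intro t ht
      exact lt_of_lt_of_le (Metric.mem_ball.mp (hγU t ht).1) (min_le_left _ _)
  refine ⟨y, dist_pos.mpr hyne, hydist, ?_⟩
  rcases le_or_gt lam.re 0 with hsign | hsign
  · left
    obtain ⟨γ, hγ1, hγ2, hγ3⟩ := key (Ici 0) (fun t ht => mul_nonpos_iff.mpr (Or.inl ⟨ht, hsign⟩))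
    exact ⟨γ, hγ1, hγ2, hγ3⟩
  · right
    obtain ⟨γ, hγ1, hγ2, hγ3⟩ := key (Iic 0) (fun t ht => mul_nonpos_iff.mpr (Or.inr ⟨ht, hsign.le⟩))
    exact ⟨γ, hγ1, hγ2, hγ3⟩
end

section
/- Let Ω ⊆ ℂ be open and connected, F holomorphic on Ω with F ≢ 0, and a ∈ Ω an equilibrium of order m ≥ 2. If γ : [0,∞) → Ω is a solution of ẋ = F(x) with γ(t) ≠ a for all t and γ(t) → a as t → ∞, then there exists θ₀ ∈ 𝓔(F,m) such that (γ(t) − a)/|γ(t) − a| → e^{iθ₀} as t → ∞; that is, every orbit tending to a does so in a definite direction belonging to 𝓔(F,m). -/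
open Set Filter Topology

/-- The set `𝓔(F,m)` of candidate definite directions at `a`. -/
noncomputable def dirSet (F : ℂ → ℂ) (m : ℕ) (a : ℂ) : Set ℝ :=
  { θ : ℝ | ∃ ℓ : ℤ, θ = toIcoMod Real.two_pi_pos 0
      (((ℓ : ℝ) * Real.pi - (iteratedDeriv m F a).arg) / ((m : ℝ) - 1)) }

section Helpers
open Function

-- adaptation of eq_pow_order_mul_iterate_dslope to arbitrary m with vanishing low coeffs
theorem eq_pow_mul_iterate_dslope {f : ℂ → ℂ} {p : FormalMultilinearSeries ℂ ℂ ℂ} {z₀ : ℂ}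
    (hp : HasFPowerSeriesAt f p z₀) (m : ℕ) (hc : ∀ k < m, p.coeff k = 0) :
    ∀ᶠ z in 𝓝 z₀, f z = (z - z₀) ^ m • (Function.swap dslope z₀)^[m] f z := by
  have hq := hasFPowerSeriesAt_iff'.mp (hp.has_fpower_series_iterate_dslope_fslope m)
  filter_upwards [hq, hasFPowerSeriesAt_iff'.mp hp] with x hx1 hx2
  obtain ⟨s, hs1, hs2⟩ := HasSum.exists_hasSum_smul_of_apply_eq_zero hx2 hc
  convert hs1.symm
  simp only [FormalMultilinearSeries.coeff_iterate_fslope] at hx1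
  exact hx1.unique hs2

theorem coeff_eq_iter {f : ℂ → ℂ} {p : FormalMultilinearSeries ℂ ℂ ℂ} {x : ℂ}
    (hp : HasFPowerSeriesAt f p x) (k : ℕ) :
    (Nat.factorial k : ℂ) * p.coeff k = iteratedDeriv k f x := by
  obtain ⟨r, hr⟩ := hp
  have h := hr.factorial_smul (1 : ℂ) k
  rw [iteratedDeriv_eq_iteratedFDeriv]
  rw [nsmul_eq_mul] at h
  rw [← h]
  congr 1

theorem local_factor {F : ℂ → ℂ} {Ω : Set ℂ} (hΩ : IsOpen Ω) (hF : DifferentiableOn ℂ F Ω)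
    {a : ℂ} (ha : a ∈ Ω) {m : ℕ} (hlow : ∀ k < m, iteratedDeriv k F a = 0) :
    ∃ g : ℂ → ℂ, ContinuousAt g a ∧ (Nat.factorial m : ℂ) * g a = iteratedDeriv m F a ∧
      ∀ᶠ z in 𝓝 a, F z = (z - a) ^ m * g z := by
  have hA : AnalyticAt ℂ F a := hF.analyticAt (hΩ.mem_nhds ha)
  obtain ⟨p, hp⟩ := hA
  have hc : ∀ k < m, p.coeff k = 0 := by
    intro k hk
    have h1 := coeff_eq_iter hp k
    rw [hlow k hk] at h1
    have h2 : (Nat.factorial k : ℂ) ≠ 0 := by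
      exact_mod_cast Nat.factorial_ne_zero k
    exact (mul_eq_zero.mp h1).resolve_left h2
  refine ⟨(Function.swap dslope a)^[m] F, ?_, ?_, ?_⟩
  · exact (hp.has_fpower_series_iterate_dslope_fslope m).continuousAt
  · have h0 : (FormalMultilinearSeries.fslope^[m] p).coeff 0
        = (Function.swap dslope a)^[m] F a :=
      (hp.has_fpower_series_iterate_dslope_fslope m).coeff_zero (fun _ => 1)
    rw [FormalMultilinearSeries.coeff_iterate_fslope] at h0
    rw [← h0, zero_add]
    exact coeff_eq_iter hp m
  · filter_upwards [eq_pow_mul_iterate_dslope hp m hc] with z hz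
    rw [hz, smul_eq_mul]

theorem tendsto_div_of_hasDeriv {u v : ℝ → ℂ} {L : ℂ}
    (hu : ∀ t ∈ Ici (0:ℝ), HasDerivWithinAt u (v t) (Ici (0:ℝ)) t)
    (hv : Tendsto v atTop (𝓝 L)) :
    Tendsto (fun t => u t / (t : ℂ)) atTop (𝓝 L) := by
  rw [Metric.tendsto_atTop] at hv ⊢
  intro ε hε
  obtain ⟨T₀, hT₀⟩ := hv (ε/3) (by linarith)
  set T := max T₀ 1 with hT
  have hT1 : (1:ℝ) ≤ T := le_max_right _ _
  have hT0 : (0:ℝ) ≤ T := by linarith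
  -- f t = u t - t • L  has derivative v t - L on Ici T
  set f : ℝ → ℂ := fun t => u t - t • L with hf
  have hderiv : ∀ x ∈ Ici T, HasDerivWithinAt f (v x - L) (Ici T) x := by
    intro x hx
    have h1 : HasDerivWithinAt u (v x) (Ici T) x :=
      (hu x (le_trans hT0 hx)).mono (Ici_subset_Ici.mpr hT0)
    have h2 : HasDerivWithinAt (fun t : ℝ => t • L) ((1:ℝ) • L) (Ici T) x :=
      (hasDerivWithinAt_id x (Ici T)).smul_const L
    have h12 := h1.sub h2
    rw [one_smul] at h12
    exact h12
  have hbound : ∀ x ∈ Ici T, ‖v x - L‖ ≤ ε/3 := by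
    intro x hx
    have := hT₀ x (le_trans (le_max_left _ _) hx)
    rw [dist_eq_norm] at this
    linarith [this.le]
  have key : ∀ t ∈ Ici T, ‖f t - f T‖ ≤ ε/3 * ‖t - T‖ :=
    fun t ht => (convex_Ici T).norm_image_sub_le_of_norm_hasDerivWithin_le
      hderiv hbound (self_mem_Ici) ht
  refine ⟨max T (3 * ‖f T‖ / ε + T + 1), fun t ht => ?_⟩
  have ht1 : T ≤ t := le_trans (le_max_left _ _) ht
  have ht2 : 3 * ‖f T‖ / ε + T + 1 ≤ t := le_trans (le_max_right _ _) ht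
  have htpos : (0:ℝ) < t := by linarith
  have hst : ‖f t‖ ≤ ε/3 * (t - T) + ‖f T‖ := by
    have := key t ht1
    have h3 : ‖t - T‖ = t - T := by rw [Real.norm_eq_abs, abs_of_nonneg]; linarith
    calc ‖f t‖ ≤ ‖f t - f T‖ + ‖f T‖ := by simpa using norm_add_le (f t - f T) (f T)
      _ ≤ ε/3 * (t - T) + ‖f T‖ := by rw [h3] at this; linarith
  have hcast : (t:ℂ) ≠ 0 := by exact_mod_cast htpos.ne'
  have heq : u t / (t:ℂ) - L = f t / (t:ℂ) := by
    field_simp [hf]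
    simp [hf, Complex.real_smul]
  rw [dist_eq_norm, heq, norm_div]
  have hnt : ‖(t:ℂ)‖ = t := by
    rw [Complex.norm_real, Real.norm_eq_abs, abs_of_pos htpos]
  rw [hnt, div_lt_iff₀ htpos]
  have hfT : ‖f T‖ ≤ ε/3 * (t - T) / 1 * 0 + ‖f T‖ := by simp
  have h4 : 3 * ‖f T‖ / ε < t := by linarith
  have h5 : 3 * ‖f T‖ < ε * t := by
    rw [div_lt_iff₀ hε] at h4; linarith [h4]
  nlinarith [norm_nonneg (f T), hst]

theorem root_approx {n : ℕ} {ζ : ℂ} (S : Finset ℂ)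
    (hS : ∀ ξ : ℂ, ξ ^ n = ζ → ξ ∈ S) {ε : ℝ} (hε : 0 < ε) :
    ∃ ε' > 0, ∀ z : ℂ, ‖z‖ = 1 → ‖z ^ n - ζ‖ < ε' → ∃ ξ ∈ S, dist z ξ < ε := by
  set K : Set ℂ := {z | ‖z‖ = 1 ∧ ∀ ξ ∈ S, ε ≤ dist z ξ} with hK
  have hKc : IsCompact K := by
    have h1 : K ⊆ Metric.sphere 0 1 := by
      intro z hz; simpa [Metric.mem_sphere, dist_zero_right] using hz.1
    have h2 : IsClosed K := by
      have : K = (Metric.sphere (0:ℂ) 1) ∩ ⋂ ξ ∈ S, {z | ε ≤ dist z ξ} := by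
        ext z
        simp [hK, Metric.mem_sphere, dist_zero_right]
      rw [this]
      exact (Metric.isClosed_sphere).inter (isClosed_biInter fun ξ _ =>
        isClosed_le continuous_const (continuous_id.dist continuous_const))
    exact (isCompact_sphere (0:ℂ) 1).of_isClosed_subset h2 h1
  rcases K.eq_empty_or_nonempty with hKe | hKne
  · refine ⟨1, one_pos, fun z hz1 _ => ?_⟩
    by_contra hcon
    push_neg at hcon
    have : z ∈ K := ⟨hz1, fun ξ hξ => (hcon ξ hξ)⟩
    simp [hKe] at this
  · obtain ⟨x, hxK, hmin'⟩ := hKc.exists_isMinOn hKne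
      (Continuous.continuousOn (by continuity : Continuous fun z : ℂ => ‖z ^ n - ζ‖))
    have hmin : ∀ z ∈ K, ‖x ^ n - ζ‖ ≤ ‖z ^ n - ζ‖ := fun z hz => hmin' hz
    refine ⟨‖x ^ n - ζ‖, ?_, fun z hz1 hz2 => ?_⟩
    · rcases eq_or_lt_of_le (norm_nonneg (x ^ n - ζ)) with h | h
      · exfalso
        have hx : x ^ n = ζ := by
          have := h.symm
          rw [norm_eq_zero, sub_eq_zero] at this; exact this
        have := hxK.2 x (hS x hx)
        simp at this; linarith
      · exact h
    · by_contra hcon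
      push_neg at hcon
      have : z ∈ K := ⟨hz1, fun ξ hξ => hcon ξ hξ⟩
      exact absurd hz2 (not_lt.mpr (hmin z this))

theorem stay_in_ball {Sf : Finset ℂ} {r : ℝ} (hr : 0 < r)
    (hdisj : ∀ x ∈ Sf, ∀ y ∈ Sf, x ≠ y → 2 * r ≤ dist x y)
    {δ : ℝ → ℂ} (hδc : ContinuousOn δ (Ici 0))
    (h : ∀ᶠ t in atTop, ∃ ξ ∈ Sf, dist (δ t) ξ < r) :
    ∃ ξ ∈ Sf, ∀ᶠ t in atTop, dist (δ t) ξ < r := by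
  rw [eventually_atTop] at h
  obtain ⟨T₀, hT₀⟩ := h
  set T := max T₀ 0 with hTdef
  have hT0 : (0:ℝ) ≤ T := le_max_right _ _
  have hTall : ∀ t : ℝ, T ≤ t → ∃ ξ ∈ Sf, dist (δ t) ξ < r :=
    fun t ht => hT₀ t (le_trans (le_max_left _ _) ht)
  obtain ⟨ξ₀, hξ₀S, hξ₀⟩ := hTall T le_rfl
  refine ⟨ξ₀, hξ₀S, eventually_atTop.mpr ⟨T, fun t ht => ?_⟩⟩
  -- connectedness argument on the subtype Ici T
  haveI : PreconnectedSpace (Ici T) := Subtype.preconnectedSpace isPreconnected_Ici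
  set δ' : Ici T → ℂ := fun s => δ s.1 with hδ'
  have hδ'c : Continuous δ' := by
    rw [continuous_iff_continuousAt]
    intro s
    have : ContinuousOn δ (Ici T) := hδc.mono (Ici_subset_Ici.mpr hT0)
    exact (continuousOn_iff_continuous_restrict.mp this).continuousAt
  set U : Set (Ici T) := δ' ⁻¹' (Metric.ball ξ₀ r) with hU
  set V : Set (Ici T) := δ' ⁻¹' (⋃ ξ ∈ Sf.erase ξ₀, Metric.ball ξ r) with hV
  have hUopen : IsOpen U := Metric.isOpen_ball.preimage hδ'c
  have hVopen : IsOpen V := (isOpen_biUnion fun ξ _ => Metric.isOpen_ball).preimage hδ'c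
  have hUV : U ∪ V = univ := by
    ext s
    simp only [mem_union, mem_univ, iff_true, hU, hV, mem_preimage, Metric.mem_ball, mem_iUnion]
    obtain ⟨ξ, hξS, hξd⟩ := hTall s.1 s.2
    by_cases heq : ξ = ξ₀
    · left; rwa [heq] at hξd
    · right; exact ⟨ξ, ⟨Finset.mem_erase.mpr ⟨heq, hξS⟩, hξd⟩⟩
  have hdisjUV : U ∩ V = ∅ := by
    ext s
    simp only [hU, hV, mem_inter_iff, mem_preimage, Metric.mem_ball, mem_iUnion, mem_empty_iff_false,
      iff_false, not_and]
    rintro h1 ⟨ξ, hξ, h2⟩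
    obtain ⟨hne, hξS⟩ := Finset.mem_erase.mp hξ
    have := hdisj ξ hξS ξ₀ hξ₀S hne
    have htri := dist_triangle ξ (δ' s) ξ₀
    rw [dist_comm ξ (δ' s)] at htri
    linarith
  have hclopen : IsClopen U := by
    constructor
    · rw [← isOpen_compl_iff]
      have : Uᶜ = V := by
        apply Subset.antisymm
        · intro s hs
          rcases (hUV ▸ mem_univ s : s ∈ U ∪ V) with h | h
          · exact absurd h hs
          · exact h
        · intro s hs hsU
          have : s ∈ U ∩ V := ⟨hsU, hs⟩
          simp [hdisjUV] at this
      rw [this]; exact hVopen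
    · exact hUopen
  have hUne : U.Nonempty := ⟨⟨T, self_mem_Ici⟩, by simpa [hU] using hξ₀⟩
  have : U = univ := hclopen.eq_univ hUne
  have hs : (⟨t, ht⟩ : Ici T) ∈ U := this ▸ mem_univ _
  simpa [hU] using hs

theorem circle_limit {n : ℕ} (hn : 1 ≤ n) {ζ : ℂ} (hζ : ζ ≠ 0)
    {δ : ℝ → ℂ} (hδc : ContinuousOn δ (Ici 0))
    (h : Tendsto (fun t => δ t ^ n) atTop (𝓝 ζ))
    (hδ1 : ∀ᶠ t in atTop, ‖δ t‖ = 1) :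
    ∃ ξ : ℂ, ξ ^ n = ζ ∧ Tendsto δ atTop (𝓝 ξ) := by
  classical
  have hfin : {x : ℂ | x ^ n = ζ}.Finite := by
    have hp : (Polynomial.X ^ n - Polynomial.C ζ : Polynomial ℂ) ≠ 0 :=
      Polynomial.X_pow_sub_C_ne_zero hn ζ
    have := Polynomial.finite_setOf_isRoot hp
    refine this.subset ?_
    intro x hx
    simp only [mem_setOf_eq] at hx ⊢
    simp [Polynomial.IsRoot, hx]
  set Sf : Finset ℂ := hfin.toFinset with hSf
  have hSmem : ∀ ξ : ℂ, ξ ^ n = ζ → ξ ∈ Sf := fun ξ hξ => hfin.mem_toFinset.mpr hξ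
  set P : Finset (ℂ × ℂ) := (Sf ×ˢ Sf).filter (fun p => p.1 ≠ p.2) with hP
  set d : ℝ := if hPne : P.Nonempty then P.inf' hPne (fun p => dist p.1 p.2) else 1 with hd
  have hd0 : 0 < d := by
    rw [hd]
    split_ifs with hPne
    · rw [Finset.lt_inf'_iff]
      rintro ⟨x, y⟩ hxy
      rw [hP, Finset.mem_filter] at hxy
      exact dist_pos.mpr hxy.2
    · exact one_pos
  have hdsep : ∀ x ∈ Sf, ∀ y ∈ Sf, x ≠ y → d ≤ dist x y := by
    intro x hx y hy hne
    have hmem : (x, y) ∈ P := by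
      rw [hP, Finset.mem_filter]
      exact ⟨Finset.mem_product.mpr ⟨hx, hy⟩, hne⟩
    rw [hd]
    split_ifs with hPne
    · exact Finset.inf'_le _ hmem
    · exact absurd ⟨_, hmem⟩ hPne
  have main : ∀ ε : ℝ, 0 < ε → ε ≤ d/4 → ∃ ξ ∈ Sf, ∀ᶠ t in atTop, dist (δ t) ξ < ε := by
    intro ε hε hεd
    obtain ⟨ε', hε', happrox⟩ := root_approx Sf hSmem hε
    have hev : ∀ᶠ t in atTop, ∃ ξ ∈ Sf, dist (δ t) ξ < ε := by
      have h2 : ∀ᶠ t in atTop, dist (δ t ^ n) ζ < ε' := (Metric.tendsto_nhds.mp h) ε' hε'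
      filter_upwards [hδ1, h2] with t h1t h2t
      exact happrox (δ t) h1t (by rwa [← dist_eq_norm])
    exact stay_in_ball hε
      (fun x hx y hy hne => le_trans (by linarith) (hdsep x hx y hy hne)) hδc hev
  obtain ⟨ξ, hξS, hξev⟩ := main (d/4) (by linarith) le_rfl
  refine ⟨ξ, hfin.mem_toFinset.mp hξS, Metric.tendsto_nhds.mpr fun ε hε => ?_⟩
  rcases le_or_gt ε (d/4) with hle | hlt
  · obtain ⟨ξ', hξ'S, hξ'ev⟩ := main ε hε hle
    have hne : ξ' = ξ := by
      by_contra hcon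
      obtain ⟨t, ht1, ht2⟩ := (hξev.and hξ'ev).exists
      have := hdsep ξ' hξ'S ξ hξS hcon
      have htri := dist_triangle ξ' (δ t) ξ
      rw [dist_comm ξ' (δ t)] at htri
      linarith
    rwa [hne] at hξ'ev
  · filter_upwards [hξev] with t ht
    linarith

open Complex in
theorem zeta_exp {r : ℝ} (hr : r < 0) {A : ℂ} (hA : A ≠ 0) :
    (((r:ℂ) * A)⁻¹) / ((‖((r:ℂ) * A)⁻¹‖ : ℝ) : ℂ)
      = Complex.exp (((Real.pi - Complex.arg A : ℝ) : ℂ) * Complex.I) := by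
  have hrc : (r : ℂ) ≠ 0 := by exact_mod_cast hr.ne
  have habsA : ((‖A‖ : ℝ) : ℂ) ≠ 0 := by
    exact_mod_cast (norm_ne_zero_iff.mpr hA)
  have hexp : Complex.exp ((Complex.arg A : ℂ) * Complex.I) = A / ((‖A‖ : ℝ) : ℂ) := by
    rw [eq_div_iff habsA, mul_comm]
    exact Complex.norm_mul_exp_arg_mul_I A
  have hrhs : Complex.exp (((Real.pi - Complex.arg A : ℝ) : ℂ) * Complex.I)
      = -((‖A‖ : ℝ) : ℂ) / A := by
    rw [Complex.ofReal_sub, sub_mul, Complex.exp_sub, Complex.exp_pi_mul_I, hexp]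
    field_simp
  rw [hrhs]
  have habs : ‖((r:ℂ) * A)⁻¹‖ = (-r)⁻¹ * (‖A‖)⁻¹ := by
    rw [norm_inv, norm_mul, Complex.norm_real, Real.norm_eq_abs, abs_of_neg hr, mul_inv]
  rw [habs]
  have h1 : ((((-r)⁻¹ * (‖A‖)⁻¹ : ℝ)) : ℂ) = (-(r:ℂ))⁻¹ * ((‖A‖ : ℝ) : ℂ)⁻¹ := by
    push_cast
    ring
  rw [h1]
  field_simp
end Helpers

/-- every orbit of a holomorphic flow tending to an equilibrium `a` of order
`m ≥ 2` does so in a definite direction `θ₀ ∈ 𝓔(F,m)`. -/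
theorem stmt_7 (Ω : Set ℂ) (hΩ : IsOpen Ω) (hconn : IsConnected Ω)
    (F : ℂ → ℂ) (hF : DifferentiableOn ℂ F Ω) (hF0 : ∃ z ∈ Ω, F z ≠ 0)
    (a : ℂ) (ha : a ∈ Ω) (m : ℕ) (hm : 2 ≤ m)
    (hlow : ∀ k < m, iteratedDeriv k F a = 0) (hord : iteratedDeriv m F a ≠ 0)
    (γ : ℝ → ℂ) (hγ : IsSolOn F Ω (Ici 0) γ)
    (hne : ∀ t ∈ Ici (0 : ℝ), γ t ≠ a) (hlim : Tendsto γ atTop (nhds a)) :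
    ∃ θ₀ ∈ dirSet F m a,
      Tendsto (fun t => (γ t - a) / ((‖γ t - a‖ : ℝ) : ℂ)) atTop
        (nhds (Complex.exp ((θ₀ : ℂ) * Complex.I))) := by
  classical
  set A : ℂ := iteratedDeriv m F a with hAdef
  set n : ℕ := m - 1 with hndef
  have hn1 : 1 ≤ n := by omega
  have hnm : (n : ℤ) = (m : ℤ) - 1 := by omega
  have hnR : (n : ℝ) = (m : ℝ) - 1 := by
    have : ((n : ℤ) : ℝ) = ((m : ℤ) : ℝ) - 1 := by exact_mod_cast congrArg (Int.cast : ℤ → ℝ) hnm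
    push_cast at this ⊢; linarith
  -- local factorization
  obtain ⟨g, hgc, hga, hgev⟩ := local_factor hΩ hF ha hlow
  have hfacC : ((Nat.factorial m : ℕ) : ℂ) ≠ 0 := by exact_mod_cast Nat.factorial_ne_zero m
  have hgane : g a ≠ 0 := by
    intro h0
    rw [h0, mul_zero] at hga
    exact hord hga.symm
  -- the function u and its derivative
  set w : ℝ → ℂ := fun t => γ t - a with hwdef
  have hwne : ∀ t ∈ Ici (0:ℝ), w t ≠ 0 := fun t ht => sub_ne_zero.mpr (hne t ht)
  set u : ℝ → ℂ := fun t => w t ^ (-(n:ℤ)) with hudef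
  set v : ℝ → ℂ := fun t => (((-(n:ℤ)) : ℤ) : ℂ) * w t ^ (-(n:ℤ) - 1) * F (γ t) with hvdef
  have hu : ∀ t ∈ Ici (0:ℝ), HasDerivWithinAt u (v t) (Ici 0) t := by
    intro t ht
    have hout := hasDerivAt_zpow (-(n:ℤ)) (w t) (Or.inl (hwne t ht))
    have hin : HasDerivWithinAt w (F (γ t)) (Ici 0) t := ((hγ t ht).2).sub_const a
    exact hout.comp_hasDerivWithinAt t hin
  -- eventually v t = -(n) * g (γ t)
  have hev0 : ∀ᶠ t : ℝ in atTop, (0:ℝ) ≤ t := eventually_ge_atTop 0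
  have hevF : ∀ᶠ t : ℝ in atTop, F (γ t) = (γ t - a) ^ m * g (γ t) := hlim.eventually hgev
  have hveq : ∀ᶠ t : ℝ in atTop, v t = -(n : ℂ) * g (γ t) := by
    filter_upwards [hev0, hevF] with t ht hFt
    have hwt : w t ≠ 0 := hwne t ht
    have hzp : w t ^ (-(n:ℤ) - 1) * w t ^ (m : ℤ) = 1 := by
      rw [← zpow_add₀ hwt]
      have : -(n:ℤ) - 1 + (m:ℤ) = 0 := by omega
      rw [this, zpow_zero]
    calc v t = (((-(n:ℤ)) : ℤ) : ℂ) * w t ^ (-(n:ℤ) - 1) * ((w t) ^ m * g (γ t)) := by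
          rw [hvdef]; simp only [hwdef]; rw [hFt]
      _ = (((-(n:ℤ)) : ℤ) : ℂ) * (w t ^ (-(n:ℤ) - 1) * w t ^ (m : ℤ)) * g (γ t) := by
          rw [← zpow_natCast (w t) m]; ring
      _ = -(n : ℂ) * g (γ t) := by rw [hzp]; push_cast; ring
  set L : ℂ := -(n : ℂ) * g a with hLdef
  have hLne : L ≠ 0 := by
    apply mul_ne_zero _ hgane
    simp only [neg_ne_zero, Nat.cast_ne_zero]
    omega
  have hv : Tendsto v atTop (𝓝 L) := by
    have h1 : Tendsto (fun t => -(n : ℂ) * g (γ t)) atTop (𝓝 L) := by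
      rw [hLdef]
      exact (hgc.tendsto.comp hlim).const_mul _
    exact Tendsto.congr' (hveq.mono fun _ h => h.symm) h1
  have hdiv : Tendsto (fun t => u t / (t : ℂ)) atTop (𝓝 L) := tendsto_div_of_hasDeriv hu hv
  -- the unit direction δ
  set δ : ℝ → ℂ := fun t => (γ t - a) / ((‖γ t - a‖ : ℝ) : ℂ) with hδdef
  set q : ℂ → ℂ := fun z => z / ((‖z‖ : ℝ) : ℂ) with hqdef
  -- δ^n eventually equals q ((u t / t)⁻¹)
  have hδpow : ∀ᶠ t : ℝ in atTop, δ t ^ n = q ((u t / (t:ℂ))⁻¹) := by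
    filter_upwards [eventually_ge_atTop (1:ℝ)] with t ht
    have ht0 : (0:ℝ) < t := by linarith
    have htmem : t ∈ Ici (0:ℝ) := le_of_lt ht0
    have hwt : w t ≠ 0 := hwne t htmem
    have hwn : w t ^ n ≠ 0 := pow_ne_zero n hwt
    have htC : (t : ℂ) ≠ 0 := by exact_mod_cast ht0.ne'
    have huinv : (u t / (t:ℂ))⁻¹ = (t : ℂ) * w t ^ n := by
      rw [hudef]
      simp only [zpow_neg, zpow_natCast]
      field_simp
    rw [huinv, hqdef]
    have habs : ‖(t : ℂ) * w t ^ n‖ = t * ‖w t‖ ^ n := by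
      rw [norm_mul, norm_pow, Complex.norm_real, Real.norm_eq_abs, abs_of_pos ht0]
    show δ t ^ n = ((t:ℂ) * w t ^ n) / ((‖(t:ℂ) * w t ^ n‖ : ℝ) : ℂ)
    rw [habs, hδdef]
    show ((w t) / ((‖w t‖ : ℝ) : ℂ)) ^ n
      = ((t:ℂ) * w t ^ n) / (((t * ‖w t‖ ^ n : ℝ)) : ℂ)
    have habsne : ((‖w t‖ : ℝ) : ℂ) ≠ 0 := by
      simp only [ne_eq, Complex.ofReal_eq_zero, norm_eq_zero]
      exact hwt
    rw [div_pow]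
    push_cast
    rw [mul_div_mul_left _ _ htC]
  -- limit of δ^n
  have hLinv : Tendsto (fun t => (u t / (t:ℂ))⁻¹) atTop (𝓝 L⁻¹) := hdiv.inv₀ hLne
  have hqc : ContinuousAt q L⁻¹ := by
    have hLinvne : L⁻¹ ≠ 0 := inv_ne_zero hLne
    apply ContinuousAt.div continuousAt_id
    · exact Complex.continuous_ofReal.continuousAt.comp continuous_norm.continuousAt
    · simp only [ne_eq, Complex.ofReal_eq_zero, norm_eq_zero]
      exact hLinvne
  set ζ : ℂ := q L⁻¹ with hζdef
  have hδnlim : Tendsto (fun t => δ t ^ n) atTop (𝓝 ζ) :=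
    Tendsto.congr' (hδpow.mono fun _ h => h.symm) (hqc.tendsto.comp hLinv)
  -- ζ = exp((π - arg A) I)
  have hgaA : g a = A / ((Nat.factorial m : ℕ) : ℂ) := by
    field_simp [eq_div_iff hfacC]
    linear_combination hga
  have hLrA : L = ((-( (n:ℝ) / (Nat.factorial m : ℝ)) : ℝ) : ℂ) * A := by
    rw [hLdef, hgaA]
    push_cast
    field_simp
  have hrneg : (-( (n:ℝ) / (Nat.factorial m : ℝ)) : ℝ) < 0 := by
    apply neg_neg_iff_pos.mpr
    apply div_pos
    · exact_mod_cast hn1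
    · exact_mod_cast Nat.factorial_pos m
  have hζexp : ζ = Complex.exp (((Real.pi - Complex.arg A : ℝ) : ℂ) * Complex.I) := by
    rw [hζdef, hqdef, hLrA]
    exact zeta_exp hrneg hord
  have hζne : ζ ≠ 0 := by
    rw [hζexp]; exact Complex.exp_ne_zero _
  -- continuity of δ on Ici 0
  have hγcont : ContinuousOn γ (Ici 0) := fun t ht => ((hγ t ht).2).continuousWithinAt
  have hδcont : ContinuousOn δ (Ici 0) := by
    apply ContinuousOn.div
    · exact hγcont.sub continuousOn_const
    · exact Complex.continuous_ofReal.comp_continuousOn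
        (continuous_norm.comp_continuousOn (hγcont.sub continuousOn_const))
    · intro t ht
      simp only [ne_eq, Complex.ofReal_eq_zero, norm_eq_zero]
      exact sub_ne_zero.mpr (hne t ht)
  have hδ1 : ∀ᶠ t : ℝ in atTop, ‖δ t‖ = 1 := by
    filter_upwards [hev0] with t ht
    have hwt : γ t - a ≠ 0 := sub_ne_zero.mpr (hne t ht)
    rw [hδdef]
    simp only [norm_div, Complex.norm_real, Real.norm_eq_abs]
    rw [abs_of_nonneg (norm_nonneg _), div_self (norm_ne_zero_iff.mpr hwt)]
  -- apply circle limit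
  obtain ⟨ξ, hξn, hξlim⟩ := circle_limit hn1 hζne hδcont hδnlim hδ1
  -- |ξ| = 1
  have hξne : ξ ≠ 0 := by
    intro h0
    rw [h0, zero_pow (by omega : n ≠ 0)] at hξn
    exact hζne hξn.symm
  have habsζ : ‖ζ‖ = 1 := by
    rw [hζexp, Complex.norm_exp]
    have : (((Real.pi - Complex.arg A : ℝ) : ℂ) * Complex.I).re = 0 := by
      simp [Complex.mul_re]
    rw [this, Real.exp_zero]
  have habsξ : ‖ξ‖ = 1 := by
    have h1 : ‖ξ‖ ^ n = 1 := by
      rw [← norm_pow, hξn, habsζ]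
    have h0 : 0 ≤ ‖ξ‖ := norm_nonneg ξ
    rcases lt_trichotomy (‖ξ‖) 1 with h | h | h
    · exfalso
      have := pow_lt_one₀ h0 h (by omega : n ≠ 0)
      rw [h1] at this; exact lt_irrefl _ this
    · exact h
    · exfalso
      have := one_lt_pow₀ h (by omega : n ≠ 0)
      rw [h1] at this; exact lt_irrefl _ this
  -- ξ = exp(arg ξ * I)
  have hξexp : Complex.exp ((Complex.arg ξ : ℂ) * Complex.I) = ξ := by
    have := Complex.norm_mul_exp_arg_mul_I ξ
    rw [habsξ] at this
    simpa using this
  -- the integer k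
  have hξpow : ξ ^ n = Complex.exp (((n : ℂ) * (Complex.arg ξ : ℂ)) * Complex.I) := by
    conv_lhs => rw [← hξexp]
    rw [← Complex.exp_nat_mul]
    congr 1
    ring
  have hexpeq : Complex.exp (((n : ℂ) * (Complex.arg ξ : ℂ)) * Complex.I)
      = Complex.exp (((Real.pi - Complex.arg A : ℝ) : ℂ) * Complex.I) := by
    rw [← hξpow, hξn, hζexp]
  obtain ⟨k, hk⟩ := Complex.exp_eq_exp_iff_exists_int.mp hexpeq
  have hkreal : (n : ℝ) * Complex.arg ξ
      = Real.pi - Complex.arg A + (k : ℝ) * (2 * Real.pi) := by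
    have h2 : (((n : ℝ) * Complex.arg ξ : ℝ) : ℂ) * Complex.I
        = (((Real.pi - Complex.arg A + (k:ℝ) * (2 * Real.pi)) : ℝ) : ℂ) * Complex.I := by
      push_cast
      push_cast at hk
      linear_combination hk
    have h3 := mul_right_cancel₀ Complex.I_ne_zero h2
    exact_mod_cast h3
  -- choose ℓ = 2k+1 and θ₀
  set ℓ : ℤ := 2 * k + 1 with hℓdef
  have hθeq : ((ℓ : ℝ) * Real.pi - Complex.arg A) / ((m : ℝ) - 1) = Complex.arg ξ := by
    rw [← hnR]
    have hnne : (n : ℝ) ≠ 0 := by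
      simp only [ne_eq, Nat.cast_eq_zero]; omega
    rw [div_eq_iff hnne]
    rw [hℓdef]
    push_cast
    linarith [hkreal]
  refine ⟨toIcoMod Real.two_pi_pos 0
      (((ℓ : ℝ) * Real.pi - Complex.arg A) / ((m : ℝ) - 1)), ⟨ℓ, rfl⟩, ?_⟩
  have hexpθ : Complex.exp (((toIcoMod Real.two_pi_pos 0
      (((ℓ : ℝ) * Real.pi - Complex.arg A) / ((m : ℝ) - 1)) : ℝ) : ℂ) * Complex.I) = ξ := by
    rw [hθeq]
    rw [toIcoMod]
    set z : ℤ := toIcoDiv Real.two_pi_pos 0 (Complex.arg ξ) with hz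
    have : ((Complex.arg ξ - z • (2 * Real.pi) : ℝ) : ℂ) * Complex.I
        = (Complex.arg ξ : ℂ) * Complex.I - (z : ℂ) * (2 * (Real.pi:ℂ) * Complex.I) := by
      push_cast [zsmul_eq_mul]
      ring
    rw [this, Complex.exp_sub, Complex.exp_int_mul_two_pi_mul_I, div_one, hξexp]
  rw [hexpθ]
  exact hξlim
end

section
/- Let Ω ⊆ ℂ be open and connected, F holomorphic on Ω with F ≢ 0, and a ∈ Ω with F(a) = 0. Suppose there exists δ > 0 with the closed δ-ball around a contained in Ω such that for every y with 0 < |y − a| < δ there exists a nonconstant periodic solution γ : ℝ → Ω of ẋ = F(x) with γ(0) = y. Then F′(a) ≠ 0; that is, centers of holomorphic flows have order 1. -/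
open Set Filter Topology

lemma half_le_re_div {u v : ℂ} (hv : v ≠ 0) (h : ‖u - v‖ ≤ ‖v‖ / 2) : (1:ℝ)/2 ≤ (u / v).re := by
  have h1 : u / v = 1 + (u - v) / v := by field_simp; ring
  rw [h1]
  have h2 : |((u - v) / v).re| ≤ ‖(u - v) / v‖ := Complex.abs_re_le_norm _
  have h3 : ‖(u - v) / v‖ ≤ 1/2 := by
    rw [norm_div, div_le_iff₀ (norm_pos_iff.mpr hv)]
    linarith [h]
  have := abs_le.mp (h2.trans h3)
  simp only [Complex.add_re, Complex.one_re]
  linarith [this.1]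

lemma div_aux (k : ℕ) (z Gt Ga : ℂ) (hz : z ≠ 0) :
    -(((k+1 : ℕ) : ℂ) * z ^ k * (z ^ (k + 2) * Gt)) / (z ^ (k+1)) ^ 2 / (-((k+1 : ℕ) : ℂ) * Ga)
      = Gt / Ga := by
  have hm0 : (((k+1 : ℕ)) : ℂ) ≠ 0 := Nat.cast_ne_zero.mpr (Nat.succ_ne_zero k)
  have hD : z ^ k * z ^ (k+2) ≠ 0 := mul_ne_zero (pow_ne_zero _ hz) (pow_ne_zero _ hz)
  have hexp : (z ^ (k+1)) ^ 2 = z ^ k * z ^ (k+2) := by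
    rw [← pow_mul, ← pow_add]
    congr 1
    omega
  rw [hexp, show -((((k:ℕ)+1 : ℕ) : ℂ) * z ^ k * (z ^ (k + 2) * Gt))
      = -(((k+1 : ℕ) : ℂ)) * Gt * (z ^ k * z ^ (k+2)) by push_cast; ring]
  rw [mul_div_assoc, div_self hD, mul_one]
  rw [show -(((k+1:ℕ):ℂ)) * Gt = -(((k+1:ℕ):ℂ) * Gt) by ring,
    show -(((k+1:ℕ):ℂ)) * Ga = -(((k+1:ℕ):ℂ) * Ga) by ring, neg_div_neg_eq,
    mul_div_mul_left Gt Ga hm0]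

/-- if through every point of a punctured `δ`-ball around an equilibrium `a`
of a holomorphic flow there is a nonconstant periodic global solution, then `F'(a) ≠ 0`;
i.e. centers of holomorphic flows have order 1. -/
theorem stmt_14 (Ω : Set ℂ) (hΩ : IsOpen Ω) (hconn : IsConnected Ω)
    (F : ℂ → ℂ) (hF : DifferentiableOn ℂ F Ω) (hF0 : ∃ z ∈ Ω, F z ≠ 0)
    (a : ℂ) (ha : a ∈ Ω) (hFa : F a = 0)
    (hyp : ∃ δ > 0, Metric.closedBall a δ ⊆ Ω ∧
      ∀ y : ℂ, 0 < dist y a → dist y a < δ →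
        ∃ γ : ℝ → ℂ, IsSolOn F Ω univ γ ∧ γ 0 = y ∧
          (∃ T > 0, ∀ t : ℝ, γ (t + T) = γ t) ∧ (∃ t s : ℝ, γ t ≠ γ s)) :
    deriv F a ≠ 0 := by
  intro hd
  obtain ⟨δ, hδ, hballΩ, hsol⟩ := hyp
  -- analyticity and order
  have hFan : AnalyticOnNhd ℂ F Ω := hF.analyticOnNhd hΩ
  have hFa_an : AnalyticAt ℂ F a := hFan a ha
  have hord_ne_top : analyticOrderAt F a ≠ ⊤ := by
    intro h
    rw [analyticOrderAt_eq_top] at h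
    obtain ⟨z, hz, hz0⟩ := hF0
    exact hz0 (hFan.eqOn_zero_of_preconnected_of_eventuallyEq_zero hconn.isPreconnected ha h hz)
  set n := (analyticOrderAt F a).toNat with hn_def
  have hord : analyticOrderAt F a = n := (ENat.coe_toNat hord_ne_top).symm
  obtain ⟨G, hGan, hGa0, hfac⟩ := (hFa_an.analyticOrderAt_eq_natCast (n := n)).mp hord
  -- n ≥ 2
  have hn0 : n ≠ 0 := by
    intro h
    have := hfac.self_of_nhds
    rw [h] at this
    simp at this
    rw [this] at hFa
    exact hGa0 hFa
  have hn1 : n ≠ 1 := by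
    intro h
    have hde : deriv F a = deriv (fun z => (z - a) ^ n • G z) a := (Filter.EventuallyEq.deriv_eq hfac : _)
    have hda : HasDerivAt (fun z => (z - a) * G z) (G a) a := by
      have h1 : HasDerivAt (fun z : ℂ => z - a) 1 a := (hasDerivAt_id a).sub_const a
      have h2 : HasDerivAt G (deriv G a) a := hGan.differentiableAt.hasDerivAt
      have := h1.fun_mul h2
      simpa using this
    rw [h] at hde
    simp only [pow_one, smul_eq_mul] at hde
    rw [hde, hda.deriv] at hd
    exact hGa0 hd
  obtain ⟨k, hk⟩ : ∃ k, n = k + 2 := by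
    refine ⟨n - 2, ?_⟩
    omega
  set m : ℕ := k + 1 with hm_def
  have hmn : n = m + 1 := by omega
  -- Lipschitz neighborhood
  have hcd : ContDiffAt ℝ 1 F a := (hFa_an.contDiffAt).restrict_scalars ℝ
  obtain ⟨K, tset, htset, hK⟩ := hcd.exists_lipschitzOnWith
  -- choose r
  have hGcont : ContinuousAt G a := hGan.continuousAt
  have hGhalf : ∀ᶠ z in 𝓝 a, ‖G z - G a‖ ≤ ‖G a‖ / 2 := by
    have hpos : (0:ℝ) < ‖G a‖ / 2 := by
      have := norm_pos_iff.mpr hGa0; linarith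
    have := hGcont (Metric.closedBall_mem_nhds (G a) hpos)
    filter_upwards [this] with z hz
    simpa [Metric.mem_closedBall, dist_eq_norm] using hz
  have hev : ∀ᶠ z in 𝓝 a, z ∈ Ω ∧ z ∈ tset ∧ F z = (z - a) ^ n * G z ∧ ‖G z - G a‖ ≤ ‖G a‖ / 2 := by
    have h1 : ∀ᶠ z in 𝓝 a, z ∈ Ω := hΩ.eventually_mem ha
    have h2 : ∀ᶠ z in 𝓝 a, z ∈ tset := htset
    have h3 : ∀ᶠ z in 𝓝 a, F z = (z - a) ^ n * G z := by
      filter_upwards [hfac] with z hz; simpa [smul_eq_mul] using hz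
    filter_upwards [h1, h2, h3, hGhalf] with z e1 e2 e3 e4
    exact ⟨e1, e2, e3, e4⟩
  obtain ⟨r, hr, hball⟩ := (Metric.nhds_basis_closedBall.eventually_iff).mp hev
  -- choose ε and the initial point y
  set ε : ℝ := min (r / 2) (δ / 2) with hε_def
  have hε : 0 < ε := lt_min (by linarith) (by linarith)
  have hεr : ε < r := lt_of_le_of_lt (min_le_left _ _) (by linarith)
  have hεδ : ε < δ := lt_of_le_of_lt (min_le_right _ _) (by linarith)
  set c : ℂ := -(m : ℂ) * G a with hc_def
  have hc : c ≠ 0 :=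
    mul_ne_zero (neg_ne_zero.mpr (Nat.cast_ne_zero.mpr (by omega))) hGa0
  have hcnorm : (0:ℝ) < ‖c‖ := norm_pos_iff.mpr hc
  set q : ℂ := (ε : ℂ) ^ m * (starRingEnd ℂ) c / (‖c‖ : ℂ) with hq_def
  have hq0 : q ≠ 0 := by
    apply div_ne_zero
    · exact mul_ne_zero (pow_ne_zero _ (by exact_mod_cast hε.ne')) (by simpa using hc)
    · exact_mod_cast hcnorm.ne'
  obtain ⟨ζ, hζ⟩ := IsAlgClosed.exists_pow_nat_eq q (show 0 < m by omega)
  have hζ0 : ζ ≠ 0 := by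
    intro h
    exact hq0 (by rw [← hζ, h, zero_pow (show m ≠ 0 by omega)])
  have hζnorm : ‖ζ‖ = ε := by
    have h1 : ‖ζ‖ ^ m = ‖q‖ := by rw [← hζ]; simp [norm_pow]
    have h2 : ‖q‖ = ε ^ m := by
      rw [hq_def]
      rw [norm_div, norm_mul, norm_pow, RCLike.norm_conj, Complex.norm_real, Complex.norm_real,
        Real.norm_eq_abs, Real.norm_eq_abs, abs_of_pos hε, abs_of_pos hcnorm]
      exact mul_div_cancel_right₀ _ (norm_ne_zero_iff.mpr hc)
    have h3 : ‖ζ‖ ^ m = ε ^ m := h1.trans h2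
    have := pow_left_strictMonoOn₀ (M₀ := ℝ) (n := m) (by omega : m ≠ 0)
    exact this.injOn (norm_nonneg ζ) hε.le h3
  set y : ℂ := a + ζ with hy_def
  have hyd : dist y a = ε := by
    rw [hy_def, dist_eq_norm]
    simp [hζnorm]
  obtain ⟨γ, hsolγ, hγ0, ⟨T, hT, hper⟩, hnc⟩ :=
    hsol y (by rw [hyd]; exact hε) (by rw [hyd]; exact hεδ)
  have hγ_deriv : ∀ t, HasDerivAt γ (F (γ t)) t := fun t => by
    have := (hsolγ t (mem_univ t)).2
    rwa [hasDerivWithinAt_univ] at this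
  have hγ_cont : Continuous γ := (by exact continuous_iff_continuousAt.mpr fun t => (hγ_deriv t).continuousAt)
  -- the solution never hits the equilibrium
  have hne : ∀ t, γ t ≠ a := by
    intro t0 ht0
    have hS : IsClopen {t : ℝ | γ t = a} := by
      constructor
      · exact isClosed_eq hγ_cont continuous_const
      · rw [isOpen_iff_mem_nhds]
        intro s0 hs0
        have hev' : γ =ᶠ[𝓝 s0] (fun _ => a) := by
          apply ODE_solution_unique_of_eventually (v := fun _ : ℝ => F)
            (s := fun _ : ℝ => tset) (K := K) (Filter.Eventually.of_forall fun _ => hK)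
          · have hmem : ∀ᶠ t in 𝓝 s0, γ t ∈ tset := by
              have : γ s0 = a := hs0
              exact hγ_cont.continuousAt.preimage_mem_nhds (by rw [this]; exact htset)
            filter_upwards [hmem] with t ht
            exact ⟨hγ_deriv t, ht⟩
          · refine Filter.Eventually.of_forall fun t => ⟨?_, mem_of_mem_nhds htset⟩
            simpa [hFa] using hasDerivAt_const t a
          · exact hs0
        filter_upwards [hev'] with t ht
        exact ht
    have := hS.eq_univ ⟨t0, ht0⟩
    obtain ⟨t, s, hts⟩ := hnc
    have h1 : γ t = a := by rw [Set.eq_univ_iff_forall] at this; exact this t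
    have h2 : γ s = a := by rw [Set.eq_univ_iff_forall] at this; exact this s
    exact hts (h1.trans h2.symm)
  -- the auxiliary function ψ
  set u : ℝ → ℂ := fun t => ((γ t - a) ^ m)⁻¹ with hu_def
  set du : ℝ → ℂ := fun t => -((m : ℂ) * (γ t - a) ^ k * F (γ t)) / ((γ t - a) ^ m) ^ 2
    with hdu_def
  have hu : ∀ t, HasDerivAt u (du t) t := by
    intro t
    have hz : γ t - a ≠ 0 := sub_ne_zero.mpr (hne t)
    have h1 : HasDerivAt (fun z : ℂ => z - a) 1 (γ t) := (hasDerivAt_id (γ t)).sub_const a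
    have hg : HasDerivAt (fun z : ℂ => ((z - a) ^ m)⁻¹)
        (-((m : ℂ) * (γ t - a) ^ (m - 1) * 1) / ((γ t - a) ^ m) ^ 2) (γ t) :=
      (h1.pow m).inv (pow_ne_zero _ hz)
    have h2 := hg.comp t (hγ_deriv t)
    have h3 : -((m : ℂ) * (γ t - a) ^ (m - 1) * 1) / ((γ t - a) ^ m) ^ 2 * F (γ t) = du t := by
      simp only [hdu_def, hm_def, Nat.add_sub_cancel]
      ring
    rw [← h3]
    exact h2
  set ψ : ℝ → ℝ := fun t => (u t / c).re with hψ_def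
  have hψ : ∀ t, HasDerivAt ψ ((du t / c).re) t := by
    intro t
    have h4 := (hu t).div_const c
    have h5 := Complex.reCLM.hasFDerivAt.comp_hasDerivAt t h4
    exact h5
  have hψd : ∀ t, γ t ∈ Metric.closedBall a r → (1/2 : ℝ) ≤ (du t / c).re := by
    intro t htm
    obtain ⟨-, -, hFt, hGt⟩ := hball htm
    have hz : γ t - a ≠ 0 := sub_ne_zero.mpr (hne t)
    have heq : du t / c = G (γ t) / G a := by
      simp only [hdu_def]
      rw [hFt, hk, hc_def, hm_def]
      exact div_aux k (γ t - a) (G (γ t)) (G a) hz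
    rw [heq]
    exact half_le_re_div hGa0 hGt
  -- value of ψ at 0
  have hγ0a : γ 0 - a = ζ := by rw [hγ0, hy_def]; ring
  have hqc : q * c = ((ε ^ m * ‖c‖ : ℝ) : ℂ) := by
    have hcc : (starRingEnd ℂ) c * c = ((‖c‖ ^ 2 : ℝ) : ℂ) := by
      rw [mul_comm, Complex.mul_conj, Complex.normSq_eq_norm_sq]
    rw [hq_def, div_mul_eq_mul_div, mul_assoc, hcc]
    rw [div_eq_iff (show ((‖c‖ : ℝ) : ℂ) ≠ 0 by exact_mod_cast hcnorm.ne')]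
    push_cast
    try ring
  have hu0 : u 0 / c = ((ε ^ m * ‖c‖ : ℝ) : ℂ)⁻¹ := by
    simp only [hu_def]
    rw [hγ0a, hζ, div_eq_mul_inv, ← mul_inv, hqc]
  have hψ0 : ψ 0 = (ε ^ m * ‖c‖)⁻¹ := by
    simp only [hψ_def]
    rw [hu0, ← Complex.ofReal_inv, Complex.ofReal_re]
  -- monotonicity
  have hψcont : Continuous ψ := continuous_iff_continuousAt.mpr fun t => (hψ t).continuousAt
  have mono : ∀ b : ℝ, 0 ≤ b → (∀ t ∈ Ioo (0:ℝ) b, γ t ∈ Metric.closedBall a r) →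
      ψ 0 ≤ ψ b - b / 2 := by
    intro b hb hin
    have hΦd : ∀ t, HasDerivAt (fun s => ψ s - s / 2) ((du t / c).re - 1/2) t := fun t =>
      (hψ t).sub ((hasDerivAt_id t).div_const 2)
    have hmono : MonotoneOn (fun s => ψ s - s / 2) (Icc 0 b) := by
      apply monotoneOn_of_deriv_nonneg (convex_Icc 0 b)
      · exact (hψcont.sub (continuous_id.div_const 2)).continuousOn
      · intro t _
        exact ((hΦd t).differentiableAt).differentiableWithinAt
      · intro t ht
        rw [interior_Icc] at ht
        rw [(hΦd t).deriv]
        have := hψd t (hin t ht)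
        linarith
    have := hmono ⟨le_refl 0, hb⟩ ⟨hb, le_refl b⟩ hb
    simpa using this
  -- upper bound on ψ away from a
  have hnorm_u : ∀ (t : ℝ) (R : ℝ), 0 < R → R ≤ dist (γ t) a →
      ψ t ≤ (R ^ m * ‖c‖)⁻¹ := by
    intro t R hR hRt
    have h1 : ψ t ≤ ‖u t / c‖ := by
      simp only [hψ_def]
      exact Complex.re_le_norm _
    have h2 : ‖u t / c‖ = (‖γ t - a‖ ^ m * ‖c‖)⁻¹ := by
      simp only [hu_def]
      rw [norm_div, norm_inv, norm_pow, div_eq_mul_inv, ← mul_inv]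
    have h3 : R ≤ ‖γ t - a‖ := by rwa [← dist_eq_norm]
    have h4 : (‖γ t - a‖ ^ m * ‖c‖)⁻¹ ≤ (R ^ m * ‖c‖)⁻¹ := by
      apply inv_anti₀ (by positivity)
      have := pow_le_pow_left₀ hR.le h3 m
      nlinarith
    linarith [h1, h2 ▸ h1, h4]
  -- case analysis on whether the orbit leaves the ball
  set E : Set ℝ := {t : ℝ | 0 ≤ t ∧ r ≤ dist (γ t) a} with hE_def
  by_cases hE : E.Nonempty
  · have hbdd : BddBelow E := ⟨0, fun t ht => ht.1⟩
    have hEclosed : IsClosed E := by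
      have h5 : E = Ici (0:ℝ) ∩ {t | r ≤ dist (γ t) a} := rfl
      rw [h5]
      exact isClosed_Ici.inter (isClosed_le continuous_const (hγ_cont.dist continuous_const))
    set τ := sInf E with hτ_def
    have hτE : τ ∈ E := hEclosed.csInf_mem hE hbdd
    have hτ0 : 0 ≤ τ := hτE.1
    have hin : ∀ t ∈ Ioo (0:ℝ) τ, γ t ∈ Metric.closedBall a r := by
      intro t ht
      rw [Metric.mem_closedBall]
      by_contra hcon
      have h6 : t ∈ E := ⟨ht.1.le, (not_le.mp hcon).le⟩
      linarith [csInf_le hbdd h6, ht.2]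
    have hkey := mono τ hτ0 hin
    have hub := hnorm_u τ r hr hτE.2
    have hlt : (r ^ m * ‖c‖)⁻¹ < (ε ^ m * ‖c‖)⁻¹ := by
      apply inv_strictAnti₀ (by positivity)
      have := pow_lt_pow_left₀ hεr hε.le (show m ≠ 0 by omega)
      nlinarith
    rw [hψ0] at hkey
    linarith
  · have hin : ∀ t ∈ Ioo (0:ℝ) T, γ t ∈ Metric.closedBall a r := by
      intro t ht
      rw [Metric.mem_closedBall]
      by_contra hcon
      exact hE ⟨t, ht.1.le, (not_le.mp hcon).le⟩
    have hkey := mono T hT.le hin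
    have hTeq : ψ T = ψ 0 := by
      have h7 := hper 0
      rw [zero_add] at h7
      simp only [hψ_def, hu_def, h7]
    linarith
end

section
/- Let Ω ⊆ ℂ be open and connected, F holomorphic on Ω with F ≢ 0, and a ∈ Ω an equilibrium of order m ≥ 2. Let K ⊆ Ω be compact and γ : [0,∞) → Ω a solution of ẋ = F(x) with γ(t) ∈ K for all t ≥ 0. If a belongs to the positive limit set of γ, i.e. there exists a sequence t_k → ∞ with γ(t_k) → a, then γ(t) → a as t → ∞; that is, an orbit cannot come arbitrarily close to an equilibrium of order at least 2 infinitely often without tending to it. -/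
open Set Filter Topology

-- factorization lemma
lemma stmt18_factor {F : ℂ → ℂ} {a : ℂ} {m : ℕ} (hF : AnalyticAt ℂ F a)
    (hlow : ∀ k < m, iteratedDeriv k F a = 0) (hord : iteratedDeriv m F a ≠ 0) :
    ∃ g : ℂ → ℂ, ContinuousAt g a ∧ g a ≠ 0 ∧ ∀ᶠ z in 𝓝 a, F z = (z - a) ^ m * g z := by
  obtain ⟨p, hp⟩ := hF
  have hc : ∀ k : ℕ, iteratedDeriv k F a = (Nat.factorial k : ℂ) * p.coeff k := by
    intro k
    obtain ⟨r, hpr⟩ := hp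
    have h1 := hpr.factorial_smul (1 : ℂ) k
    rw [iteratedDeriv_eq_iteratedFDeriv, ← h1, nsmul_eq_mul]
    rfl
  have hpm : p m ≠ 0 := by
    intro h
    exact hord (by rw [hc m, FormalMultilinearSeries.coeff_eq_zero.mpr h, mul_zero])
  have hpk : ∀ k < m, p k = 0 := by
    intro k hk
    have hf : (Nat.factorial k : ℂ) ≠ 0 := by exact_mod_cast Nat.factorial_ne_zero k
    have h0 : (Nat.factorial k : ℂ) * p.coeff k = 0 := by rw [← hc k, hlow k hk]
    exact FormalMultilinearSeries.coeff_eq_zero.mp ((mul_eq_zero.mp h0).resolve_left hf)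
  have hpne : p ≠ 0 := fun h => hpm (by simp [h])
  have horder : p.order = m := by
    have hdef : p.order = sInf {n | p n ≠ 0} := rfl
    rw [hdef]
    refine le_antisymm (Nat.sInf_le hpm) (le_csInf ⟨m, hpm⟩ ?_)
    intro b hb
    by_contra h
    exact hb (hpk b (by omega))
  refine ⟨(Function.swap dslope a)^[m] F, ?_, ?_, ?_⟩
  · exact (hp.has_fpower_series_iterate_dslope_fslope m).continuousAt
  · have := hp.iterate_dslope_fslope_ne_zero hpne
    rwa [horder] at this
  · have := hp.eq_pow_order_mul_iterate_dslope
    rw [horder] at this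
    exact Filter.Eventually.of_forall (by simpa [smul_eq_mul] using this)

-- derivative of the "clock" function G
lemma stmt18_hasDerivAt_G (a c : ℂ) (n : ℕ) (hn : 1 ≤ n) {z : ℂ} (hz : z ≠ a) (hc : c ≠ 0) :
    HasDerivAt (fun w => (-(n : ℂ))⁻¹ * c⁻¹ * ((w - a) ^ n)⁻¹)
      (c⁻¹ * ((z - a) ^ (n + 1))⁻¹) z := by
  have hza : z - a ≠ 0 := sub_ne_zero.mpr hz
  have hnC : (n : ℂ) ≠ 0 := Nat.cast_ne_zero.mpr (by omega)
  have h1 : HasDerivAt (fun w : ℂ => (w - a) ^ n) ((n : ℂ) * (z - a) ^ (n - 1)) z := by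
    have := ((hasDerivAt_id z).sub_const a).pow n
    simp at this
    exact this
  have h2 := h1.inv (pow_ne_zero n hza)
  have h3 := h2.const_mul ((-(n : ℂ))⁻¹ * c⁻¹)
  have hpow : (z - a) ^ (n - 1) * (z - a) ^ (n + 1) = ((z - a) ^ n) ^ 2 := by
    rw [← pow_add, ← pow_mul]
    congr 1
    omega
  have hX : (z - a) ^ (n - 1) ≠ 0 := pow_ne_zero _ hza
  have h4 : -((n : ℂ) * (z - a) ^ (n - 1)) / ((z - a) ^ n) ^ 2 = -(n : ℂ) / (z - a) ^ (n + 1) := by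
    rw [← hpow, neg_div, neg_div, neg_inj, mul_comm ((z - a) ^ (n - 1)) ((z - a) ^ (n + 1))]
    exact mul_div_mul_right _ _ hX
  rw [h4] at h3
  refine h3.congr_deriv ?_
  field_simp

-- key MVT estimate
lemma stmt18_key {φ w : ℝ → ℂ} {α β : ℝ} (hαβ : α ≤ β)
    (hd : ∀ t ∈ Icc α β, HasDerivWithinAt φ (w t) (Icc α β) t)
    (hw : ∀ t ∈ Icc α β, ‖w t - 1‖ ≤ 1 / 2) :
    ‖φ β - φ α - ((β : ℂ) - (α : ℂ))‖ ≤ (β - α) / 2 := by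
  have hcast : ∀ t : ℝ, HasDerivAt (fun s : ℝ => (s : ℂ)) 1 t := by
    intro t
    simpa using (hasDerivAt_id t).ofReal_comp
  have := Convex.norm_image_sub_le_of_norm_hasDerivWithin_le
    (f := fun t : ℝ => φ t - (t : ℂ)) (f' := fun t => w t - 1) (s := Icc α β) (C := 1 / 2)
    (fun t ht => (hd t ht).sub ((hcast t).hasDerivWithinAt)) hw (convex_Icc α β)
    ⟨le_rfl, hαβ⟩ ⟨hαβ, le_rfl⟩
  have hnorm : ‖β - α‖ = β - α := by
    rw [Real.norm_eq_abs, abs_of_nonneg (by linarith)]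
  calc ‖φ β - φ α - ((β : ℂ) - (α : ℂ))‖ = ‖(φ β - (β : ℂ)) - (φ α - (α : ℂ))‖ := by ring_nf
    _ ≤ 1 / 2 * ‖β - α‖ := this
    _ = (β - α) / 2 := by rw [hnorm]; ring

/-- if an equilibrium `a` of order `m ≥ 2` of a holomorphic flow lies in the
positive limit set of a forward solution `γ` staying in a compact `K ⊆ Ω`, then `γ` tends
to `a`. -/
theorem stmt_18 (Ω : Set ℂ) (hΩ : IsOpen Ω) (hconn : IsConnected Ω)
    (F : ℂ → ℂ) (hF : DifferentiableOn ℂ F Ω) (hF0 : ∃ z ∈ Ω, F z ≠ 0)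
    (a : ℂ) (ha : a ∈ Ω) (m : ℕ) (hm : 2 ≤ m)
    (hlow : ∀ k < m, iteratedDeriv k F a = 0) (hord : iteratedDeriv m F a ≠ 0)
    (K : Set ℂ) (hK : IsCompact K) (hKΩ : K ⊆ Ω)
    (γ : ℝ → ℂ) (hγ : IsSolOn F Ω (Ici 0) γ) (hγK : ∀ t ∈ Ici (0 : ℝ), γ t ∈ K)
    (hlimpt : ∃ u : ℕ → ℝ, (∀ k, u k ∈ Ici (0 : ℝ)) ∧ Tendsto u atTop atTop ∧
      Tendsto (fun k => γ (u k)) atTop (nhds a)) :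
    Tendsto γ atTop (nhds a) := by
  have hγc : ContinuousOn γ (Ici 0) := fun t ht => ((hγ t ht).2).continuousWithinAt
  have hFa0 : F a = 0 := by
    have := hlow 0 (by omega)
    rwa [iteratedDeriv_zero] at this
  obtain ⟨u, hu0, huT, huA⟩ := hlimpt
  have han : AnalyticAt ℂ F a := hF.analyticAt (hΩ.mem_nhds ha)
  by_cases hhit : ∃ t₀ ∈ Ici (0 : ℝ), γ t₀ = a
  · -- Case 1 : the orbit hits `a`, then it stays at `a` by uniqueness of solutions.
    obtain ⟨t₀, ht₀, hγt₀⟩ := hhit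
    obtain ⟨L, s, hs, hLip⟩ := (han.contDiffAt (n := 1)).exists_lipschitzOnWith
    obtain ⟨r, hr0, hrs⟩ := Metric.mem_nhds_iff.mp hs
    set r₀ : ℝ := r / 2 with hr₀def
    have hr₀0 : 0 < r₀ := by positivity
    have hLip' : LipschitzOnWith L F (Metric.closedBall a r₀) :=
      hLip.mono (subset_trans (Metric.closedBall_subset_ball (by linarith)) hrs)
    have hall : ∀ t, t₀ ≤ t → γ t = a := by
      by_contra hB
      push_neg at hB
      set B : Set ℝ := {t | t₀ ≤ t ∧ γ t ≠ a} with hBdef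
      have hBne : B.Nonempty := by
        obtain ⟨t, h1, h2⟩ := hB
        exact ⟨t, h1, h2⟩
      have hBbd : BddBelow B := ⟨t₀, fun x hx => hx.1⟩
      set T := sInf B with hT
      have hTt₀ : t₀ ≤ T := le_csInf hBne fun x hx => hx.1
      have hT0 : (0:ℝ) ≤ T := le_trans ht₀ hTt₀
      have hbefore : ∀ t, t₀ ≤ t → t < T → γ t = a := by
        intro t h1 h2
        by_contra h
        exact absurd (csInf_le hBbd ⟨h1, h⟩) (not_le.mpr h2)
      have hγT : γ T = a := by
        rcases eq_or_lt_of_le hTt₀ with h | h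
        · rw [← h]; exact hγt₀
        · have hsub : Ico t₀ T ⊆ Ici 0 := fun t ht => le_trans ht₀ ht.1
          have hcont : ContinuousWithinAt γ (Ico t₀ T) T := (hγc T hT0).mono hsub
          have hne2 : (𝓝[Ico t₀ T] T).NeBot := by
            rw [← mem_closure_iff_nhdsWithin_neBot, closure_Ico (ne_of_lt h)]
            exact ⟨le_of_lt h, le_rfl⟩
          have h1 : Tendsto γ (𝓝[Ico t₀ T] T) (𝓝 (γ T)) := hcont
          have h2 : Tendsto γ (𝓝[Ico t₀ T] T) (𝓝 a) := by
            refine Tendsto.congr' ?_ tendsto_const_nhds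
            filter_upwards [self_mem_nhdsWithin] with t ht
            exact (hbefore t ht.1 ht.2).symm
          exact tendsto_nhds_unique h1 h2
      -- γ stays in the closed ball shortly after T
      have hev : ∀ᶠ t in 𝓝[Ici 0] T, γ t ∈ Metric.closedBall a r₀ := by
        have h1 : Tendsto γ (𝓝[Ici 0] T) (𝓝 a) := by
          have := hγc T hT0
          rwa [ContinuousWithinAt, hγT] at this
        exact h1 (Metric.closedBall_mem_nhds a hr₀0)
      rw [eventually_nhdsWithin_iff] at hev
      obtain ⟨δ, hδ0, hδ⟩ := Metric.eventually_nhds_iff.mp hev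
      set b : ℝ := T + δ / 2 with hb
      have hTb : T < b := by simp [hb]; linarith
      have heq : EqOn γ (fun _ => a) (Icc T b) := by
        refine ODE_solution_unique_of_mem_Icc_right
          (v := fun _ z => F z) (s := fun _ => Metric.closedBall a r₀) (K := L)
          (fun _ _ => hLip') (hγc.mono ?_) (fun t ht => ?_) (fun t ht => ?_)
          continuousOn_const (fun t ht => ?_) (fun t ht => ?_) hγT
        · intro t ht
          exact le_trans hT0 ht.1
        · exact ((hγ t (le_trans hT0 ht.1)).2).mono (fun x hx => le_trans (le_trans hT0 ht.1) hx)
        · refine hδ ?_ (le_trans hT0 ht.1)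
          rw [Real.dist_eq, abs_of_nonneg (by linarith [ht.1])]
          have := ht.2
          simp only [hb] at this ⊢
          linarith
        · simpa [hFa0] using (hasDerivWithinAt_const t (Ici t) a)
        · exact Metric.mem_closedBall_self (le_of_lt hr₀0)
      obtain ⟨x, hxB, hxb⟩ := exists_lt_of_csInf_lt hBne (show sInf B < b from hTb)
      have hTx : T ≤ x := csInf_le hBbd hxB
      exact hxB.2 (heq ⟨hTx, le_of_lt hxb⟩)
    refine Tendsto.congr' ?_ tendsto_const_nhds
    filter_upwards [eventually_ge_atTop t₀] with t ht
    exact (hall t ht).symm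
  · -- Case 2 : the orbit never hits `a`.
    push_neg at hhit
    obtain ⟨g, hgc, hc0, hfg⟩ := stmt18_factor han hlow hord
    set c : ℂ := g a with hcdef
    set n : ℕ := m - 1 with hndef
    have hmn : m = n + 1 := by omega
    have hn1 : 1 ≤ n := by omega
    have hnR : (0:ℝ) < (n : ℝ) := by exact_mod_cast hn1
    have hcnorm : (0:ℝ) < ‖c‖ := norm_pos_iff.mpr hc0
    have hev : ∀ᶠ z in 𝓝 a, F z = (z - a) ^ m * g z ∧ ‖g z - c‖ ≤ ‖c‖ / 2 := by
      have h2 : ∀ᶠ z in 𝓝 a, g z ∈ Metric.closedBall c (‖c‖ / 2) :=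
        hgc (Metric.closedBall_mem_nhds c (by positivity))
      filter_upwards [hfg, h2] with z h1 h2
      refine ⟨h1, ?_⟩
      rwa [Metric.mem_closedBall, dist_eq_norm] at h2
    obtain ⟨ρ, hρ0, hρ⟩ := Metric.eventually_nhds_iff.mp hev
    set R : ℝ := ρ / 2 with hRdef
    have hR0 : 0 < R := by positivity
    have hball : ∀ z : ℂ, dist z a ≤ R →
        F z = (z - a) ^ m * g z ∧ ‖g z - c‖ ≤ ‖c‖ / 2 := by
      intro z hz
      exact hρ (lt_of_le_of_lt hz (by simp [hRdef]; linarith))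
    set G : ℂ → ℂ := fun z => (-(n : ℂ))⁻¹ * c⁻¹ * ((z - a) ^ n)⁻¹ with hGdef
    set φ : ℝ → ℂ := fun t => G (γ t) with hφdef
    have hGnorm : ∀ z : ℂ, ‖G z‖ = (n : ℝ)⁻¹ * ‖c‖⁻¹ * (‖z - a‖ ^ n)⁻¹ := by
      intro z
      simp [hGdef, norm_mul, norm_inv, norm_pow, Complex.norm_natCast]
    have hGb : ∀ ρ'' : ℝ, 0 < ρ'' → ∀ z : ℂ, ρ'' ≤ dist z a →
        ‖G z‖ ≤ (n : ℝ)⁻¹ * ‖c‖⁻¹ * (ρ'' ^ n)⁻¹ := by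
      intro ρ'' hρ'' z hz
      have hz' : ρ'' ≤ ‖z - a‖ := by rwa [← dist_eq_norm z a]
      rw [hGnorm]
      gcongr
    have hd_cont : ContinuousOn (fun t => dist (γ t) a) (Ici 0) :=
      (continuous_id.dist continuous_const).comp_continuousOn hγc
    have hφd : ∀ s : Set ℝ, s ⊆ Ici 0 → ∀ t ∈ s, dist (γ t) a ≤ R →
        HasDerivWithinAt φ (g (γ t) / c) s t := by
      intro s hsub t ht hdist
      have ht0 : (0:ℝ) ≤ t := hsub ht
      have hza : γ t ≠ a := hhit t ht0
      have hG := stmt18_hasDerivAt_G a c n hn1 hza hc0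
      have hdγ := ((hγ t ht0).2).mono hsub
      have hcomp := hG.comp_hasDerivWithinAt t hdγ
      have hFz : F (γ t) = (γ t - a) ^ m * g (γ t) := (hball (γ t) hdist).1
      have hval : c⁻¹ * ((γ t - a) ^ (n + 1))⁻¹ * F (γ t) = g (γ t) / c := by
        rw [hFz, hmn]
        have hp : ((γ t - a) ^ (n + 1)) ≠ 0 := pow_ne_zero _ (sub_ne_zero.mpr hza)
        field_simp
      rw [hval] at hcomp
      exact hcomp
    have hwb : ∀ z : ℂ, dist z a ≤ R → ‖g z / c - 1‖ ≤ 1 / 2 := by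
      intro z hz
      have h1 : g z / c - 1 = (g z - c) / c := by field_simp
      rw [h1, norm_div, div_le_iff₀ hcnorm]
      calc ‖g z - c‖ ≤ ‖c‖ / 2 := (hball z hz).2
        _ = 1 / 2 * ‖c‖ := by ring
    have hkey : ∀ α β : ℝ, 0 ≤ α → α ≤ β → (∀ t ∈ Icc α β, dist (γ t) a ≤ R) →
        (β - α) / 2 ≤ (φ β).re - (φ α).re ∧ |(φ β).im - (φ α).im| ≤ (β - α) / 2 := by
      intro α β hα hαβ hin
      have hIcc : Icc α β ⊆ Ici 0 := fun t ht => le_trans hα ht.1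
      have hest := stmt18_key hαβ (fun t ht => hφd _ hIcc t ht (hin t ht))
        (fun t ht => hwb (γ t) (hin t ht))
      set X : ℂ := φ β - φ α - ((β : ℂ) - (α : ℂ)) with hX
      have hre : |X.re| ≤ (β - α) / 2 := by
        refine le_trans ?_ hest
        exact Complex.abs_re_le_norm X
      have him : |X.im| ≤ (β - α) / 2 := by
        refine le_trans ?_ hest
        exact Complex.abs_im_le_norm X
      have hXre : X.re = (φ β).re - (φ α).re - (β - α) := by simp [hX]
      have hXim : X.im = (φ β).im - (φ α).im := by simp [hX]
      constructor
      · rw [hXre] at hre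
        have h := abs_le.mp hre
        linarith [h.1, h.2]
      · rwa [hXim] at him
    -- main claim: the orbit is eventually trapped in any small closed ball
    have hCL : ∀ r : ℝ, 0 < r → r ≤ R → ∃ T : ℝ, 0 ≤ T ∧ ∀ t, T ≤ t → dist (γ t) a ≤ r := by
      intro r hr0 hrR
      by_contra hcon
      push_neg at hcon
      set M₀ : ℝ := (n : ℝ)⁻¹ * ‖c‖⁻¹ * ((r / 2) ^ n)⁻¹ with hM₀
      have hM₀0 : 0 ≤ M₀ := by positivity
      set C : ℝ := max M₀ ‖φ 0‖ with hC
      have hC0 : 0 ≤ C := le_trans hM₀0 (le_max_left _ _)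
      have h1 : ∀ᶠ k in atTop, dist (γ (u k)) a < r / 2 := by
        have := huA (Metric.ball_mem_nhds a (by positivity : (0:ℝ) < r / 2))
        filter_upwards [this] with k hk
        exact Metric.mem_ball.mp hk
      have h2 : Tendsto (fun k => ‖φ (u k)‖) atTop atTop := by
        have ha1 : Tendsto (fun k => ‖γ (u k) - a‖) atTop (𝓝[>] 0) := by
          rw [tendsto_nhdsWithin_iff]
          constructor
          · exact tendsto_iff_norm_sub_tendsto_zero.mp huA
          · exact Eventually.of_forall fun k =>
              norm_pos_iff.mpr (sub_ne_zero.mpr (hhit (u k) (hu0 k)))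
        have ha2 : Tendsto (fun k => ‖γ (u k) - a‖⁻¹) atTop atTop :=
          tendsto_inv_nhdsGT_zero.comp ha1
        have ha3 : Tendsto (fun k => ‖γ (u k) - a‖⁻¹ ^ n) atTop atTop :=
          (tendsto_pow_atTop (by omega : n ≠ 0)).comp ha2
        have ha4 : Tendsto (fun k => (n : ℝ)⁻¹ * ‖c‖⁻¹ * ‖γ (u k) - a‖⁻¹ ^ n) atTop atTop := by
          refine Tendsto.const_mul_atTop ?_ ha3
          positivity
        refine ha4.congr fun k => ?_
        simp only [hφdef]
        rw [hGnorm, inv_pow]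
      have h3 : ∀ᶠ k in atTop, 2 * M₀ + 3 * C + 1 < ‖φ (u k)‖ :=
        h2.eventually_gt_atTop _
      obtain ⟨k, hk1, hk3⟩ := (h1.and h3).exists
      set t' : ℝ := u k with ht'def
      have ht'0 : (0:ℝ) ≤ t' := hu0 k
      -- the first exit time after t'
      obtain ⟨s₀, hs₀1, hs₀2⟩ := hcon t' ht'0
      set S : Set ℝ := {s | t' ≤ s ∧ r ≤ dist (γ s) a} with hS
      have hSne : S.Nonempty := ⟨s₀, hs₀1, le_of_lt hs₀2⟩
      have hSbd : BddBelow S := ⟨t', fun x hx => hx.1⟩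
      set β := sInf S with hβdef
      have hβt' : t' ≤ β := le_csInf hSne fun x hx => hx.1
      have hβ0 : (0:ℝ) ≤ β := le_trans ht'0 hβt'
      have hβlt : ∀ t, t' ≤ t → t < β → dist (γ t) a < r := by
        intro t h1t h2t
        by_contra h
        exact absurd (csInf_le hSbd ⟨h1t, le_of_not_gt h⟩) (not_le.mpr h2t)
      have hβge : r ≤ dist (γ β) a := by
        by_contra h
        push_neg at h
        have hcont : ContinuousWithinAt (fun t => dist (γ t) a) (Ici 0) β := hd_cont β hβ0
        have hev2 : ∀ᶠ t in 𝓝[Ici 0] β, dist (γ t) a < r := hcont (Iio_mem_nhds h)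
        rw [eventually_nhdsWithin_iff] at hev2
        obtain ⟨δ, hδ0, hδ⟩ := Metric.eventually_nhds_iff.mp hev2
        obtain ⟨s₁, hs₁S, hs₁lt⟩ := exists_lt_of_csInf_lt hSne (by linarith : sInf S < β + δ)
        have hs₁β : β ≤ s₁ := csInf_le hSbd hs₁S
        have hlt : dist (γ s₁) a < r := by
          refine hδ ?_ (le_trans hβ0 hs₁β)
          rw [Real.dist_eq, abs_of_nonneg (by linarith)]
          linarith
        exact absurd hs₁S.2 (not_le.mpr hlt)
      have ht'β : t' < β := by
        rcases eq_or_lt_of_le hβt' with h | h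
        · exfalso
          rw [← h] at hβge
          linarith [hk1]
        · exact h
      have hβle : dist (γ β) a ≤ r := by
        have hsub : Ico t' β ⊆ Ici 0 := fun t ht => le_trans ht'0 ht.1
        have hcont : ContinuousWithinAt (fun t => dist (γ t) a) (Ico t' β) β :=
          (hd_cont β hβ0).mono hsub
        have hne2 : (𝓝[Ico t' β] β).NeBot := by
          rw [← mem_closure_iff_nhdsWithin_neBot, closure_Ico (ne_of_lt ht'β)]
          exact ⟨le_of_lt ht'β, le_rfl⟩
        refine le_of_tendsto hcont ?_
        filter_upwards [self_mem_nhdsWithin] with t ht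
        exact le_of_lt (hβlt t ht.1 ht.2)
      have hIn1 : ∀ t ∈ Icc t' β, dist (γ t) a ≤ R := by
        intro t ht
        rcases eq_or_lt_of_le ht.2 with h | h
        · rw [h]; exact le_trans hβle hrR
        · exact le_trans (le_of_lt (hβlt t ht.1 h)) hrR
      -- the entry time before t'
      set A : Set ℝ := {s | 0 ≤ s ∧ s ≤ t' ∧ r ≤ dist (γ s) a} with hA
      obtain ⟨α, hα0, hαt', hφα, hIn2⟩ :
          ∃ α, 0 ≤ α ∧ α ≤ t' ∧ ‖φ α‖ ≤ C ∧ ∀ t ∈ Icc α t', dist (γ t) a ≤ R := by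
        by_cases hAne : A.Nonempty
        · set α := sSup A with hαdef
          have hAbd : BddAbove A := ⟨t', fun x hx => hx.2.1⟩
          have hαt' : α ≤ t' := csSup_le hAne fun x hx => hx.2.1
          obtain ⟨x₀, hx₀⟩ := id hAne
          have hα0 : (0:ℝ) ≤ α := le_trans hx₀.1 (le_csSup hAbd hx₀)
          have hαlt : ∀ t, α < t → t ≤ t' → dist (γ t) a < r := by
            intro t h1t h2t
            by_contra h
            exact absurd (le_csSup hAbd ⟨le_trans hα0 (le_of_lt h1t), h2t, le_of_not_gt h⟩)
              (not_le.mpr h1t)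
          have hαge : r ≤ dist (γ α) a := by
            by_contra h
            push_neg at h
            have hcont : ContinuousWithinAt (fun t => dist (γ t) a) (Ici 0) α := hd_cont α hα0
            have hev2 : ∀ᶠ t in 𝓝[Ici 0] α, dist (γ t) a < r := hcont (Iio_mem_nhds h)
            rw [eventually_nhdsWithin_iff] at hev2
            obtain ⟨δ, hδ0, hδ⟩ := Metric.eventually_nhds_iff.mp hev2
            obtain ⟨s₁, hs₁A, hs₁gt⟩ := exists_lt_of_lt_csSup hAne (by linarith : α - δ < sSup A)
            have hs₁α : s₁ ≤ α := le_csSup hAbd hs₁A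
            have hlt : dist (γ s₁) a < r := by
              refine hδ ?_ hs₁A.1
              rw [Real.dist_eq, abs_of_nonpos (by linarith)]
              linarith
            exact absurd hs₁A.2.2 (not_le.mpr hlt)
          have hαlt' : α < t' := by
            rcases eq_or_lt_of_le hαt' with h | h
            · exfalso
              rw [h] at hαge
              linarith [hk1]
            · exact h
          have hαle : dist (γ α) a ≤ r := by
            have hsub : Ioc α t' ⊆ Ici 0 := fun t ht => le_trans hα0 (le_of_lt ht.1)
            have hcont : ContinuousWithinAt (fun t => dist (γ t) a) (Ioc α t') α :=
              (hd_cont α hα0).mono hsub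
            have hne2 : (𝓝[Ioc α t'] α).NeBot := by
              rw [← mem_closure_iff_nhdsWithin_neBot, closure_Ioc (ne_of_lt hαlt')]
              exact ⟨le_rfl, le_of_lt hαlt'⟩
            refine le_of_tendsto hcont ?_
            filter_upwards [self_mem_nhdsWithin] with t ht
            exact le_of_lt (hαlt t ht.1 ht.2)
          refine ⟨α, hα0, hαt', ?_, ?_⟩
          · have hb := hGb (r / 2) (by linarith) (γ α) (by linarith)
            rw [← hM₀] at hb
            refine le_trans ?_ (le_max_left M₀ ‖φ 0‖)
            simpa only [hφdef] using hb
          · intro t ht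
            rcases eq_or_lt_of_le ht.1 with h | h
            · rw [← h]; exact le_trans hαle hrR
            · exact le_trans (le_of_lt (hαlt t h ht.2)) hrR
        · refine ⟨0, le_rfl, ht'0, le_max_right _ _, ?_⟩
          intro t ht
          by_contra h
          push_neg at h
          exact hAne ⟨t, ht.1, ht.2, le_trans hrR (le_of_lt h)⟩
      -- assembling the contradiction
      have hk2 := hkey α t' hα0 hαt' hIn2
      have hk4 := hkey t' β ht'0 (le_of_lt ht'β) hIn1
      have hφβ : ‖φ β‖ ≤ M₀ := by
        have hb := hGb (r / 2) (by linarith) (γ β) (by linarith)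
        rw [← hM₀] at hb
        simpa only [hφdef] using hb
      have hreβ : (φ β).re ≤ M₀ := by
        refine le_trans (le_trans (le_abs_self _) ?_) hφβ
        exact Complex.abs_re_le_norm _
      have hreα : |(φ α).re| ≤ C := by
        refine le_trans ?_ hφα
        exact Complex.abs_re_le_norm _
      have himα : |(φ α).im| ≤ C := by
        refine le_trans ?_ hφα
        exact Complex.abs_im_le_norm _
      have hreα' := abs_le.mp hreα
      have himα' := abs_le.mp himα
      have hre1 : (φ t').re ≤ M₀ := by linarith [hk4.1]
      have hre2 : -C ≤ (φ t').re := by linarith [hk2.1]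
      have hlen : t' - α ≤ 2 * (M₀ + C) := by linarith [hk2.1]
      have him2 := abs_le.mp hk2.2
      have hfin := Complex.norm_le_abs_re_add_abs_im (φ t')
      have hre3 : |(φ t').re| ≤ M₀ + C := by
        rw [abs_le]
        constructor <;> linarith
      have him3 : |(φ t').im| ≤ C + (M₀ + C) := by
        rw [abs_le]
        constructor <;> linarith
      linarith [hk3]
    -- conclusion
    rw [Metric.tendsto_atTop]
    intro ε hε
    obtain ⟨T, hT0, hT⟩ := hCL (min R (ε / 2)) (lt_min hR0 (by linarith)) (min_le_left _ _)
    refine ⟨T, fun t ht => ?_⟩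
    have := hT t ht
    have h2 : min R (ε / 2) ≤ ε / 2 := min_le_right _ _
    linarith
end

section
/- Let Ω ⊆ ℂ be open and connected, F holomorphic on Ω with F ≢ 0, and a ∈ Ω an equilibrium with Re F′(a) < 0. If γ : [0,∞) → Ω is a solution of ẋ = F(x) such that a belongs to the positive limit set of γ, i.e. there exists a sequence t_k → ∞ with γ(t_k) → a, then γ(t) → a as t → ∞; in particular the positive limit set of γ equals {a}. (Analogously, if Re F′(a) > 0 and a is in the negative limit set of a solution γ : (−∞,0] → Ω, then γ(t) → a as t → −∞.) -/
open Set Filter Topology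

/-- Forward invariance of sublevel sets of a Lyapunov-type function. -/
lemma aux_inv {φ D : ℝ → ℝ} {R b : ℝ}
    (hφ : ∀ t ∈ Ici (0:ℝ), HasDerivWithinAt φ (D t) (Ici 0) t)
    (hd : ∀ t ∈ Ici (0:ℝ), φ t ≤ R → D t ≤ 0)
    (hbR : b < R) {t₀ : ℝ} (ht₀ : 0 ≤ t₀) (h0 : φ t₀ ≤ b) :
    ∀ t, t₀ ≤ t → φ t ≤ b := by
  have hcont : ContinuousOn φ (Ici 0) := fun t ht => (hφ t ht).continuousWithinAt
  intro t₁ ht₁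
  by_contra hcon
  push_neg at hcon
  have ht01 : t₀ < t₁ := lt_of_le_of_ne ht₁ (by rintro rfl; linarith)
  set S : Set ℝ := Icc t₀ t₁ ∩ φ ⁻¹' (Iic b) with hSdef
  have hIccsub : Icc t₀ t₁ ⊆ Ici 0 := fun t ht => le_trans ht₀ ht.1
  have hSclosed : IsClosed S :=
    (hcont.mono hIccsub).preimage_isClosed_of_isClosed isClosed_Icc isClosed_Iic
  have hSne : t₀ ∈ S := ⟨⟨le_rfl, le_of_lt ht01⟩, h0⟩
  have hSbdd : BddAbove S := ⟨t₁, fun t ht => ht.1.2⟩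
  set s := sSup S with hsdef
  have hsmem : s ∈ S := hSclosed.csSup_mem ⟨t₀, hSne⟩ hSbdd
  have hts : t₀ ≤ s := le_csSup hSbdd hSne
  have hs0 : (0:ℝ) ≤ s := le_trans ht₀ hts
  have hst1 : s ≤ t₁ := hsmem.1.2
  have hφs : φ s ≤ b := hsmem.2
  have hst1' : s < t₁ := lt_of_le_of_ne hst1 (fun h => by rw [h] at hφs; linarith)
  have hafter : ∀ t, s < t → t ≤ t₁ → b < φ t := by
    intro t h1 h2
    by_contra hle
    push_neg at hle
    exact absurd (le_csSup hSbdd ⟨⟨le_trans hts h1.le, h2⟩, hle⟩) (not_le.mpr h1)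
  have hcs : ContinuousWithinAt φ (Ici s) s :=
    (hcont s hs0).mono (Ici_subset_Ici.mpr hs0)
  have hev : φ ⁻¹' (Iio R) ∈ 𝓝[≥] s := hcs (Iio_mem_nhds (lt_of_le_of_lt hφs hbR))
  rw [mem_nhdsGE_iff_exists_Ico_subset] at hev
  obtain ⟨w, hw, hsub⟩ := hev
  have hsw : s < w := hw
  set t₂ := min t₁ ((s + w) / 2) with ht₂def
  have hst₂ : s < t₂ := lt_min hst1' (by linarith)
  have ht₂1 : t₂ ≤ t₁ := min_le_left _ _
  have ht₂w : t₂ < w := lt_of_le_of_lt (min_le_right _ _) (by linarith)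
  have hR : ∀ t ∈ Icc s t₂, φ t < R := fun t ht =>
    hsub ⟨ht.1, lt_of_le_of_lt ht.2 ht₂w⟩
  have hanti : AntitoneOn φ (Icc s t₂) := by
    apply antitoneOn_of_deriv_nonpos (convex_Icc s t₂)
    · exact hcont.mono (fun t ht => le_trans hs0 ht.1)
    · rw [interior_Icc]
      intro t ht
      have h0t : (0:ℝ) < t := lt_of_le_of_lt hs0 ht.1
      exact ((hφ t h0t.le).hasDerivAt (Ici_mem_nhds h0t)).differentiableAt.differentiableWithinAt
    · rw [interior_Icc]
      intro t ht
      have h0t : (0:ℝ) < t := lt_of_le_of_lt hs0 ht.1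
      rw [HasDerivAt.deriv ((hφ t h0t.le).hasDerivAt (Ici_mem_nhds h0t))]
      exact hd t h0t.le (hR t ⟨ht.1.le, ht.2.le⟩).le
  have hmono := hanti ⟨le_rfl, hst₂.le⟩ ⟨hst₂.le, le_rfl⟩ hst₂.le
  have := hafter t₂ hst₂ ht₂1
  linarith

/-- Main forward lemma: convergence to a sink once it is a positive limit point. -/
lemma aux_fwd {Ω : Set ℂ} (hΩ : IsOpen Ω) {F : ℂ → ℂ} (hF : DifferentiableOn ℂ F Ω)
    {a : ℂ} (ha : a ∈ Ω) (hFa : F a = 0) (hc : (deriv F a).re < 0)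
    {γ : ℝ → ℂ} (hγ : IsSolOn F Ω (Ici 0) γ)
    {u : ℕ → ℝ} (hu0 : ∀ k, u k ∈ Ici (0:ℝ)) (hutop : Tendsto u atTop atTop)
    (huconv : Tendsto (fun k => γ (u k)) atTop (nhds a)) :
    Tendsto γ atTop (nhds a) := by
  set c := (deriv F a).re with hcdef
  set d := deriv F a with hddef
  have hdiff : DifferentiableAt ℂ F a := hF.differentiableAt (hΩ.mem_nhds ha)
  have hda : HasDerivAt F d a := hdiff.hasDerivAt
  have hlo := hasDerivAt_iff_isLittleO.mp hda
  have hbound : ∀ᶠ z in 𝓝 a, ‖F z - F a - (z - a) • d‖ ≤ (-c/2) * ‖z - a‖ :=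
    (Asymptotics.isLittleO_iff.mp hlo) (show (0:ℝ) < -c/2 by linarith)
  have hev := hbound.and (hΩ.eventually_mem ha)
  rw [Metric.eventually_nhds_iff] at hev
  obtain ⟨ε₀, hε₀, hball⟩ := hev
  set r := ε₀ / 2 with hrdef
  have hr0 : 0 < r := by positivity
  -- key pointwise estimate
  have key : ∀ z, ‖z - a‖ ≤ r → ((starRingEnd ℂ) (z - a) * F z).re ≤ 0 := by
    intro z hz
    have hdz : dist z a < ε₀ := by rw [dist_eq_norm]; rw [hrdef] at hz; linarith
    obtain ⟨h1, _⟩ := hball hdz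
    rw [hFa, sub_zero, smul_eq_mul] at h1
    have hsplit : (starRingEnd ℂ) (z - a) * F z
        = (starRingEnd ℂ) (z - a) * ((z - a) * d)
          + (starRingEnd ℂ) (z - a) * (F z - (z - a) * d) := by ring
    rw [hsplit, Complex.add_re]
    have e1 : ((starRingEnd ℂ) (z - a) * ((z - a) * d)).re = ‖z - a‖ ^ 2 * c := by
      rw [← mul_assoc, ← Complex.normSq_eq_conj_mul_self, Complex.re_ofReal_mul,
        ← Complex.sq_norm]
    have e2 : ((starRingEnd ℂ) (z - a) * (F z - (z - a) * d)).re
        ≤ ‖z - a‖ * ((-c/2) * ‖z - a‖) := by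
      calc ((starRingEnd ℂ) (z - a) * (F z - (z - a) * d)).re
          ≤ ‖(starRingEnd ℂ) (z - a) * (F z - (z - a) * d)‖ := by
            exact Complex.re_le_norm _
        _ = ‖z - a‖ * ‖F z - (z - a) * d‖ := by
            rw [norm_mul, RCLike.norm_conj]
        _ ≤ ‖z - a‖ * ((-c/2) * ‖z - a‖) :=
            mul_le_mul_of_nonneg_left h1 (norm_nonneg _)
    nlinarith [norm_nonneg (z - a)]
  -- Lyapunov function
  set φ : ℝ → ℝ := fun t => (γ t - a).re * (γ t - a).re + (γ t - a).im * (γ t - a).im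
    with hφdef
  have hφeq : ∀ t, φ t = ‖γ t - a‖ ^ 2 := by
    intro t
    show (γ t - a).re * (γ t - a).re + (γ t - a).im * (γ t - a).im = _
    rw [← Complex.normSq_apply, Complex.normSq_eq_norm_sq]
  set D : ℝ → ℝ := fun t =>
    ((F (γ t)).re * (γ t - a).re + (γ t - a).re * (F (γ t)).re) +
    ((F (γ t)).im * (γ t - a).im + (γ t - a).im * (F (γ t)).im) with hDdef
  have hφderiv : ∀ t ∈ Ici (0:ℝ), HasDerivWithinAt φ (D t) (Ici 0) t := by
    intro t ht
    have h1 : HasDerivWithinAt (fun t => γ t - a) (F (γ t)) (Ici 0) t :=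
      (hγ t ht).2.sub_const a
    have hre : HasDerivWithinAt (fun t => (γ t - a).re) ((F (γ t)).re) (Ici 0) t :=
      Complex.reCLM.hasFDerivAt.comp_hasDerivWithinAt t h1
    have him : HasDerivWithinAt (fun t => (γ t - a).im) ((F (γ t)).im) (Ici 0) t :=
      Complex.imCLM.hasFDerivAt.comp_hasDerivWithinAt t h1
    exact (hre.mul hre).add (him.mul him)
  have hD : ∀ t ∈ Ici (0:ℝ), φ t ≤ r ^ 2 → D t ≤ 0 := by
    intro t ht hle
    have hnn : (0:ℝ) ≤ ‖γ t - a‖ := norm_nonneg _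
    have hnorm : ‖γ t - a‖ ≤ r := by
      rw [hφeq] at hle; nlinarith
    have hk := key (γ t) hnorm
    have hDeq : D t = 2 * ((starRingEnd ℂ) (γ t - a) * F (γ t)).re := by
      rw [hDdef]
      simp only [Complex.mul_re, Complex.conj_re, Complex.conj_im]
      ring
    rw [hDeq]; linarith
  rw [Metric.tendsto_atTop]
  intro ε hε
  set ε₁ := min (ε/2) (r/2) with hε₁def
  have hε₁ : 0 < ε₁ := lt_min (by linarith) (by linarith)
  have hε₁r : ε₁ < r := lt_of_le_of_lt (min_le_right _ _) (by linarith)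
  have hbR : ε₁ ^ 2 < r ^ 2 := pow_lt_pow_left₀ hε₁r hε₁.le (by norm_num)
  obtain ⟨N, hN⟩ := (Metric.tendsto_atTop.mp huconv) ε₁ hε₁
  have hφN : φ (u N) ≤ ε₁ ^ 2 := by
    have h := hN N le_rfl
    rw [dist_eq_norm] at h
    rw [hφeq]
    exact pow_le_pow_left₀ (norm_nonneg _) h.le 2
  have hinv := aux_inv hφderiv hD hbR (hu0 N) hφN
  refine ⟨u N, fun t ht => ?_⟩
  have hφt := hinv t ht
  rw [hφeq] at hφt
  have hnt : ‖γ t - a‖ ≤ ε₁ := by nlinarith [norm_nonneg (γ t - a)]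
  rw [dist_eq_norm]
  have : ε₁ ≤ ε / 2 := min_le_left _ _
  linarith

/-- for a holomorphic flow, if an equilibrium `a` with `Re F'(a) < 0` lies in
the positive limit set of a forward solution `γ`, then `γ(t) → a` as `t → ∞` and the
positive limit set of `γ` is exactly `{a}`; analogously, if `Re F'(a) > 0` and `a` lies in
the negative limit set of a backward solution, then `γ(t) → a` as `t → −∞` and the negative
limit set is `{a}`. -/
theorem stmt_19 (Ω : Set ℂ) (hΩ : IsOpen Ω) (hconn : IsConnected Ω)
    (F : ℂ → ℂ) (hF : DifferentiableOn ℂ F Ω) (hF0 : ∃ z ∈ Ω, F z ≠ 0) :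
    (∀ a ∈ Ω, F a = 0 → (deriv F a).re < 0 →
      ∀ γ : ℝ → ℂ, IsSolOn F Ω (Ici 0) γ →
        (∃ u : ℕ → ℝ, (∀ k, u k ∈ Ici (0 : ℝ)) ∧ Tendsto u atTop atTop ∧
          Tendsto (fun k => γ (u k)) atTop (nhds a)) →
        Tendsto γ atTop (nhds a) ∧
        { v : ℂ | ∃ u : ℕ → ℝ, (∀ k, u k ∈ Ici (0 : ℝ)) ∧ Tendsto u atTop atTop ∧
            Tendsto (fun k => γ (u k)) atTop (nhds v) } = {a}) ∧
    (∀ a ∈ Ω, F a = 0 → 0 < (deriv F a).re →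
      ∀ γ : ℝ → ℂ, IsSolOn F Ω (Iic 0) γ →
        (∃ u : ℕ → ℝ, (∀ k, u k ∈ Iic (0 : ℝ)) ∧ Tendsto u atTop atBot ∧
          Tendsto (fun k => γ (u k)) atTop (nhds a)) →
        Tendsto γ atBot (nhds a) ∧
        { v : ℂ | ∃ u : ℕ → ℝ, (∀ k, u k ∈ Iic (0 : ℝ)) ∧ Tendsto u atTop atBot ∧
            Tendsto (fun k => γ (u k)) atTop (nhds v) } = {a}) := by
  constructor
  · intro a ha hFa hc γ hγ ⟨u, hu0, hutop, huconv⟩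
    have htend : Tendsto γ atTop (nhds a) := aux_fwd hΩ hF ha hFa hc hγ hu0 hutop huconv
    refine ⟨htend, ?_⟩
    ext v
    simp only [mem_setOf_eq, mem_singleton_iff]
    constructor
    · rintro ⟨w, hw0, hwtop, hwconv⟩
      exact tendsto_nhds_unique hwconv (htend.comp hwtop)
    · rintro rfl
      exact ⟨u, hu0, hutop, huconv⟩
  · intro a ha hFa hc γ hγ ⟨u, hu0, hutop, huconv⟩
    set G : ℂ → ℂ := fun z => -F z with hGdef
    set δ : ℝ → ℂ := fun t => γ (-t) with hδdef
    have hGdiff : DifferentiableOn ℂ G Ω := hF.neg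
    have hGa : G a = 0 := by simp [hGdef, hFa]
    have hGc : (deriv G a).re < 0 := by
      have : deriv G a = -deriv F a := deriv.neg
      rw [this, Complex.neg_re]
      linarith
    have hδsol : IsSolOn G Ω (Ici 0) δ := by
      intro t ht
      have hnt : -t ∈ Iic (0:ℝ) := by simpa using ht
      obtain ⟨hmem, hder⟩ := hγ (-t) hnt
      refine ⟨hmem, ?_⟩
      have hneg : HasDerivWithinAt (fun s : ℝ => -s) (-1 : ℝ) (Ici 0) t :=
        (hasDerivWithinAt_id t (Ici 0)).neg
      have hmaps : MapsTo (fun s : ℝ => -s) (Ici (0:ℝ)) (Iic (0:ℝ)) := by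
        intro s hs; simpa using hs
      have := HasDerivWithinAt.scomp t hder hneg hmaps
      simpa [hδdef, hGdef, Function.comp_def] using this
    have hδu0 : ∀ k, -u k ∈ Ici (0:ℝ) := fun k => by simpa using hu0 k
    have hδutop : Tendsto (fun k => -u k) atTop atTop := tendsto_neg_atBot_atTop.comp hutop
    have hδuconv : Tendsto (fun k => δ (-u k)) atTop (nhds a) := by
      simpa [hδdef] using huconv
    have hδtend : Tendsto δ atTop (nhds a) :=
      aux_fwd hΩ hGdiff ha hGa hGc hδsol hδu0 hδutop hδuconv
    have htend : Tendsto γ atBot (nhds a) := by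
      have := hδtend.comp tendsto_neg_atBot_atTop
      simpa [hδdef, Function.comp_def] using this
    refine ⟨htend, ?_⟩
    ext v
    simp only [mem_setOf_eq, mem_singleton_iff]
    constructor
    · rintro ⟨w, hw0, hwbot, hwconv⟩
      exact tendsto_nhds_unique hwconv (htend.comp hwbot)
    · rintro rfl
      exact ⟨u, hu0, hutop, huconv⟩
end
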